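/- arXiv:1205.6510 — 7 statements merged into one kernel-verified Lean document; each statement's English description precedes it below -/
import Mathlib

section
/- If a finite simple graph G is symmetric — i.e., its vertex set can be partitioned into three sets (S, A, B) such that S is an independent set, there is no edge between A and B, and there exists an isomorphism between the induced subgraphs on S ∪ A and S ∪ B which fixes every vertex of S — then G is positive: t(G, W) ≥ 0 for every kernel W. -/
open MeasureTheory

noncomputable section

/-- The unit interval `[0,1]` as a measure space. -/
abbrev UI : Type := Set.Icc (0:ℝ) 1

/-- A kernel is a symmetric bounded measurable function `[0,1]² → ℝ`. -/
def IsKernel (W : UI → UI → ℝ) : Prop :=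
  Measurable (Function.uncurry W) ∧ (∀ x y, W x y = W y x) ∧ ∃ C : ℝ, ∀ x y, |W x y| ≤ C

open scoped Classical in
/-- The homomorphism density `t(G,W) = ∫_{[0,1]^V} ∏_{(a,b)∈E} W(p(a),p(b)) dp`. -/
noncomputable def homDensity {V : Type} [Fintype V] (G : SimpleGraph V) (W : UI → UI → ℝ) : ℝ :=
  ∫ p : V → UI, ∏ e ∈ G.edgeFinset, W (p (Quot.out e).1) (p (Quot.out e).2)

/-- A graph is positive if `t(G,W) ≥ 0` for every kernel `W`. -/
def Positive {V : Type} [Fintype V] (G : SimpleGraph V) : Prop :=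
  ∀ W : UI → UI → ℝ, IsKernel W → 0 ≤ homDensity G W

/-- A graph is symmetric if its vertex set can be partitioned into `(S, A, B)` with `S`
independent, no edges between `A` and `B`, and an isomorphism between the induced subgraphs
on `S ∪ A` and `S ∪ B` fixing every vertex of `S`. -/
def IsSymmetricGraph {V : Type} [Fintype V] (G : SimpleGraph V) : Prop :=
  ∃ S A B : Set V,
    S ∪ A ∪ B = Set.univ ∧
    Disjoint S A ∧ Disjoint S B ∧ Disjoint A B ∧
    (∀ u ∈ S, ∀ v ∈ S, ¬ G.Adj u v) ∧
    (∀ a ∈ A, ∀ b ∈ B, ¬ G.Adj a b) ∧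
    ∃ φ : (G.induce (S ∪ A)) ≃g (G.induce (S ∪ B)),
      ∀ (v : V) (hv : v ∈ S), ((φ ⟨v, Set.mem_union_left A hv⟩ : ↥(S ∪ B)) : V) = v

lemma kappa_mk {W : UI → UI → ℝ} (hWs : ∀ x y, W x y = W y x) {V : Type} (p : V → UI) (a b : V) :
    W (p (Quot.out (s(a, b) : Sym2 V)).1) (p (Quot.out (s(a, b) : Sym2 V)).2) = W (p a) (p b) := by
  have h : (s((Quot.out (s(a, b) : Sym2 V)).1, (Quot.out (s(a, b) : Sym2 V)).2) : Sym2 V)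
      = s(a, b) := by
    exact Quot.out_eq (s(a, b) : Sym2 V)
  rcases Sym2.eq_iff.mp h with ⟨h1, h2⟩ | ⟨h1, h2⟩ <;> rw [h1, h2]
  exact hWs _ _



lemma key {ι : Type} [Fintype ι] (S A B : Set ι)
    (hcover : S ∪ A ∪ B = Set.univ)
    (hSA : Disjoint S A) (hSB : Disjoint S B) (hAB : Disjoint A B)
    (e : ι → ι) (heS : ∀ v ∈ S, e v = v) (heA : ∀ v ∈ A, e v ∈ B) (heB : ∀ v ∈ B, e v ∈ A)
    (hee : ∀ v, e (e v) = v)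
    (f : (ι → UI) → ℝ) (hfm : Measurable f) (C : ℝ) (hfb : ∀ p, |f p| ≤ C)
    (hdep : ∀ p q : ι → UI, (∀ v ∈ S ∪ A, p v = q v) → f p = f q) :
    0 ≤ ∫ p : ι → UI, f p * f (fun v => p (e v)) := by
  classical
  have u0 : UI := ⟨0, by norm_num⟩
  have hmem : ∀ v : ι, v ∈ S ∨ v ∈ A ∨ v ∈ B := by
    intro v
    have : v ∈ S ∪ A ∪ B := hcover ▸ Set.mem_univ v
    rcases this with (h | h) | h
    exacts [Or.inl h, Or.inr (Or.inl h), Or.inr (Or.inr h)]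
  set Ψ1 := MeasurableEquiv.piEquivPiSubtypeProd (fun _ : ι => UI) (· ∈ S) with hΨ1def
  have hΨ1 : MeasurePreserving Ψ1 := volume_preserving_piEquivPiSubtypeProd _ _
  set g : (ι → UI) → ℝ := fun p => f p * f (fun v => p (e v)) with hgdef
  have hgm : Measurable g := by
    apply hfm.mul
    exact hfm.comp (measurable_pi_lambda _ fun v => measurable_pi_apply (e v))
  have hC0 : 0 ≤ C := le_trans (abs_nonneg _) (hfb fun _ => u0)
  have hgb : ∀ p, |g p| ≤ C * C := by
    intro p
    rw [abs_mul]
    exact mul_le_mul (hfb _) (hfb _) (abs_nonneg _) hC0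
  have h1 : ∫ p : ι → UI, g p = ∫ z, g (Ψ1.symm z) :=
    ((hΨ1.symm Ψ1).integral_comp Ψ1.symm.measurableEmbedding g).symm
  rw [show (∫ p : ι → UI, f p * f (fun v => p (e v))) = ∫ p, g p from rfl, h1]
  have hint : Integrable (fun z => g (Ψ1.symm z)) := by
    refine Integrable.mono' (integrable_const (C * C))
      (hgm.comp Ψ1.symm.measurable).aestronglyMeasurable (ae_of_all _ fun z => ?_)
    exact hgb _
  rw [Measure.volume_eq_prod] at hint ⊢
  rw [integral_prod _ hint]
  apply integral_nonneg
  intro x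
  show (0:ℝ) ≤ ∫ y, g (Ψ1.symm (x, y))
  set Ψ2 := MeasurableEquiv.piEquivPiSubtypeProd (fun _ : {v : ι // ¬ v ∈ S} => UI)
      (fun w => (w : ι) ∈ A) with hΨ2def
  have hΨ2 : MeasurePreserving Ψ2 := volume_preserving_piEquivPiSubtypeProd _ _
  have h2 : ∫ y, g (Ψ1.symm (x, y)) = ∫ z, g (Ψ1.symm (x, Ψ2.symm z)) :=
    ((hΨ2.symm Ψ2).integral_comp Ψ2.symm.measurableEmbedding _).symm
  rw [h2]
  set τ : {w : {v : ι // ¬ v ∈ S} // (w : ι) ∈ A} ≃ {w : {v : ι // ¬ v ∈ S} // ¬ (w : ι) ∈ A} :=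
    { toFun := fun a => ⟨⟨e a.1.1, fun hs => hSB.ne_of_mem hs (heA _ a.2) rfl⟩,
        fun ha => hAB.ne_of_mem ha (heA _ a.2) rfl⟩
      invFun := fun b => ⟨⟨e b.1.1,
          fun hs => hSA.ne_of_mem hs (heB _ (((hmem b.1.1).resolve_left b.1.2).resolve_left b.2)) rfl⟩,
        heB _ (((hmem b.1.1).resolve_left b.1.2).resolve_left b.2)⟩
      left_inv := fun a => by ext; exact hee _
      right_inv := fun b => by ext; exact hee _ } with hτdef
  set P : ({w : {v : ι // ¬ v ∈ S} // (w : ι) ∈ A} → UI) → (ι → UI) := fun a v =>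
    if h : v ∈ S then x ⟨v, h⟩ else if h2 : v ∈ A then a ⟨⟨v, h⟩, h2⟩ else u0 with hPdef
  set F : ({w : {v : ι // ¬ v ∈ S} // (w : ι) ∈ A} → UI) → ℝ := fun a => f (P a) with hFdef
  have hkey : ∀ z, g (Ψ1.symm (x, Ψ2.symm z)) = F z.1 * F (fun t => z.2 (τ t)) := by
    rintro ⟨a, b⟩
    have hp : ∀ v : ι, Ψ1.symm (x, Ψ2.symm (a, b)) v =
        if h : v ∈ S then x ⟨v, h⟩ else
          if h2 : v ∈ A then a ⟨⟨v, h⟩, h2⟩ else b ⟨⟨v, h⟩, h2⟩ := by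
      intro v
      show (if h : v ∈ S then x ⟨v, h⟩ else (Ψ2.symm (a, b)) ⟨v, h⟩) = _
      by_cases h : v ∈ S
      · rw [dif_pos h, dif_pos h]
      · rw [dif_neg h, dif_neg h]
        show (if h2 : v ∈ A then a ⟨⟨v, h⟩, h2⟩ else b ⟨⟨v, h⟩, h2⟩) = _
        rfl
    set p := Ψ1.symm (x, Ψ2.symm (a, b)) with hpd
    have e1 : f p = F a := by
      apply hdep
      intro v hv
      rw [hp v]
      rcases hv with hv | hv
      · rw [dif_pos hv]; rw [hPdef]; simp only []; rw [dif_pos hv]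
      · have hvS : ¬ v ∈ S := fun hs => hSA.ne_of_mem hs hv rfl
        rw [dif_neg hvS, dif_pos hv, hPdef]; simp only []
        rw [dif_neg hvS, dif_pos hv]
    have e2 : f (fun v => p (e v)) = F (fun t => b (τ t)) := by
      apply hdep
      intro v hv
      rcases hv with hv | hv
      · rw [heS v hv, hp v, dif_pos hv, hPdef]; simp only []; rw [dif_pos hv]
      · have hvS : ¬ v ∈ S := fun hs => hSA.ne_of_mem hs hv rfl
        have hevB : e v ∈ B := heA v hv
        have hevS : ¬ e v ∈ S := fun hs => hSB.ne_of_mem hs hevB rfl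
        have hevA : ¬ e v ∈ A := fun ha => hAB.ne_of_mem ha hevB rfl
        rw [hp (e v), dif_neg hevS, dif_neg hevA, hPdef]; simp only []
        rw [dif_neg hvS, dif_pos hv]
        rfl
    rw [hgdef]; simp only []; rw [e1, e2]
  rw [integral_congr_ae (ae_of_all _ hkey)]
  have h4 : ∫ (z : ({w : {v : ι // ¬ v ∈ S} // (w : ι) ∈ A} → UI) ×
        ({w : {v : ι // ¬ v ∈ S} // ¬ (w : ι) ∈ A} → UI)),
        F z.1 * F (fun t => z.2 (τ t)) ∂((volume : Measure _).prod volume) =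
      (∫ a, F a) * ∫ b : {w : {v : ι // ¬ v ∈ S} // ¬ (w : ι) ∈ A} → UI,
        F (fun t => b (τ t)) := integral_prod_mul F
      (fun b : {w : {v : ι // ¬ v ∈ S} // ¬ (w : ι) ∈ A} → UI => F (fun t => b (τ t)))
  have h3 : ∫ (b : {w : {v : ι // ¬ v ∈ S} // ¬ (w : ι) ∈ A} → UI), F (fun t => b (τ t)) =
      ∫ a, F a := by
    have hmp : MeasurePreserving
        (MeasurableEquiv.arrowCongr' τ (MeasurableEquiv.refl UI) :
          ({w : {v : ι // ¬ v ∈ S} // (w : ι) ∈ A} → UI) ≃ᵐ _) :=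
      volume_preserving_arrowCongr' _ _ (MeasurePreserving.id _)
    rw [← hmp.integral_comp (MeasurableEquiv.measurableEmbedding _)]
    refine integral_congr_ae (MeasureTheory.ae_of_all _ fun a => ?_)
    have ht : (fun t => (MeasurableEquiv.arrowCongr' τ (MeasurableEquiv.refl UI)) a (τ t)) = a := by
      funext t
      show a (τ.symm (τ t)) = a t
      rw [Equiv.symm_apply_apply]
    exact congrArg F ht
  refine le_of_le_of_eq ?_ h4.symm
  rw [h3]
  exact mul_self_nonneg _

theorem symmetric_implies_positive {V : Type} [Fintype V] (G : SimpleGraph V)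
    (h : IsSymmetricGraph G) : Positive G := by
  classical
  obtain ⟨S, A, B, hcover, hSA, hSB, hAB, hS, hABadj, φ, hφ⟩ := h
  intro W hW
  obtain ⟨hWm, hWs, C, hWb⟩ := hW
  have u0 : UI := ⟨0, by norm_num⟩
  have hmem : ∀ v : V, v ∈ S ∨ v ∈ A ∨ v ∈ B := by
    intro v
    have : v ∈ S ∪ A ∪ B := hcover ▸ Set.mem_univ v
    rcases this with (h | h) | h
    exacts [Or.inl h, Or.inr (Or.inl h), Or.inr (Or.inr h)]
  have hBnot : ∀ v ∈ B, ¬ v ∈ S ∪ A := fun v hv hu =>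
    hu.elim (fun hs => hSB.ne_of_mem hs hv rfl) (fun ha => hAB.ne_of_mem ha hv rfl)
  have hnotB : ∀ v, ¬ v ∈ S ∪ A → v ∈ B := fun v hv =>
    ((hmem v).resolve_left fun h => hv (Or.inl h)).resolve_left fun h => hv (Or.inr h)
  set e : V → V := fun v => if h : v ∈ S ∪ A then ((φ ⟨v, h⟩ : ↥(S ∪ B)) : V)
      else ((φ.symm ⟨v, Or.inr (hnotB v h)⟩ : ↥(S ∪ A)) : V) with hedef
  have eIn : ∀ (v) (h' : v ∈ S ∪ A), e v = ((φ ⟨v, h'⟩ : ↥(S ∪ B)) : V) := by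
    intro v h'; rw [hedef]; dsimp only; rw [dif_pos h']
  have eOut : ∀ (v) (h' : ¬ v ∈ S ∪ A),
      e v = ((φ.symm ⟨v, Or.inr (hnotB v h')⟩ : ↥(S ∪ A)) : V) := by
    intro v h'; rw [hedef]; dsimp only; rw [dif_neg h']
  have hfixS : ∀ (v) (hv : v ∈ S) (h' : v ∈ S ∪ A), φ ⟨v, h'⟩ = ⟨v, Or.inl hv⟩ := by
    intro v hv h'
    exact Subtype.ext (hφ v hv)
  have hfixS' : ∀ (v) (hv : v ∈ S) (h' : v ∈ S ∪ B), φ.symm ⟨v, h'⟩ = ⟨v, Or.inl hv⟩ := by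
    intro v hv h'
    have h1 : φ ⟨v, Or.inl hv⟩ = ⟨v, h'⟩ := by
      rw [hfixS v hv (Or.inl hv)]
    rw [← h1, RelIso.symm_apply_apply]
  have heS : ∀ v ∈ S, e v = v := by
    intro v hv
    rw [eIn v (Or.inl hv), hfixS v hv (Or.inl hv)]
  have heA : ∀ v ∈ A, e v ∈ B := by
    intro v hv
    have h' : v ∈ S ∪ A := Or.inr hv
    rcases (φ ⟨v, h'⟩).2 with hs | hb
    · exfalso
      have h2 : φ ⟨((φ ⟨v, h'⟩ : ↥(S ∪ B)) : V), Or.inl hs⟩ = φ ⟨v, h'⟩ := by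
        rw [hfixS _ hs (Or.inl hs)]
      have h3 := φ.injective h2
      have h4 : ((φ ⟨v, h'⟩ : ↥(S ∪ B)) : V) = v := congrArg Subtype.val h3
      exact hSA.ne_of_mem (h4 ▸ hs) hv rfl
    · rw [eIn v h']; exact hb
  have heB : ∀ v ∈ B, e v ∈ A := by
    intro v hv
    have hn : ¬ v ∈ S ∪ A := hBnot v hv
    rcases (φ.symm ⟨v, Or.inr (hnotB v hn)⟩).2 with hs | ha
    · exfalso
      have h2 : φ.symm ⟨((φ.symm ⟨v, Or.inr (hnotB v hn)⟩ : ↥(S ∪ A)) : V), Or.inl hs⟩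
          = φ.symm ⟨v, Or.inr (hnotB v hn)⟩ := by
        rw [hfixS' _ hs (Or.inl hs)]
      have h3 := φ.symm.injective h2
      have h4 : ((φ.symm ⟨v, Or.inr (hnotB v hn)⟩ : ↥(S ∪ A)) : V) = v := congrArg Subtype.val h3
      exact hSB.ne_of_mem (h4 ▸ hs) hv rfl
    · rw [eOut v hn]; exact ha
  have hee : ∀ v, e (e v) = v := by
    intro v
    rcases hmem v with hv | hv | hv
    · rw [heS v hv, heS v hv]
    · have hn : ¬ e v ∈ S ∪ A := hBnot _ (heA v hv)
      rw [eOut _ hn]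
      have h1 : (⟨e v, Or.inr (hnotB _ hn)⟩ : ↥(S ∪ B)) = φ ⟨v, Or.inr hv⟩ :=
        Subtype.ext (eIn v (Or.inr hv))
      rw [h1, RelIso.symm_apply_apply]
    · have hn : ¬ v ∈ S ∪ A := hBnot v hv
      have h2 : e v ∈ S ∪ A := by
        rw [eOut v hn]; exact (φ.symm ⟨v, Or.inr (hnotB v hn)⟩).2
      rw [eIn _ h2]
      have h1 : (⟨e v, h2⟩ : ↥(S ∪ A)) = φ.symm ⟨v, Or.inr (hnotB v hn)⟩ :=
        Subtype.ext (eOut v hn)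
      rw [h1, RelIso.apply_symm_apply]
  have eOutSB : ∀ (u) (hu : u ∈ S ∪ B), e u = ((φ.symm ⟨u, hu⟩ : ↥(S ∪ A)) : V) := by
    intro u hu
    rcases hu with hs | hb
    · rw [heS u hs, hfixS' u hs (Or.inl hs)]
    · rw [eOut u (hBnot u hb)]
  have hadjSA : ∀ (u v : V) (hu : u ∈ S ∪ A) (hv : v ∈ S ∪ A),
      G.Adj u v → G.Adj (e u) (e v) := by
    intro u v hu hv huv
    rw [eIn u hu, eIn v hv]
    have h1 : (G.induce (S ∪ A)).Adj ⟨u, hu⟩ ⟨v, hv⟩ := by simpa using huv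
    have h2 := φ.map_adj_iff.mpr h1
    simpa using h2
  have hadjSB : ∀ (u v : V) (hu : u ∈ S ∪ B) (hv : v ∈ S ∪ B),
      G.Adj u v → G.Adj (e u) (e v) := by
    intro u v hu hv huv
    rw [eOutSB u hu, eOutSB v hv]
    have h1 : (G.induce (S ∪ B)).Adj ⟨u, hu⟩ ⟨v, hv⟩ := by simpa using huv
    have h2 := φ.symm.map_adj_iff.mpr h1
    simpa using h2
  have hadj : ∀ u v, G.Adj u v → G.Adj (e u) (e v) := by
    intro u v huv
    by_cases hu : u ∈ S ∪ A <;> by_cases hv : v ∈ S ∪ A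
    · exact hadjSA u v hu hv huv
    · have hvB := hnotB v hv
      have huS : u ∈ S := hu.resolve_right fun ha => hABadj u ha v hvB huv
      exact hadjSB u v (Or.inl huS) (Or.inr hvB) huv
    · have huB := hnotB u hu
      have hvS : v ∈ S := hv.resolve_right fun ha => hABadj v ha u huB huv.symm
      exact hadjSB u v (Or.inr huB) (Or.inl hvS) huv
    · exact hadjSB u v (Or.inr (hnotB u hu)) (Or.inr (hnotB v hv)) huv
  have heSUA : ∀ v, v ∈ S ∪ A → e v ∈ S ∪ B := fun v h =>
    h.elim (fun hs => Or.inl (show e v ∈ S by rw [heS v hs]; exact hs))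
      fun ha => Or.inr (heA v ha)
  have heSUB : ∀ v, v ∈ S ∪ B → e v ∈ S ∪ A := fun v h =>
    h.elim (fun hs => Or.inl (show e v ∈ S by rw [heS v hs]; exact hs))
      fun hb => Or.inr (heB v hb)
  -- edge decomposition
  set κ : (V → UI) → Sym2 V → ℝ := fun p s => W (p (Quot.out s).1) (p (Quot.out s).2) with hκdef
  set pr : Sym2 V → Prop := fun s => ∀ v ∈ s, v ∈ S ∪ A with hprdef
  set E1 := G.edgeFinset.filter pr with hE1def
  set f : (V → UI) → ℝ := fun p => ∏ s ∈ E1, κ p s with hfdef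
  have hκmk : ∀ (p : V → UI) (a b : V), κ p s(a, b) = W (p a) (p b) := fun p a b =>
    kappa_mk hWs p a b
  have hmap12 : ∀ s ∈ G.edgeFinset.filter (fun s => ¬ pr s), Sym2.map e s ∈ E1 := by
    intro s
    induction s using Sym2.ind with
    | _ u v =>
      intro hs
      obtain ⟨hedge, hnpr⟩ := Finset.mem_filter.mp hs
      have huv : G.Adj u v := by simpa using hedge
      have hB : u ∈ B ∨ v ∈ B := by
        by_contra hc
        push_neg at hc
        refine hnpr (Sym2.ball.mpr ⟨?_, ?_⟩)
        · rcases hmem u with h | h | h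
          exacts [Or.inl h, Or.inr h, absurd h hc.1]
        · rcases hmem v with h | h | h
          exacts [Or.inl h, Or.inr h, absurd h hc.2]
      have hmemSA : e u ∈ S ∪ A ∧ e v ∈ S ∪ A := by
        rcases hB with hb | hb
        · have hvSB : v ∈ S ∪ B := by
            rcases hmem v with h | h | h
            exacts [Or.inl h, absurd huv.symm (hABadj v h u hb), Or.inr h]
          exact ⟨heSUB u (Or.inr hb), heSUB v hvSB⟩
        · have huSB : u ∈ S ∪ B := by
            rcases hmem u with h | h | h
            exacts [Or.inl h, absurd huv (hABadj u h v hb), Or.inr h]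
          exact ⟨heSUB u huSB, heSUB v (Or.inr hb)⟩
      rw [Sym2.map_pair_eq]
      refine Finset.mem_filter.mpr ⟨?_, ?_⟩
      · simpa using hadj u v huv
      · exact Sym2.ball.mpr hmemSA
  have hmap21 : ∀ s ∈ E1, Sym2.map e s ∈ G.edgeFinset.filter (fun s => ¬ pr s) := by
    intro s
    induction s using Sym2.ind with
    | _ u v =>
      intro hs
      obtain ⟨hedge, hpr⟩ := Finset.mem_filter.mp hs
      have huv : G.Adj u v := by simpa using hedge
      replace hpr := Sym2.ball.mp hpr
      rw [Sym2.map_pair_eq]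
      refine Finset.mem_filter.mpr ⟨by simpa using hadj u v huv, ?_⟩
      intro hall
      replace hall := Sym2.ball.mp hall
      have heuS : e u ∈ S := by
        rcases heSUA u hpr.1 with h | h
        · exact h
        · exact absurd hall.1 (hBnot _ h)
      have hevS : e v ∈ S := by
        rcases heSUA v hpr.2 with h | h
        · exact h
        · exact absurd hall.2 (hBnot _ h)
      exact hS _ heuS _ hevS (hadj u v huv)
  have hinv : ∀ s : Sym2 V, Sym2.map e (Sym2.map e s) = s := by
    intro s
    rw [Sym2.map_map, show e ∘ e = id from funext hee, Sym2.map_id, id]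
  have hval : ∀ (p : V → UI) (s : Sym2 V), κ p s = κ (fun v => p (e v)) (Sym2.map e s) := by
    intro p s
    induction s using Sym2.ind with
    | _ u v =>
      rw [Sym2.map_pair_eq]
      rw [hκmk p u v, hκmk (fun w => p (e w)) (e u) (e v)]
      rw [hee u, hee v]
  have hprod : ∀ p : V → UI,
      (∏ s ∈ G.edgeFinset, κ p s) = f p * f (fun v => p (e v)) := by
    intro p
    rw [← Finset.prod_filter_mul_prod_filter_not G.edgeFinset pr (κ p)]
    congr 1
    exact Finset.prod_nbij' (Sym2.map e) (Sym2.map e) hmap12 hmap21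
      (fun s _ => hinv s) (fun s _ => hinv s) (fun s _ => hval p s)
  have hfm : Measurable f := by
    rw [hfdef]
    refine Finset.measurable_prod _ fun s _ => ?_
    exact hWm.comp (Measurable.prodMk (measurable_pi_apply (Quot.out s).1)
      (measurable_pi_apply (Quot.out s).2))
  have hC0 : 0 ≤ C := le_trans (abs_nonneg _) (hWb u0 u0)
  have hfb : ∀ p, |f p| ≤ C ^ E1.card := by
    intro p
    rw [hfdef]
    calc |∏ s ∈ E1, κ p s| = ∏ s ∈ E1, |κ p s| := Finset.abs_prod _ _
    _ ≤ ∏ _s ∈ E1, C := Finset.prod_le_prod (fun s _ => abs_nonneg _) (fun s _ => hWb _ _)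
    _ = C ^ E1.card := Finset.prod_const C
  have hdep : ∀ p q : V → UI, (∀ v ∈ S ∪ A, p v = q v) → f p = f q := by
    intro p q hpq
    refine Finset.prod_congr rfl fun s hs => ?_
    have hall := (Finset.mem_filter.mp hs).2
    have h1 : (Quot.out s).1 ∈ S ∪ A := hall _ (Sym2.out_fst_mem s)
    have h2 : (Quot.out s).2 ∈ S ∪ A := hall _ (Sym2.out_snd_mem s)
    show W (p (Quot.out s).1) (p (Quot.out s).2) = W (q (Quot.out s).1) (q (Quot.out s).2)
    rw [hpq _ h1, hpq _ h2]
  have hhd : homDensity G W = ∫ p : V → UI, f p * f (fun v => p (e v)) := by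
    unfold homDensity
    exact integral_congr_ae (MeasureTheory.ae_of_all _ fun p => hprod p)
  rw [hhd]
  exact key S A B hcover hSA hSB hAB e heS heA heB hee f hfm (C ^ E1.card) hfb hdep
end
end

section
/- If a finite simple graph G is positive, then there exists an even homomorphism of G into itself, i.e., a graph homomorphism φ : G → G such that for every edge e of G, the number of edges of G mapped by φ onto e is even. -/
open MeasureTheory

noncomputable section

open scoped Classical in
/-- A graph homomorphism `f : G → H` is even if for every edge `e` of `H`, the number of
edges of `G` mapped by `f` onto `e` is even. -/
def IsEvenHom {V V' : Type} [Fintype V] [Fintype V'] {G : SimpleGraph V} {H : SimpleGraph V'}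
    (f : G →g H) : Prop :=
  ∀ e ∈ H.edgeFinset, Even ((G.edgeFinset.filter (fun e' => Sym2.map (⇑f) e' = e)).card)



open scoped Classical ENNReal

namespace EvenHomProof

variable {V : Type} [Fintype V]

noncomputable def cls [Nonempty V] (x : UI) : V :=
  (Fintype.equivFin V).symm ⟨min ⌊(x:ℝ) * (Fintype.card V)⌋₊ (Fintype.card V - 1),
    lt_of_le_of_lt (min_le_right _ _) (Nat.sub_lt Fintype.card_pos one_pos)⟩

lemma cls_preimage [Nonempty V] (v : V) :
    (cls ⁻¹' {v} : Set UI)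
      = {x : UI | min ⌊(x:ℝ) * (Fintype.card V)⌋₊ (Fintype.card V - 1)
          = ((Fintype.equivFin V) v : ℕ)} := by
  ext x
  simp only [Set.mem_preimage, Set.mem_singleton_iff, Set.mem_setOf_eq, cls,
    Equiv.symm_apply_eq, Fin.ext_iff]

lemma min_floor_set_eq (n i : ℕ) (hn : 0 < n) (hi : i < n) :
    {x : UI | min ⌊(x:ℝ) * n⌋₊ (n - 1) = i}
      = if i = n - 1 then (Subtype.val ⁻¹' Set.Ici ((i:ℝ)/n) : Set UI)
        else (Subtype.val ⁻¹' Set.Ico ((i:ℝ)/n) ((i+1:ℝ)/n) : Set UI) := by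
  have hn' : (0:ℝ) < n := by exact_mod_cast hn
  ext x
  obtain ⟨x, hx0, hx1⟩ := x
  have hxn : (0:ℝ) ≤ x * n := mul_nonneg hx0 hn'.le
  simp only [Set.mem_setOf_eq]
  split_ifs with hlast
  · subst hlast
    simp only [Set.mem_preimage, Set.mem_Ici]
    constructor
    · intro hmin
      have : n - 1 ≤ ⌊x * n⌋₊ := by omega
      have := (Nat.le_floor_iff hxn).mp this
      rw [div_le_iff₀ hn']
      linarith
    · intro hle
      have : ((n-1 : ℕ):ℝ) ≤ x * n := by
        rw [div_le_iff₀ hn'] at hle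
        exact hle
      have := (Nat.le_floor_iff hxn).mpr this
      omega
  · simp only [Set.mem_preimage, Set.mem_Ico]
    constructor
    · intro hmin
      have hfl : ⌊x * n⌋₊ = i := by omega
      have h1 := Nat.floor_le hxn
      have h2 := Nat.lt_floor_add_one (x * n)
      rw [hfl] at h1 h2
      constructor
      · rw [div_le_iff₀ hn']; linarith
      · rw [lt_div_iff₀ hn']; push_cast; linarith
    · rintro ⟨h1, h2⟩
      rw [div_le_iff₀ hn'] at h1
      rw [lt_div_iff₀ hn'] at h2
      have hfl : ⌊x * n⌋₊ = i := by
        rw [Nat.floor_eq_iff hxn]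
        push_cast at h2 ⊢
        exact ⟨h1, h2⟩
      omega

lemma measurableSet_val_preimage {A : Set ℝ} (hA : MeasurableSet A) :
    MeasurableSet (Subtype.val ⁻¹' A : Set UI) :=
  hA.preimage measurable_subtype_coe

lemma volume_val_preimage {A : Set ℝ} (hA : MeasurableSet A) :
    volume (Subtype.val ⁻¹' A : Set UI) = volume (A ∩ Set.Icc 0 1) := by
  rw [Measure.Subtype.volume_def,
    Measure.comap_apply _ Subtype.val_injective
      (fun s hs => (MeasurableEmbedding.subtype_coe measurableSet_Icc).measurableSet_image.mpr hs)
      _ (measurableSet_val_preimage hA)]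
  rw [Subtype.image_preimage_coe, Set.inter_comm]

lemma measurableSet_cls_preimage [Nonempty V] (v : V) :
    MeasurableSet (cls ⁻¹' {v} : Set UI) := by
  rw [cls_preimage, min_floor_set_eq _ _ Fintype.card_pos ((Fintype.equivFin V) v).isLt]
  split_ifs
  · exact measurableSet_val_preimage measurableSet_Ici
  · exact measurableSet_val_preimage measurableSet_Ico

lemma volume_cls_preimage [Nonempty V] (v : V) :
    volume (cls ⁻¹' {v} : Set UI) = (Fintype.card V : ℝ≥0∞)⁻¹ := by
  set n := Fintype.card V with hn
  have hnpos : 0 < n := Fintype.card_pos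
  have hn' : (0:ℝ) < n := by exact_mod_cast hnpos
  set i := (((Fintype.equivFin V) v) : ℕ) with hidef
  have hi : i < n := ((Fintype.equivFin V) v).isLt
  have hinv : (n : ℝ≥0∞)⁻¹ = ENNReal.ofReal (1 / (n:ℝ)) := by
    rw [one_div, ENNReal.ofReal_inv_of_pos hn', ENNReal.ofReal_natCast]
  rw [cls_preimage, min_floor_set_eq _ _ hnpos hi, hinv]
  split_ifs with hlast
  · rw [volume_val_preimage measurableSet_Ici]
    have h0 : (0:ℝ) ≤ (i:ℝ)/n := by positivity
    have h1 : (i:ℝ)/n ≤ 1 := by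
      rw [div_le_one hn']; exact_mod_cast hi.le
    have : Set.Ici ((i:ℝ)/n) ∩ Set.Icc 0 1 = Set.Icc ((i:ℝ)/n) 1 := by
      ext y
      simp only [Set.mem_inter_iff, Set.mem_Ici, Set.mem_Icc]
      constructor
      · rintro ⟨ha, hb, hc⟩; exact ⟨ha, hc⟩
      · rintro ⟨ha, hb⟩; exact ⟨ha, le_trans h0 ha, hb⟩
    rw [this, Real.volume_Icc]
    congr 1
    have : (i:ℝ) = (n:ℝ) - 1 := by
      rw [hlast]; push_cast [Nat.cast_sub hnpos]; ring
    rw [this]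
    field_simp
    ring
  · rw [volume_val_preimage measurableSet_Ico]
    have hsub : Set.Ico ((i:ℝ)/n) ((i+1:ℝ)/n) ⊆ Set.Icc 0 1 := by
      intro y hy
      obtain ⟨h1, h2⟩ := hy
      constructor
      · have : (0:ℝ) ≤ (i:ℝ)/n := by positivity
        linarith
      · have hin : (i:ℝ)+1 ≤ n := by
          have : i + 1 ≤ n := hi
          exact_mod_cast this
        have : ((i:ℝ)+1)/n ≤ 1 := by
          rw [div_le_one hn']; linarith
        linarith
    rw [Set.inter_eq_self_of_subset_left hsub, Real.volume_Ico]
    congr 1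
    field_simp
    ring


variable {V : Type} [Fintype V]

lemma integral_cls [Nonempty V] (F : (V → V) → ℝ) :
    (∫ p : V → UI, F (fun v => cls (p v)))
      = ∑ φ : V → V, ((Fintype.card V : ℝ)⁻¹) ^ (Fintype.card V) * F φ := by
  letI : MeasurableSpace V := ⊤
  haveI : MeasurableSingletonClass V := ⟨fun _ => MeasurableSpace.measurableSet_top⟩
  have hc : Measurable (cls : UI → V) :=
    measurable_to_countable' fun v => measurableSet_cls_preimage v
  have hP : Measurable (fun (p : V → UI) (v : V) => cls (p v)) :=
    measurable_pi_iff.mpr fun v => hc.comp (measurable_pi_apply v)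
  haveI := Measure.isProbabilityMeasure_map (μ := (volume : Measure (V → UI))) hP.aemeasurable
  rw [← MeasureTheory.integral_map hP.aemeasurable
    (measurable_of_countable F).aestronglyMeasurable]
  rw [MeasureTheory.integral_fintype (Integrable.of_finite)]
  refine Finset.sum_congr rfl fun φ _ => ?_
  have hsing : (Measure.map (fun (p : V → UI) (v : V) => cls (p v)) volume) {φ}
      = ((Fintype.card V : ℝ≥0∞)⁻¹) ^ (Fintype.card V) := by
    rw [Measure.map_apply hP (measurableSet_singleton φ)]
    have hpre : (fun (p : V → UI) (v : V) => cls (p v)) ⁻¹' {φ}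
        = Set.univ.pi fun v => (cls ⁻¹' {φ v} : Set UI) := by
      ext p
      simp [funext_iff]
    rw [hpre, volume_pi, Measure.pi_pi]
    simp [volume_cls_preimage]
  rw [measureReal_def, hsing, smul_eq_mul]
  congr 1
  rw [ENNReal.toReal_pow, ENNReal.toReal_inv, ENNReal.toReal_natCast]

lemma isKernel_comp [Nonempty V] (w : V → V → ℝ) (hw : ∀ u v, w u v = w v u) :
    IsKernel (fun x y => w (cls x) (cls y)) := by
  letI : MeasurableSpace V := ⊤
  haveI : MeasurableSingletonClass V := ⟨fun _ => MeasurableSpace.measurableSet_top⟩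
  have hc : Measurable (cls : UI → V) :=
    measurable_to_countable' fun v => measurableSet_cls_preimage v
  refine ⟨?_, fun x y => hw _ _, ⟨∑ q : V × V, |w q.1 q.2|, fun x y => ?_⟩⟩
  · exact (measurable_of_countable (fun q : V × V => w q.1 q.2)).comp
      ((hc.comp measurable_fst).prodMk (hc.comp measurable_snd))
  · exact Finset.single_le_sum (f := fun q : V × V => |w q.1 q.2|)
      (fun q _ => abs_nonneg _) (Finset.mem_univ (cls x, cls y))



lemma sum_sign_prod (E : Finset (Sym2 V)) (f : Sym2 V → Sym2 V) :
    ∑ β : Sym2 V → Bool, ∏ e ∈ E, (if β (f e) then (-1:ℝ) else 1)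
      = ∏ g : Sym2 V, (if Even ((E.filter (fun e' => f e' = g)).card) then (2:ℝ) else 0) := by
  have h1 : ∀ β : Sym2 V → Bool, ∏ e ∈ E, (if β (f e) then (-1:ℝ) else 1)
      = ∏ g : Sym2 V, (if β g then (-1:ℝ) else 1) ^ ((E.filter (fun e' => f e' = g)).card) := by
    intro β
    rw [← Finset.prod_fiberwise_of_maps_to (fun e _ => Finset.mem_univ (f e))
      (fun e => if β (f e) then (-1:ℝ) else 1)]
    refine Finset.prod_congr rfl fun g _ => ?_
    rw [Finset.prod_congr rfl (fun e he => by rw [(Finset.mem_filter.mp he).2]),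
      Finset.prod_const]
  simp only [h1]
  have h2 : ∀ g : Sym2 V, ∑ t : Bool,
      (if t then (-1:ℝ) else 1) ^ ((E.filter (fun e' => f e' = g)).card)
      = (if Even ((E.filter (fun e' => f e' = g)).card) then (2:ℝ) else 0) := by
    intro g
    rw [Fintype.sum_bool]
    simp only [if_true, if_false, one_pow]
    rcases Nat.even_or_odd ((E.filter (fun e' => f e' = g)).card) with hev | hod
    · rw [hev.neg_one_pow, if_pos hev]; norm_num
    · rw [hod.neg_one_pow, if_neg (Nat.not_even_iff_odd.mpr hod)]; norm_num
  rw [← Finset.prod_congr rfl (fun g _ => h2 g)]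
  rw [show (fun g : Sym2 V => ∑ t : Bool, (if t then (-1:ℝ) else 1) ^ ((E.filter (fun e' => f e' = g)).card)) = fun g => ∑ t ∈ (Finset.univ : Finset Bool), (if t then (-1:ℝ) else 1) ^ ((E.filter (fun e' => f e' = g)).card) from rfl]
  rw [Finset.prod_univ_sum]
  rw [Fintype.piFinset_univ]

lemma out_mk (e : Sym2 V) : s((Quot.out e).1, (Quot.out e).2) = e := Quot.out_eq e

lemma adj_out {G : SimpleGraph V} {e : Sym2 V} (he : e ∈ G.edgeFinset) :
    G.Adj (Quot.out e).1 (Quot.out e).2 := by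
  have h1 := SimpleGraph.mem_edgeFinset.mp he
  rw [← out_mk e, SimpleGraph.mem_edgeSet] at h1
  exact h1


end EvenHomProof

open EvenHomProof

theorem positive_implies_even_self_hom {V : Type} [Fintype V] (G : SimpleGraph V)
    (h : Positive G) : ∃ φ : G →g G, IsEvenHom φ := by
  classical
  by_cases hE : G.edgeFinset = ∅
  · exact ⟨SimpleGraph.Hom.id, fun e he => absurd (hE ▸ he) (Finset.notMem_empty e)⟩
  obtain ⟨e0, he0⟩ := Finset.nonempty_iff_ne_empty.mpr hE
  haveI : Nonempty V := ⟨(Quot.out e0).1⟩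
  by_contra hno
  push_neg at hno
  set n := Fintype.card V with hn
  set c : ℝ := ((n : ℝ)⁻¹) ^ n with hc
  have hcpos : 0 < c := by
    have : (0:ℝ) < n := by exact_mod_cast (Fintype.card_pos : 0 < n)
    positivity
  -- sign-weighted adjacency matrices
  set wB : (Sym2 V → Bool) → V → V → ℝ :=
    fun β u v => if G.Adj u v then (if β s(u, v) then (-1:ℝ) else 1) else 0 with hwB
  set T : (V → V) → (Sym2 V → Bool) → ℝ :=
    fun φ β => ∏ e ∈ G.edgeFinset, wB β (φ (Quot.out e).1) (φ (Quot.out e).2) with hT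
  -- homDensity of these kernels
  have hdens : ∀ β : Sym2 V → Bool,
      homDensity G (fun x y => wB β (cls x) (cls y)) = ∑ φ : V → V, c * T φ β := by
    intro β
    exact integral_cls (fun φ => T φ β)
  -- each is nonnegative
  have hnonneg : ∀ β : Sym2 V → Bool,
      0 ≤ homDensity G (fun x y => wB β (cls x) (cls y)) := by
    intro β
    refine h _ (isKernel_comp (wB β) fun u v => ?_)
    simp only [hwB]
    rw [SimpleGraph.adj_comm, Sym2.eq_swap]
  -- sum over β of T φ β
  have key : ∀ φ : V → V, ∑ β : Sym2 V → Bool, T φ β = 0 := by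
    intro φ
    by_cases hφ : ∀ a b, G.Adj a b → G.Adj (φ a) (φ b)
    · have hhom : ∀ β : Sym2 V → Bool, T φ β
          = ∏ e ∈ G.edgeFinset, (if β (Sym2.map φ e) then (-1:ℝ) else 1) := by
        intro β
        refine Finset.prod_congr rfl fun e he => ?_
        have hadj := adj_out he
        rw [hwB]
        simp only
        have hmap : Sym2.map φ e = s(φ (Quot.out e).1, φ (Quot.out e).2) := by
          conv_lhs => rw [← out_mk e]
          rw [Sym2.map_pair_eq]
        rw [if_pos (hφ _ _ hadj), hmap]
      simp only [hhom]
      rw [sum_sign_prod]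
      -- no even hom: some fiber is odd
      set Φ : G →g G := ⟨φ, fun {a b} hab => hφ a b hab⟩ with hΦ
      have := hno Φ
      rw [IsEvenHom] at this
      push_neg at this
      obtain ⟨g, hg, hodd⟩ := this
      refine Finset.prod_eq_zero (Finset.mem_univ g) ?_
      rw [if_neg]
      convert hodd using 3
      rfl
    · push_neg at hφ
      obtain ⟨a, b, hab, hnadj⟩ := hφ
      have hmem : s(a, b) ∈ G.edgeFinset := SimpleGraph.mem_edgeFinset.mpr hab
      have hnadj' : ¬ G.Adj (φ (Quot.out s(a,b)).1) (φ (Quot.out s(a,b)).2) := by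
        have hout : s((Quot.out s(a,b)).1, (Quot.out s(a,b)).2) = s(a, b) := out_mk _
        rcases Sym2.eq_iff.mp hout with ⟨h1, h2⟩ | ⟨h1, h2⟩
        · rw [h1, h2]; exact hnadj
        · rw [h1, h2]; exact fun hh => hnadj hh.symm
      have : ∀ β : Sym2 V → Bool, T φ β = 0 := by
        intro β
        refine Finset.prod_eq_zero hmem ?_
        rw [hwB]
        simp only
        rw [if_neg hnadj']
      simp only [this]
      simp
  -- total sum is zero
  have total : ∑ β : Sym2 V → Bool,
      homDensity G (fun x y => wB β (cls x) (cls y)) = 0 := by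
    simp only [hdens]
    rw [Finset.sum_comm]
    refine Finset.sum_eq_zero fun φ _ => ?_
    rw [← Finset.mul_sum, key φ, mul_zero]
  -- but the all-positive one is positive
  set β₀ : Sym2 V → Bool := fun _ => false with hβ₀
  have hTnonneg : ∀ φ : V → V, 0 ≤ T φ β₀ := by
    intro φ
    refine Finset.prod_nonneg fun e _ => ?_
    rw [hwB]
    simp only [hβ₀, if_neg Bool.false_ne_true]
    split_ifs <;> norm_num
  have hTid : T id β₀ = 1 := by
    refine Finset.prod_eq_one fun e he => ?_
    rw [hwB]
    simp only [hβ₀, id_eq, if_neg Bool.false_ne_true]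
    rw [if_pos (adj_out he)]
  have hpos : 0 < homDensity G (fun x y => wB β₀ (cls x) (cls y)) := by
    rw [hdens]
    have h1 : c * 1 ≤ c * T id β₀ := by rw [hTid]
    have h2 : c * T id β₀ ≤ ∑ φ : V → V, c * T φ β₀ :=
      Finset.single_le_sum (fun φ _ => mul_nonneg hcpos.le (hTnonneg φ)) (Finset.mem_univ id)
    linarith
  have hle : homDensity G (fun x y => wB β₀ (cls x) (cls y))
      ≤ ∑ β : Sym2 V → Bool, homDensity G (fun x y => wB β (cls x) (cls y)) :=
    Finset.single_le_sum (fun β _ => hnonneg β) (Finset.mem_univ β₀)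
  rw [total] at hle
  linarith
end
end

section
/- If a finite simple graph G is positive, then for every n ≥ |V(G)| there exists an even homomorphism f : G → K_n (where K_n is the complete graph on n vertices) such that |f(V(G))| ≥ |V(G)|/2. -/
open MeasureTheory

noncomputable section

set_option linter.unusedSectionVars false
set_option linter.unreachableTactic false
set_option linter.unusedTactic false


namespace EvenHomProof
variable {I : Type} [Fintype I] [DecidableEq I]

noncomputable def cval (σ : I → Bool) (i : I) : ℝ := if σ i then 1 else -1

lemma cval_sq (σ : I → Bool) (i : I) : cval σ i ^ 2 = 1 := by
  unfold cval; split <;> norm_num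

noncomputable def chi (σ : I → Bool) (S : Finset I) : ℝ := ∏ i ∈ S, cval σ i

noncomputable def fA (a : Finset I → ℝ) (σ : I → Bool) : ℝ := ∑ S : Finset I, a S * chi σ S

lemma cval_update_ne (σ : I → Bool) {i j : I} (h : j ≠ i) (t : Bool) :
    cval (Function.update σ i t) j = cval σ j := by
  unfold cval; rw [Function.update_of_ne h]

lemma chi_update (σ : I → Bool) {i : I} {S : Finset I} (h : i ∉ S) (t : Bool) :
    chi (Function.update σ i t) S = chi σ S := by
  unfold chi
  exact Finset.prod_congr rfl fun j hj => cval_update_ne σ (fun hji : j = i => h (hji ▸ hj)) t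

lemma fA_update {a : Finset I → ℝ} {i : I} (ha : ∀ S, i ∈ S → a S = 0)
    (σ : I → Bool) (t : Bool) : fA a (Function.update σ i t) = fA a σ := by
  unfold fA
  refine Finset.sum_congr rfl fun S _ => ?_
  by_cases hiS : i ∈ S
  · rw [ha S hiS]; ring
  · rw [chi_update σ hiS]

lemma sum_val_mul (i : I) (u : (I → Bool) → ℝ)
    (hu : ∀ σ t, u (Function.update σ i t) = u σ) :
    ∑ σ : I → Bool, cval σ i * u σ = 0 := by
  refine Finset.sum_involution (fun σ _ => Function.update σ i (!σ i)) ?_ ?_ (fun _ _ => Finset.mem_univ _) ?_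
  · intro σ _
    have h1 : cval (Function.update σ i (!σ i)) i = - cval σ i := by
      unfold cval; rw [Function.update_self]; cases σ i <;> norm_num
    rw [hu, h1]; ring
  · intro σ _ _
    intro hEq
    have := congrFun hEq i
    simp only [Function.update_self] at this
    cases h : σ i <;> rw [h] at this <;> simp at this
  · intro σ _
    funext j
    by_cases hj : j = i
    · subst hj; simp [Function.update_self]
    · simp [Function.update_of_ne hj]

lemma sum_chi (S : Finset I) :
    ∑ σ : I → Bool, chi σ S = if S = ∅ then (2:ℝ) ^ Fintype.card I else 0 := by
  by_cases hS : S = ∅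
  · subst hS
    simp [chi, Finset.sum_const, Fintype.card_fun]
  · obtain ⟨i, hi⟩ := Finset.nonempty_of_ne_empty hS
    rw [if_neg hS]
    have : ∀ σ : I → Bool, chi σ S = cval σ i * chi σ (S.erase i) := by
      intro σ
      unfold chi
      rw [← Finset.prod_insert (Finset.notMem_erase i S), Finset.insert_erase hi]
    rw [Finset.sum_congr rfl fun σ _ => this σ]
    exact sum_val_mul i (fun σ => chi σ (S.erase i))
      (fun σ t => chi_update σ (Finset.notMem_erase i S) t)

theorem bonami_aux (s : Finset I) :
    ∀ (d : ℕ) (a : Finset I → ℝ), (∀ S, a S ≠ 0 → S ⊆ s ∧ S.card ≤ d) →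
    (2:ℝ) ^ Fintype.card I * ∑ σ : I → Bool, (fA a σ) ^ 4 ≤
      9 ^ d * (∑ σ : I → Bool, (fA a σ) ^ 2) ^ 2 := by
  induction s using Finset.induction_on with
  | empty =>
    intro d a ha
    have hfa : ∀ σ : I → Bool, fA a σ = a ∅ := by
      intro σ
      unfold fA
      rw [Finset.sum_eq_single ∅]
      · simp [chi]
      · intro b _ hb
        rcases eq_or_ne (a b) 0 with h | h
        · rw [h]; ring
        · exact absurd (Finset.subset_empty.mp (ha b h).1) hb
      · intro h; exact absurd (Finset.mem_univ _) h
    have hcard : (Finset.univ : Finset (I → Bool)).card = 2 ^ Fintype.card I := by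
      rw [Finset.card_univ, Fintype.card_fun, Fintype.card_bool]
    have h9 : (1:ℝ) ≤ 9 ^ d := one_le_pow₀ (by norm_num)
    have hsum4 : ∑ σ : I → Bool, fA a σ ^ 4 = (2:ℝ) ^ Fintype.card I * a ∅ ^ 4 := by
      simp only [hfa]; rw [Finset.sum_const, hcard, nsmul_eq_mul]; push_cast; ring
    have hsum2 : ∑ σ : I → Bool, fA a σ ^ 2 = (2:ℝ) ^ Fintype.card I * a ∅ ^ 2 := by
      simp only [hfa]; rw [Finset.sum_const, hcard, nsmul_eq_mul]; push_cast; ring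
    rw [hsum4, hsum2]
    have key : (2:ℝ)^(Fintype.card I) * ((2:ℝ)^(Fintype.card I) * a ∅ ^4)
        = ((2:ℝ)^(Fintype.card I) * a ∅ ^ 2)^2 := by ring
    rw [key]
    exact le_mul_of_one_le_left (sq_nonneg _) h9
  | @insert i s' hi ih =>
    intro d a ha
    set b : Finset I → ℝ := fun S => if i ∈ S then 0 else a S with hbdef
    set c : Finset I → ℝ := fun S => if i ∈ S then 0 else a (insert i S) with hcdef
    have hbz : ∀ S, i ∈ S → b S = 0 := fun S hS => by simp [hbdef, hS]
    have hcz : ∀ S, i ∈ S → c S = 0 := fun S hS => by simp [hcdef, hS]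
    have hb_supp : ∀ S, b S ≠ 0 → S ⊆ s' ∧ S.card ≤ d := by
      intro S hS
      by_cases hiS : i ∈ S
      · exact absurd (hbz S hiS) hS
      · have hA : a S ≠ 0 := by simpa [hbdef, hiS] using hS
        obtain ⟨h1, h2⟩ := ha S hA
        refine ⟨fun x hx => ?_, h2⟩
        rcases Finset.mem_insert.mp (h1 hx) with h | h
        · exact absurd (h ▸ hx) hiS
        · exact h
    have hc_supp : ∀ S, c S ≠ 0 → S ⊆ s' ∧ S.card ≤ d - 1 := by
      intro S hS
      by_cases hiS : i ∈ S
      · exact absurd (hcz S hiS) hS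
      · have hA : a (insert i S) ≠ 0 := by simpa [hcdef, hiS] using hS
        obtain ⟨h1, h2⟩ := ha _ hA
        constructor
        · intro x hx
          have hxi : x ∈ insert i s' := h1 (Finset.mem_insert_of_mem hx)
          rcases Finset.mem_insert.mp hxi with h | h
          · exact absurd (h ▸ hx) hiS
          · exact h
        · have := Finset.card_insert_of_notMem hiS ▸ h2
          omega
    -- decomposition
    have hdec : ∀ σ : I → Bool, fA a σ = fA b σ + cval σ i * fA c σ := by
      intro σ
      have hsplit := Finset.sum_filter_add_sum_filter_not (Finset.univ : Finset (Finset I))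
        (fun S => i ∈ S) (fun S => a S * chi σ S)
      have hb_eq : fA b σ = ∑ S ∈ Finset.univ.filter (fun S => ¬ i ∈ S), a S * chi σ S := by
        unfold fA
        rw [← Finset.sum_filter_add_sum_filter_not (Finset.univ : Finset (Finset I))
          (fun S => i ∈ S) (fun S => b S * chi σ S)]
        have hz : ∑ S ∈ Finset.univ.filter (fun S => i ∈ S), b S * chi σ S = 0 :=
          Finset.sum_eq_zero fun S hS => by
            rw [hbz S (Finset.mem_filter.mp hS).2]; ring
        rw [hz, zero_add]
        exact Finset.sum_congr rfl fun S hS => by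
          rw [hbdef]; simp [(Finset.mem_filter.mp hS).2]
      have hc_eq : cval σ i * fA c σ = ∑ S ∈ Finset.univ.filter (fun S => i ∈ S), a S * chi σ S := by
        unfold fA
        rw [Finset.mul_sum]
        rw [← Finset.sum_filter_add_sum_filter_not (Finset.univ : Finset (Finset I))
          (fun S => i ∈ S) (fun S => cval σ i * (c S * chi σ S))]
        have hz : ∑ S ∈ Finset.univ.filter (fun S => i ∈ S), cval σ i * (c S * chi σ S) = 0 :=
          Finset.sum_eq_zero fun S hS => by
            rw [hcz S (Finset.mem_filter.mp hS).2]; ring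
        rw [hz, zero_add]
        refine Finset.sum_bij' (fun S _ => insert i S) (fun S _ => S.erase i) ?_ ?_ ?_ ?_ ?_
        · intro S hS
          simp only [Finset.mem_filter, Finset.mem_univ, true_and]
          exact Finset.mem_insert_self i S
        · intro S hS
          simp only [Finset.mem_filter, Finset.mem_univ, true_and]
          exact Finset.notMem_erase i S
        · intro S hS
          have hiS : i ∉ S := by simpa using (Finset.mem_filter.mp hS).2
          show (insert i S).erase i = S
          exact Finset.erase_insert hiS
        · intro S hS
          show insert i (S.erase i) = S
          exact Finset.insert_erase (Finset.mem_filter.mp hS).2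
        · intro S hS
          have hiS : i ∉ S := by simpa using (Finset.mem_filter.mp hS).2
          show cval σ i * (c S * chi σ S) = a (insert i S) * chi σ (insert i S)
          have hchi : chi σ (insert i S) = cval σ i * chi σ S := by
            unfold chi; rw [Finset.prod_insert hiS]
          have hcS : c S = a (insert i S) := by rw [hcdef]; simp [hiS]
          rw [hchi, hcS]; ring
      unfold fA at hb_eq hc_eq ⊢
      rw [hb_eq, hc_eq, add_comm, hsplit]
    -- flip invariance
    have hgb : ∀ (σ : I → Bool) (t : Bool), fA b (Function.update σ i t) = fA b σ :=
      fA_update hbz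
    have hgc : ∀ (σ : I → Bool) (t : Bool), fA c (Function.update σ i t) = fA c σ :=
      fA_update hcz
    -- cross terms vanish
    have h1 : ∑ σ : I → Bool, cval σ i * (fA b σ * fA c σ) = 0 :=
      sum_val_mul i _ (fun σ t => by rw [hgb, hgc])
    have h3 : ∑ σ : I → Bool, cval σ i * ((fA b σ) ^ 3 * fA c σ) = 0 :=
      sum_val_mul i _ (fun σ t => by rw [hgb, hgc])
    have h4 : ∑ σ : I → Bool, cval σ i * (fA b σ * (fA c σ) ^ 3) = 0 :=
      sum_val_mul i _ (fun σ t => by rw [hgb, hgc])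
    -- sums of powers
    have S2 : ∑ σ : I → Bool, (fA a σ) ^ 2
        = (∑ σ : I → Bool, (fA b σ) ^ 2) + ∑ σ : I → Bool, (fA c σ) ^ 2 := by
      rw [← sub_eq_zero, ← Finset.sum_add_distrib, ← Finset.sum_sub_distrib]
      have hterm : ∀ σ ∈ (Finset.univ : Finset (I → Bool)),
          (fA a σ) ^ 2 - ((fA b σ) ^ 2 + (fA c σ) ^ 2)
          = 2 * (cval σ i * (fA b σ * fA c σ)) := by
        intro σ _
        rw [hdec σ]
        linear_combination (fA c σ) ^ 2 * cval_sq σ i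
      rw [Finset.sum_congr rfl hterm, ← Finset.mul_sum, h1, mul_zero]
    have S4 : ∑ σ : I → Bool, (fA a σ) ^ 4
        = (∑ σ : I → Bool, (fA b σ) ^ 4) + 6 * (∑ σ : I → Bool, (fA b σ)^2 * (fA c σ)^2)
          + ∑ σ : I → Bool, (fA c σ) ^ 4 := by
      rw [← sub_eq_zero]
      have hexp : ∀ σ ∈ (Finset.univ : Finset (I → Bool)),
          (fA a σ) ^ 4 - ((fA b σ) ^ 4 + 6 * ((fA b σ)^2 * (fA c σ)^2) + (fA c σ) ^ 4)
          = 4 * (cval σ i * ((fA b σ) ^ 3 * fA c σ)) + 4 * (cval σ i * (fA b σ * (fA c σ) ^ 3)) := by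
        intro σ _
        rw [hdec σ]
        linear_combination (6 * (fA b σ)^2 * (fA c σ)^2 + 4 * cval σ i * fA b σ * (fA c σ)^3
          + ((cval σ i)^2 + 1) * (fA c σ)^4) * cval_sq σ i
      have : ∑ σ : I → Bool, (fA a σ) ^ 4
          - ((∑ σ : I → Bool, (fA b σ) ^ 4) + 6 * (∑ σ : I → Bool, (fA b σ)^2 * (fA c σ)^2)
            + ∑ σ : I → Bool, (fA c σ) ^ 4)
          = ∑ σ : I → Bool, ((fA a σ) ^ 4
            - ((fA b σ) ^ 4 + 6 * ((fA b σ)^2 * (fA c σ)^2) + (fA c σ) ^ 4)) := by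
        rw [Finset.sum_sub_distrib, Finset.sum_add_distrib, Finset.sum_add_distrib,
          Finset.mul_sum]
      rw [this, Finset.sum_congr rfl hexp, Finset.sum_add_distrib, ← Finset.mul_sum,
        ← Finset.mul_sum, h3, h4]
      ring
    -- notation
    set N2 : ℝ := (2:ℝ) ^ Fintype.card I with hN2
    set A := ∑ σ : I → Bool, (fA b σ) ^ 2 with hA
    set B := ∑ σ : I → Bool, (fA c σ) ^ 2 with hB
    set al := ∑ σ : I → Bool, (fA b σ) ^ 4 with hal
    set ga := ∑ σ : I → Bool, (fA c σ) ^ 4 with hga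
    set be := ∑ σ : I → Bool, (fA b σ)^2 * (fA c σ)^2 with hbe
    have hAnn : 0 ≤ A := Finset.sum_nonneg fun σ _ => by positivity
    have hBnn : 0 ≤ B := Finset.sum_nonneg fun σ _ => by positivity
    have halnn : 0 ≤ al := Finset.sum_nonneg fun σ _ => by positivity
    have hgann : 0 ≤ ga := Finset.sum_nonneg fun σ _ => by positivity
    have hbenn : 0 ≤ be := Finset.sum_nonneg fun σ _ => by positivity
    have hN2pos : (0:ℝ) < N2 := by rw [hN2]; positivity
    have hcs : be ^ 2 ≤ al * ga := by
      have h := Finset.sum_mul_sq_le_sq_mul_sq (Finset.univ : Finset (I → Bool))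
        (fun σ => (fA b σ)^2) (fun σ => (fA c σ)^2)
      calc be ^ 2 = (∑ σ : I → Bool, (fA b σ)^2 * (fA c σ)^2) ^ 2 := by rw [hbe]
        _ ≤ (∑ σ : I → Bool, ((fA b σ)^2)^2) * (∑ σ : I → Bool, ((fA c σ)^2)^2) := h
        _ = al * ga := by
            rw [hal, hga]
            congr 1 <;> exact Finset.sum_congr rfl fun σ _ => by ring
    rw [S4, S2]
    rcases Nat.eq_zero_or_pos d with hd0 | hdpos
    · subst hd0
      have hc0 : ∀ S, c S = 0 := by
        intro S
        by_cases hiS : i ∈ S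
        · exact hcz S hiS
        · by_contra hne
          have := (hc_supp S hne).2
          have hA' : a (insert i S) ≠ 0 := by simpa [hcdef, hiS] using hne
          have := (ha _ hA').2
          have : (insert i S).card = 0 := Nat.le_zero.mp this
          simp [Finset.card_insert_of_notMem hiS] at this
      have hfc0 : ∀ σ : I → Bool, fA c σ = 0 := by
        intro σ; unfold fA
        exact Finset.sum_eq_zero fun S _ => by rw [hc0 S]; ring
      have hB0 : B = 0 := by rw [hB]; exact Finset.sum_eq_zero fun σ _ => by rw [hfc0]; ring
      have hga0 : ga = 0 := by rw [hga]; exact Finset.sum_eq_zero fun σ _ => by rw [hfc0]; ring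
      have hbe0 : be = 0 := by rw [hbe]; exact Finset.sum_eq_zero fun σ _ => by rw [hfc0]; ring
      have IH1 := ih 0 b hb_supp
      rw [hB0, hga0, hbe0]
      simpa using IH1
    · have IH1 := ih d b hb_supp
      have IH2 := ih (d-1) c hc_supp
      have hF1 : N2 * al ≤ 9 ^ d * A ^ 2 := IH1
      have hF2 : N2 * ga ≤ 9 ^ (d-1) * B ^ 2 := IH2
      have hdsucc : d = (d - 1) + 1 := (Nat.succ_pred_eq_of_pos hdpos).symm
      set d' := d - 1 with hd'
      have hbsq : (N2 * be) ^ 2 ≤ (3 * 9 ^ d' * A * B) ^ 2 := by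
        have e1 : (N2 * be)^2 = (N2 * N2) * be^2 := by ring
        have e2 : (N2 * al) * (N2 * ga) = (N2*N2)*(al*ga) := by ring
        calc (N2 * be)^2 = (N2*N2)*be^2 := e1
          _ ≤ (N2*N2)*(al*ga) := by
              apply mul_le_mul_of_nonneg_left hcs (by positivity)
          _ = (N2 * al) * (N2 * ga) := by ring
          _ ≤ (9 ^ d * A ^ 2) * (9 ^ d' * B ^ 2) := by
              apply mul_le_mul hF1 hF2 (mul_nonneg hN2pos.le hgann) (by positivity)
          _ = (3 * 9 ^ d' * A * B) ^ 2 := by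
              rw [hdsucc]
              ring
      have hble : N2 * be ≤ 3 * 9 ^ d' * A * B := by
        refine le_of_pow_le_pow_left₀ (by norm_num)
          (mul_nonneg (mul_nonneg (by positivity) hAnn) hBnn) hbsq
      have hexpand : (9:ℝ) ^ d * (A + B) ^ 2
          = 9 ^ d * A ^ 2 + 6 * (3 * 9^d' * A * B) + 9^d * B^2 := by
        rw [hdsucc]; ring
      have hgaB : N2 * ga ≤ 9 ^ d * B ^ 2 := by
        refine hF2.trans ?_
        apply mul_le_mul_of_nonneg_right _ (sq_nonneg B)
        exact pow_le_pow_right₀ (by norm_num) (Nat.sub_le d 1)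
      rw [hexpand]
      have : N2 * (al + 6 * be + ga) = N2 * al + 6 * (N2 * be) + N2 * ga := by ring
      rw [this]
      gcongr <;> linarith

/-! ## Combinatorial layer -/

open scoped Classical
open scoped symmDiff

variable {V : Type} [Fintype V] {m : ℕ}

/-- signed value of a matrix-entry pattern -/
noncomputable def Rv (σ : Sym2 (Fin m) → Bool) (ε : Sym2 (Fin m)) : ℝ :=
  if ε.IsDiag then 0 else cval σ ε

noncomputable def multE (E : Finset (Sym2 V)) (f : V → Fin m) (ε : Sym2 (Fin m)) : ℕ :=
  (E.filter (fun e' => Sym2.map f e' = ε)).card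

noncomputable def oddS (E : Finset (Sym2 V)) (f : V → Fin m) : Finset (Sym2 (Fin m)) :=
  Finset.univ.filter (fun ε => Odd (multE E f ε))

def ProperM (E : Finset (Sym2 V)) (f : V → Fin m) : Prop :=
  ∀ e ∈ E, ¬ (Sym2.map f e).IsDiag

noncomputable def TT (E : Finset (Sym2 V)) (σ : Sym2 (Fin m) → Bool) : ℝ :=
  ∑ f : V → Fin m, ∏ e ∈ E, Rv σ (Sym2.map f e)

lemma prod_Rv_of_proper {E : Finset (Sym2 V)} {f : V → Fin m} (hf : ProperM E f)
    (σ : Sym2 (Fin m) → Bool) :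
    ∏ e ∈ E, Rv σ (Sym2.map f e) = chi σ (oddS E f) := by
  have h1 : ∏ e ∈ E, Rv σ (Sym2.map f e) = ∏ e ∈ E, cval σ (Sym2.map f e) :=
    Finset.prod_congr rfl fun e he => by rw [Rv, if_neg (hf e he)]
  have h2 : ∏ ε ∈ (Finset.univ : Finset (Sym2 (Fin m))),
      ∏ e ∈ E.filter (fun e' => Sym2.map f e' = ε), cval σ (Sym2.map f e)
      = ∏ e ∈ E, cval σ (Sym2.map f e) :=
    Finset.prod_fiberwise_of_maps_to (fun e _ => Finset.mem_univ _) _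
  have h3 : ∀ ε : Sym2 (Fin m),
      ∏ e ∈ E.filter (fun e' => Sym2.map f e' = ε), cval σ (Sym2.map f e)
      = (cval σ ε) ^ (multE E f ε) := by
    intro ε
    rw [Finset.prod_congr rfl (fun e he => by rw [(Finset.mem_filter.mp he).2]),
      Finset.prod_const, multE]
  have h4 : ∀ ε : Sym2 (Fin m), (cval σ ε) ^ (multE E f ε)
      = if Odd (multE E f ε) then cval σ ε else 1 := by
    intro ε
    rcases Nat.even_or_odd (multE E f ε) with hev | hod
    · rw [if_neg (by simpa [Nat.not_odd_iff_even] using hev)]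
      unfold cval
      split
      · exact one_pow _
      · exact hev.neg_one_pow
    · rw [if_pos hod]
      unfold cval
      split
      · exact one_pow _
      · exact hod.neg_one_pow
  rw [h1, ← h2, Finset.prod_congr rfl (fun ε _ => (h3 ε).trans (h4 ε))]
  rw [oddS, chi, Finset.prod_filter]

lemma prod_Rv_of_improper {E : Finset (Sym2 V)} {f : V → Fin m} (hf : ¬ ProperM E f)
    (σ : Sym2 (Fin m) → Bool) :
    ∏ e ∈ E, Rv σ (Sym2.map f e) = 0 := by
  rw [ProperM] at hf
  push_neg at hf
  obtain ⟨e, he, hdiag⟩ := hf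
  exact Finset.prod_eq_zero he (by rw [Rv, if_pos hdiag])

lemma TT_eq_sum_proper (E : Finset (Sym2 V)) (σ : Sym2 (Fin m) → Bool) :
    TT E σ = ∑ f ∈ Finset.univ.filter (ProperM E (m := m)), chi σ (oddS E f) := by
  rw [TT, ← Finset.sum_filter_of_ne (fun f _ hne => by
    by_contra hproper
    exact hne (prod_Rv_of_improper hproper σ))]
  exact Finset.sum_congr rfl fun f hf =>
    prod_Rv_of_proper (Finset.mem_filter.mp hf).2 σ

noncomputable def acoef (E : Finset (Sym2 V)) (S : Finset (Sym2 (Fin m))) : ℝ :=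
  (((Finset.univ.filter (ProperM E (m := m))).filter (fun f => oddS E f = S)).card : ℝ)

lemma TT_eq_fA (E : Finset (Sym2 V)) (σ : Sym2 (Fin m) → Bool) :
    TT E σ = fA (acoef E) σ := by
  rw [TT_eq_sum_proper, fA]
  rw [← Finset.sum_fiberwise_of_maps_to
    (fun f _ => Finset.mem_univ (oddS E f)) (fun f => chi σ (oddS E f))]
  refine Finset.sum_congr rfl fun S _ => ?_
  rw [Finset.sum_congr rfl (fun f hf => by rw [(Finset.mem_filter.mp hf).2]),
    Finset.sum_const, acoef, nsmul_eq_mul]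

lemma acoef_supp (E : Finset (Sym2 V)) (S : Finset (Sym2 (Fin m))) (h : acoef E S ≠ 0) :
    S ⊆ Finset.univ ∧ S.card ≤ E.card := by
  refine ⟨Finset.subset_univ S, ?_⟩
  rw [acoef] at h
  have : ∃ f, f ∈ (Finset.univ.filter (ProperM E (m := m))) ∧ oddS E f = S := by
    have hne : ((Finset.univ.filter (ProperM E (m := m))).filter
        (fun f => oddS E f = S)).Nonempty := by
      rw [Finset.nonempty_iff_ne_empty]
      intro hemp
      rw [hemp] at h
      simp at h
    obtain ⟨f, hf⟩ := hne
    exact ⟨f, (Finset.mem_filter.mp hf).1, (Finset.mem_filter.mp hf).2⟩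
  obtain ⟨f, _, hfS⟩ := this
  have hsub : S ⊆ E.image (Sym2.map f) := by
    intro ε hε
    rw [← hfS, oddS, Finset.mem_filter] at hε
    have hodd := hε.2
    have hpos : 0 < multE E f ε := by
      rcases Nat.eq_zero_or_pos (multE E f ε) with h0 | h0
      · rw [h0] at hodd; norm_num at hodd
      · exact h0
    rw [multE, Finset.card_pos] at hpos
    obtain ⟨e, he⟩ := hpos
    rw [Finset.mem_filter] at he
    exact Finset.mem_image.mpr ⟨e, he.1, he.2⟩
  exact (Finset.card_le_card hsub).trans (Finset.card_image_le)

lemma chi_sq {I : Type} [Fintype I] [DecidableEq I] (σ : I → Bool) (S : Finset I) :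
    chi σ S ^ 2 = 1 := by
  rw [chi, ← Finset.prod_pow]
  rw [Finset.prod_congr rfl (fun i _ => cval_sq σ i)]
  exact Finset.prod_const_one

lemma chi_mul {I : Type} [Fintype I] [DecidableEq I] (σ : I → Bool) (S S' : Finset I) :
    chi σ S * chi σ S' = chi σ (S ∆ S') := by
  have hS : chi σ S = chi σ (S \ S') * chi σ (S ∩ S') := by
    rw [chi, chi, chi, ← Finset.prod_union
      (Finset.sdiff_disjoint.mono_right Finset.inter_subset_right), Finset.sdiff_union_inter]
  have hS' : chi σ S' = chi σ (S' \ S) * chi σ (S ∩ S') := by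
    rw [chi, chi, chi, ← Finset.prod_union
      (Finset.sdiff_disjoint.mono_right Finset.inter_subset_left), Finset.inter_comm,
      Finset.sdiff_union_inter]
  have hdisj : Disjoint (S \ S') (S' \ S) := by
    rw [Finset.disjoint_left]
    intro x hx hx'
    exact (Finset.mem_sdiff.mp hx').2 (Finset.mem_sdiff.mp hx).1
  have hsq : chi σ (S ∩ S') * chi σ (S ∩ S') = 1 := by
    have := chi_sq σ (S ∩ S')
    nlinarith [this]
  calc chi σ S * chi σ S'
      = (chi σ (S \ S') * chi σ (S' \ S)) * (chi σ (S ∩ S') * chi σ (S ∩ S')) := by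
        rw [hS, hS']; ring
    _ = chi σ (S \ S') * chi σ (S' \ S) := by rw [hsq, mul_one]
    _ = chi σ ((S \ S') ∪ (S' \ S)) := by rw [chi, chi, chi, Finset.prod_union hdisj]
    _ = chi σ (S ∆ S') := by rw [symmDiff_def]; rfl

noncomputable def PP (E : Finset (Sym2 V)) : Finset (V → Fin m) :=
  Finset.univ.filter (ProperM E (m := m))

noncomputable def evenP (E : Finset (Sym2 V)) : Finset (V → Fin m) :=
  (PP E).filter (fun f => oddS E f = ∅)

lemma sum_TT (E : Finset (Sym2 V)) :
    ∑ σ : Sym2 (Fin m) → Bool, TT E σ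
      = 2 ^ (Fintype.card (Sym2 (Fin m))) * ((evenP E (m := m)).card : ℝ) := by
  have h1 : ∀ σ : Sym2 (Fin m) → Bool, TT E σ = ∑ S : Finset (Sym2 (Fin m)),
      acoef E S * chi σ S := fun σ => TT_eq_fA E σ
  simp only [h1]
  rw [Finset.sum_comm]
  have h2 : ∀ S : Finset (Sym2 (Fin m)),
      ∑ σ : Sym2 (Fin m) → Bool, acoef E S * chi σ S
      = acoef E S * (if S = ∅ then (2:ℝ) ^ Fintype.card (Sym2 (Fin m)) else 0) := by
    intro S
    rw [← Finset.mul_sum, sum_chi]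
  rw [Finset.sum_congr rfl fun S _ => h2 S]
  rw [Finset.sum_eq_single ∅]
  · rw [if_pos rfl, acoef, evenP, PP]; ring
  · intro S _ hS
    rw [if_neg hS, mul_zero]
  · intro h; exact absurd (Finset.mem_univ _) h

lemma sum_TT_sq_ge (E : Finset (Sym2 V)) :
    2 ^ (Fintype.card (Sym2 (Fin m))) * (((PP E (m := m))).card : ℝ)
      ≤ ∑ σ : Sym2 (Fin m) → Bool, (TT E σ) ^ 2 := by
  classical
  set N2 : ℝ := 2 ^ (Fintype.card (Sym2 (Fin m))) with hN2
  have h1 : ∀ σ : Sym2 (Fin m) → Bool, (TT E σ)^2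
      = ∑ f ∈ PP E, ∑ g ∈ PP E, chi σ ((oddS E f) ∆ (oddS E g)) := by
    intro σ
    rw [TT_eq_sum_proper, sq, Finset.sum_mul_sum]
    exact Finset.sum_congr rfl fun f _ => Finset.sum_congr rfl fun g _ => chi_mul σ _ _
  simp only [h1]
  rw [Finset.sum_comm]
  have h2 : ∀ f ∈ PP E (m := m), N2 ≤ ∑ σ : Sym2 (Fin m) → Bool,
      ∑ g ∈ PP E, chi σ ((oddS E f) ∆ (oddS E g)) := by
    intro f hf
    rw [Finset.sum_comm]
    have hterm : ∀ g : V → Fin m, ∑ σ : Sym2 (Fin m) → Bool,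
        chi σ ((oddS E f) ∆ (oddS E g))
        = if (oddS E f) ∆ (oddS E g) = ∅ then N2 else 0 := fun g => sum_chi _
    rw [Finset.sum_congr rfl fun g _ => hterm g]
    have hdiag : (if (oddS E f) ∆ (oddS E f) = ∅ then N2 else 0) = N2 := by
      rw [if_pos]
      rw [← Finset.bot_eq_empty, symmDiff_eq_bot]
    calc N2 = (if (oddS E f) ∆ (oddS E f) = ∅ then N2 else 0) := hdiag.symm
      _ ≤ ∑ g ∈ PP E, (if (oddS E f) ∆ (oddS E g) = ∅ then N2 else 0) := by
          refine Finset.single_le_sum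
            (f := fun g => if (oddS E f) ∆ (oddS E g) = ∅ then N2 else 0)
            (fun g _ => ?_) hf
          split
          · rw [hN2]; positivity
          · exact le_refl 0
  calc N2 * ((PP E (m := m)).card : ℝ)
      = ∑ _f ∈ PP E (m := m), N2 := by rw [Finset.sum_const, nsmul_eq_mul]; ring
    _ ≤ _ := Finset.sum_le_sum h2

lemma card_proper_le (E : Finset (Sym2 V)) (hTnn : ∀ σ : Sym2 (Fin m) → Bool, 0 ≤ TT E σ) :
    ((PP E (m := m)).card : ℝ) ≤ 9 ^ (E.card) * (((evenP E (m := m)).card : ℝ)) ^ 2 := by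
  classical
  set N2 : ℝ := 2 ^ (Fintype.card (Sym2 (Fin m))) with hN2
  have hN2pos : 0 < N2 := by rw [hN2]; positivity
  set X := ∑ σ : Sym2 (Fin m) → Bool, TT E σ with hX
  set Y := ∑ σ : Sym2 (Fin m) → Bool, (TT E σ)^2 with hY
  set Z := ∑ σ : Sym2 (Fin m) → Bool, (TT E σ)^4 with hZ
  set C3 := ∑ σ : Sym2 (Fin m) → Bool, (TT E σ)^3 with hC3
  have hYnn : 0 ≤ Y := Finset.sum_nonneg fun σ _ => sq_nonneg _
  have hXnn : 0 ≤ X := Finset.sum_nonneg fun σ _ => hTnn σ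
  have hZnn : 0 ≤ Z := Finset.sum_nonneg fun σ _ => by positivity
  have hC3nn : 0 ≤ C3 := Finset.sum_nonneg fun σ _ => pow_nonneg (hTnn σ) 3
  -- Cauchy-Schwarz 1 : Y^2 ≤ X * C3
  have cs1 : Y ^ 2 ≤ X * C3 := by
    have h := Finset.sum_mul_sq_le_sq_mul_sq (Finset.univ : Finset (Sym2 (Fin m) → Bool))
      (fun σ => Real.sqrt (TT E σ)) (fun σ => TT E σ * Real.sqrt (TT E σ))
    have e1 : ∀ σ : Sym2 (Fin m) → Bool,
        Real.sqrt (TT E σ) * (TT E σ * Real.sqrt (TT E σ)) = (TT E σ)^2 := by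
      intro σ
      have : Real.sqrt (TT E σ) * Real.sqrt (TT E σ) = TT E σ := Real.mul_self_sqrt (hTnn σ)
      calc Real.sqrt (TT E σ) * (TT E σ * Real.sqrt (TT E σ))
          = (Real.sqrt (TT E σ) * Real.sqrt (TT E σ)) * TT E σ := by ring
        _ = TT E σ * TT E σ := by rw [this]
        _ = (TT E σ)^2 := by ring
    have e2 : ∀ σ : Sym2 (Fin m) → Bool, (Real.sqrt (TT E σ))^2 = TT E σ :=
      fun σ => Real.sq_sqrt (hTnn σ)
    have e3 : ∀ σ : Sym2 (Fin m) → Bool,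
        (TT E σ * Real.sqrt (TT E σ))^2 = (TT E σ)^3 := by
      intro σ
      calc (TT E σ * Real.sqrt (TT E σ))^2 = (TT E σ)^2 * (Real.sqrt (TT E σ))^2 := by ring
        _ = (TT E σ)^2 * TT E σ := by rw [e2]
        _ = (TT E σ)^3 := by ring
    rw [Finset.sum_congr rfl (fun σ _ => e1 σ), Finset.sum_congr rfl (fun σ _ => e2 σ),
      Finset.sum_congr rfl (fun σ _ => e3 σ)] at h
    exact h
  -- Cauchy-Schwarz 2 : C3^2 ≤ Y * Z
  have cs2 : C3 ^ 2 ≤ Y * Z := by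
    have h := Finset.sum_mul_sq_le_sq_mul_sq (Finset.univ : Finset (Sym2 (Fin m) → Bool))
      (fun σ => TT E σ) (fun σ => (TT E σ)^2)
    have e1 : ∀ σ : Sym2 (Fin m) → Bool, TT E σ * (TT E σ)^2 = (TT E σ)^3 := fun σ => by ring
    have e3 : ∀ σ : Sym2 (Fin m) → Bool, ((TT E σ)^2)^2 = (TT E σ)^4 := fun σ => by ring
    rw [Finset.sum_congr rfl (fun σ _ => e1 σ), Finset.sum_congr rfl (fun σ _ => e3 σ)] at h
    exact h
  -- Bonami
  have hbon : N2 * Z ≤ 9 ^ (E.card) * Y ^ 2 := by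
    have h := bonami_aux (Finset.univ : Finset (Sym2 (Fin m))) (E.card) (acoef E)
      (fun S hS => acoef_supp E S hS)
    simp only [← TT_eq_fA] at h
    exact h
  -- combine
  have hYlb : N2 * ((PP E (m := m)).card : ℝ) ≤ Y := sum_TT_sq_ge E
  have hXval : X = N2 * ((evenP E (m := m)).card : ℝ) := sum_TT E
  rcases eq_or_lt_of_le hYnn with hY0 | hYpos
  · -- Y = 0 : then PP empty
    have : N2 * ((PP E (m := m)).card : ℝ) ≤ 0 := by rw [hY0]; exact hYlb
    have hPP0 : ((PP E (m := m)).card : ℝ) ≤ 0 := by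
      by_contra hpos
      push_neg at hpos
      nlinarith
    have : ((PP E (m := m)).card : ℝ) = 0 := le_antisymm hPP0 (Nat.cast_nonneg _)
    rw [this]
    positivity
  · have key : N2 * Y ≤ 9 ^ (E.card) * X ^ 2 := by
      have h1 : Y^4 ≤ X^2 * (Y * Z) := by
        calc Y^4 = (Y^2)^2 := by ring
          _ ≤ (X * C3)^2 := by
              apply pow_le_pow_left₀ (sq_nonneg Y) cs1
          _ = X^2 * C3^2 := by ring
          _ ≤ X^2 * (Y * Z) := by
              apply mul_le_mul_of_nonneg_left cs2 (sq_nonneg X)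
      have h2 : (N2 * Y) * Y^3 ≤ (9 ^ (E.card) * X^2) * Y^3 := by
        calc (N2 * Y) * Y^3 = N2 * Y^4 := by ring
          _ ≤ N2 * (X^2 * (Y * Z)) := by
              apply mul_le_mul_of_nonneg_left h1 hN2pos.le
          _ = X^2 * Y * (N2 * Z) := by ring
          _ ≤ X^2 * Y * (9 ^ (E.card) * Y^2) := by
              apply mul_le_mul_of_nonneg_left hbon
              exact mul_nonneg (sq_nonneg X) hYnn
          _ = (9 ^ (E.card) * X^2) * Y^3 := by ring
      exact le_of_mul_le_mul_right h2 (by positivity)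
    have hfin : N2 * (N2 * ((PP E (m := m)).card : ℝ))
        ≤ 9 ^ (E.card) * (N2 * ((evenP E (m := m)).card : ℝ))^2 := by
      calc N2 * (N2 * ((PP E (m := m)).card : ℝ)) ≤ N2 * Y := by
            apply mul_le_mul_of_nonneg_left hYlb hN2pos.le
        _ ≤ 9 ^ (E.card) * X ^ 2 := key
        _ = 9 ^ (E.card) * (N2 * ((evenP E (m := m)).card : ℝ))^2 := by rw [hXval]
    have h2 : N2^2 * ((PP E (m := m)).card : ℝ)
        ≤ N2^2 * (9 ^ (E.card) * (((evenP E (m := m)).card : ℝ))^2) := by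
      calc N2^2 * ((PP E (m := m)).card : ℝ) = N2 * (N2 * ((PP E (m := m)).card : ℝ)) := by ring
        _ ≤ 9 ^ (E.card) * (N2 * ((evenP E (m := m)).card : ℝ))^2 := hfin
        _ = N2^2 * (9 ^ (E.card) * (((evenP E (m := m)).card : ℝ))^2) := by ring
    exact le_of_mul_le_mul_left h2 (by positivity)

lemma inj_le_PP (E : Finset (Sym2 V)) (hnd : ∀ e ∈ E, ¬ e.IsDiag) :
    m.descFactorial (Fintype.card V) ≤ (PP E (m := m)).card := by
  have hmem : ∀ e : V ↪ Fin m, ⇑e ∈ PP E (m := m) := by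
    intro e
    rw [PP, Finset.mem_filter]
    refine ⟨Finset.mem_univ _, ?_⟩
    intro ε hε
    induction ε with
    | _ a b =>
      rw [Sym2.map_pair_eq, Sym2.mk_isDiag_iff]
      intro hab
      exact (hnd _ hε) (Sym2.mk_isDiag_iff.mpr (e.injective hab))
  have hcard : Fintype.card (V ↪ Fin m) = m.descFactorial (Fintype.card V) := by
    rw [Fintype.card_embedding_eq, Fintype.card_fin]
  rw [← hcard, ← Fintype.card_coe (PP E (m := m))]
  exact Fintype.card_le_of_injective (fun e => ⟨⇑e, hmem e⟩)
    (fun e₁ e₂ h => by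
      apply DFunLike.coe_injective
      exact congrArg Subtype.val h)

lemma evenP_card_le (E : Finset (Sym2 V)) (K : ℕ) (hK : K ≤ m)
    (hsmall : ∀ f ∈ evenP E (m := m), (Finset.univ.image f).card ≤ K) :
    (evenP E (m := m)).card ≤ m.choose K * K ^ (Fintype.card V) := by
  have hsub : evenP E (m := m) ⊆
      ((Finset.univ : Finset (Fin m)).powersetCard K).biUnion
        (fun A => Fintype.piFinset (fun _ : V => A)) := by
    intro f hf
    obtain ⟨A, hA1, hA2⟩ := Finset.exists_superset_card_eq (hsmall f hf)
      (by rw [Fintype.card_fin]; exact hK)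
    rw [Finset.mem_biUnion]
    refine ⟨A, ?_, ?_⟩
    · rw [Finset.mem_powersetCard]
      exact ⟨Finset.subset_univ A, hA2⟩
    · rw [Fintype.mem_piFinset]
      intro x
      exact hA1 (Finset.mem_image_of_mem f (Finset.mem_univ x))
  calc (evenP E (m := m)).card
      ≤ (((Finset.univ : Finset (Fin m)).powersetCard K).biUnion
          (fun A => Fintype.piFinset (fun _ : V => A))).card := Finset.card_le_card hsub
    _ ≤ ∑ A ∈ (Finset.univ : Finset (Fin m)).powersetCard K,
          (Fintype.piFinset (fun _ : V => A)).card := Finset.card_biUnion_le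
    _ = ∑ A ∈ (Finset.univ : Finset (Fin m)).powersetCard K, K ^ (Fintype.card V) := by
        refine Finset.sum_congr rfl fun A hA => ?_
        rw [Fintype.card_piFinset]
        rw [Finset.mem_powersetCard] at hA
        rw [Finset.prod_congr rfl (fun _ _ => hA.2), Finset.prod_const, Finset.card_univ]
    _ = m.choose K * K ^ (Fintype.card V) := by
        rw [Finset.sum_const, Finset.card_powersetCard, Finset.card_univ, Fintype.card_fin,
          smul_eq_mul]

lemma main_discrete (E : Finset (Sym2 V)) (hnd : ∀ e ∈ E, ¬ e.IsDiag)
    (hv : 1 ≤ Fintype.card V)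
    (hpos : ∀ (m : ℕ), 0 < m → ∀ (σ : Sym2 (Fin m) → Bool), 0 ≤ TT E σ) :
    ∃ (m : ℕ) (φ : V → Fin m), ProperM E φ ∧ oddS E φ = ∅ ∧
      Fintype.card V ≤ 2 * (Finset.univ.image φ).card := by
  set v := Fintype.card V with hvdef
  set d := E.card with hddef
  set C := 9 ^ d * v ^ (2 * v) with hCdef
  set M := (2 * v * (C + 1)) ^ 2 with hMdef
  have hC1 : 1 ≤ C := by
    rw [hCdef]
    have : 1 ≤ 9 ^ d := Nat.one_le_pow _ _ (by norm_num)
    have : 1 ≤ v ^ (2 * v) := Nat.one_le_pow _ _ hv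
    nlinarith
  have hM2v : 2 * v ≤ M := by
    rw [hMdef]
    have h1 : 2 * v ≤ 2 * v * (C + 1) := Nat.le_mul_of_pos_right _ (by omega)
    have h2 : 2 * v * (C + 1) ≤ (2 * v * (C + 1)) ^ 2 :=
      Nat.le_self_pow (by norm_num) _
    omega
  have hMpos : 0 < M := by omega
  have h2vC : 2 ^ v ≤ 4 * (C + 1) := by
    rcases Nat.lt_or_ge v 2 with hv2 | hv2
    · interval_cases v
      · omega
    · have h1 : 2 ^ v ≤ v ^ v := Nat.pow_le_pow_left hv2 v
      have h2 : v ^ v ≤ v ^ (2 * v) := Nat.pow_le_pow_right (by omega) (by omega)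
      have h3 : v ^ (2 * v) ≤ C := by
        rw [hCdef]
        exact Nat.le_mul_of_pos_left _ (Nat.one_le_pow _ _ (by norm_num))
      omega
  have hM2vC : 2 ^ v * C + 1 ≤ M := by
    have h1 : 4 * (C + 1) * (C + 1) ≤ M := by
      rw [hMdef]
      have h4 : 4 ≤ 4 * v * v := by nlinarith
      calc 4 * (C + 1) * (C + 1) ≤ (4 * v * v) * ((C+1) * (C+1)) := by nlinarith
        _ = (2 * v * (C + 1)) ^ 2 := by ring
    have h2 : 2 ^ v * (C + 1) ≤ 4 * (C + 1) * (C + 1) :=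
      Nat.mul_le_mul_right _ h2vC
    have h3 : 2 ^ v * (C + 1) = 2 ^ v * C + 2 ^ v := by ring
    have h4 : 1 ≤ 2 ^ v := Nat.one_le_two_pow
    omega
  by_contra hcon
  push_neg at hcon
  -- every even proper map into Fin M has small image
  set K := (v - 1) / 2 with hKdef
  have hsmall : ∀ f ∈ evenP E (m := M), (Finset.univ.image f).card ≤ K := by
    intro f hf
    rw [evenP, Finset.mem_filter, PP, Finset.mem_filter] at hf
    have := hcon M f hf.1.2 hf.2
    omega
  have hup : (evenP E (m := M)).card ≤ M ^ K * v ^ v := by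
    have h1 := evenP_card_le E K (by omega) hsmall
    have h2 : M.choose K ≤ M ^ K := Nat.choose_le_pow M K
    have h3 : K ^ v ≤ v ^ v := Nat.pow_le_pow_left (by omega) v
    calc (evenP E (m := M)).card ≤ M.choose K * K ^ v := h1
      _ ≤ M ^ K * v ^ v := Nat.mul_le_mul h2 h3
  have hlow : M.descFactorial v ≤ (PP E (m := M)).card := inj_le_PP E hnd
  have hmid : ((PP E (m := M)).card : ℝ) ≤ 9 ^ d * (((evenP E (m := M)).card : ℝ)) ^ 2 :=
    card_proper_le E (hpos M hMpos)
  have hmidn : (PP E (m := M)).card ≤ 9 ^ d * (evenP E (m := M)).card ^ 2 := by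
    have := hmid
    exact_mod_cast (by push_cast; exact this : ((PP E (m := M)).card : ℝ)
      ≤ ((9 ^ d * (evenP E (m := M)).card ^ 2 : ℕ) : ℝ))
  -- combine everything in ℕ
  have hchain : (M - v) ^ v ≤ C * M ^ (v - 1) := by
    have e1 : (M - v) ^ v ≤ (M + 1 - v) ^ v := Nat.pow_le_pow_left (by omega) v
    have e2 : (M + 1 - v) ^ v ≤ M.descFactorial v := Nat.pow_sub_le_descFactorial M v
    have e3 : 9 ^ d * (evenP E (m := M)).card ^ 2 ≤ 9 ^ d * (M ^ K * v ^ v) ^ 2 :=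
      Nat.mul_le_mul_left _ (Nat.pow_le_pow_left hup 2)
    have e4 : 9 ^ d * (M ^ K * v ^ v) ^ 2 = C * M ^ (2 * K) := by
      rw [hCdef]
      ring
    have e5 : M ^ (2 * K) ≤ M ^ (v - 1) := Nat.pow_le_pow_right (by omega) (by omega)
    calc (M - v) ^ v ≤ M.descFactorial v := e1.trans e2
      _ ≤ (PP E (m := M)).card := hlow
      _ ≤ 9 ^ d * (evenP E (m := M)).card ^ 2 := hmidn
      _ ≤ 9 ^ d * (M ^ K * v ^ v) ^ 2 := e3
      _ = C * M ^ (2 * K) := e4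
      _ ≤ C * M ^ (v - 1) := Nat.mul_le_mul_left _ e5
  -- but (M - v)^v > C * M^(v-1), contradiction
  have hgt : C * M ^ (v - 1) < (M - v) ^ v := by
    have hMv1 : 0 < M ^ (v - 1) := Nat.pow_pos hMpos
    have h1 : M ^ v = M * M ^ (v - 1) := by
      conv_lhs => rw [show v = 1 + (v - 1) by omega]
      rw [pow_add, pow_one]
    have h2 : M ^ v ≤ (2 * (M - v)) ^ v := Nat.pow_le_pow_left (by omega) v
    have h3 : (2 * (M - v)) ^ v = 2 ^ v * (M - v) ^ v := by rw [mul_pow]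
    have h4 : 2 ^ v * (C * M ^ (v - 1)) < M * M ^ (v - 1) := by
      have : 2 ^ v * C + 1 ≤ M := hM2vC
      calc 2 ^ v * (C * M ^ (v - 1)) = (2 ^ v * C) * M ^ (v - 1) := by ring
        _ < (2 ^ v * C + 1) * M ^ (v - 1) := by
            exact (Nat.mul_lt_mul_right hMv1).mpr (by omega)
        _ ≤ M * M ^ (v - 1) := Nat.mul_le_mul_right _ this
    have h5 : 2 ^ v * (C * M ^ (v - 1)) < 2 ^ v * (M - v) ^ v := by
      calc 2 ^ v * (C * M ^ (v - 1)) < M * M ^ (v - 1) := h4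
        _ = M ^ v := h1.symm
        _ ≤ 2 ^ v * (M - v) ^ v := by rw [← h3]; exact h2
    exact Nat.lt_of_mul_lt_mul_left h5
  omega


/-! ## Measure-theoretic layer -/

noncomputable def iota (m : ℕ) (hm : 0 < m) : UI → Fin m :=
  fun x => ⟨min ⌊(x : ℝ) * m⌋₊ (m - 1), by omega⟩

lemma iota_pre_lt (m : ℕ) (hm : 0 < m) (i : Fin m) (hi : (i : ℕ) < m - 1) :
    iota m hm ⁻¹' {i} = (Subtype.val : UI → ℝ) ⁻¹' (Set.Ico ((i:ℝ)/m) (((i:ℝ)+1)/m)) := by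
  ext x
  have hx0 : (0:ℝ) ≤ (x:ℝ) := x.2.1
  have hm0 : (0:ℝ) < (m:ℝ) := by exact_mod_cast hm
  simp only [Set.mem_preimage, Set.mem_singleton_iff, Set.mem_Ico, Fin.ext_iff, iota]
  constructor
  · intro hmin
    have hfl : ⌊(x:ℝ) * m⌋₊ = (i : ℕ) := by omega
    rw [Nat.floor_eq_iff (by positivity)] at hfl
    constructor
    · rw [div_le_iff₀ hm0]; exact hfl.1
    · rw [lt_div_iff₀ hm0]; exact_mod_cast hfl.2
  · intro ⟨h1, h2⟩
    have hfl : ⌊(x:ℝ) * m⌋₊ = (i : ℕ) := by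
      rw [Nat.floor_eq_iff (by positivity)]
      constructor
      · rw [div_le_iff₀ hm0] at h1; exact h1
      · rw [lt_div_iff₀ hm0] at h2; exact_mod_cast h2
    omega

lemma iota_pre_last (m : ℕ) (hm : 0 < m) (i : Fin m) (hi : m - 1 ≤ (i : ℕ)) :
    iota m hm ⁻¹' {i} = (Subtype.val : UI → ℝ) ⁻¹' (Set.Icc ((i:ℝ)/m) 1) := by
  have hieq : (i : ℕ) = m - 1 := by have := i.2; omega
  ext x
  have hx0 : (0:ℝ) ≤ (x:ℝ) := x.2.1
  have hx1 : (x:ℝ) ≤ 1 := x.2.2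
  have hm0 : (0:ℝ) < (m:ℝ) := by exact_mod_cast hm
  simp only [Set.mem_preimage, Set.mem_singleton_iff, Set.mem_Icc, Fin.ext_iff, iota]
  constructor
  · intro hmin
    refine ⟨?_, hx1⟩
    have hfl : (m - 1 : ℕ) ≤ ⌊(x:ℝ) * m⌋₊ := by omega
    have : ((m - 1 : ℕ) : ℝ) ≤ (x:ℝ) * m := by
      calc ((m - 1 : ℕ) : ℝ) ≤ (⌊(x:ℝ) * m⌋₊ : ℝ) := by exact_mod_cast hfl
        _ ≤ (x:ℝ) * m := Nat.floor_le (by positivity)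
    rw [div_le_iff₀ hm0, hieq]
    exact_mod_cast this
  · intro ⟨h1, _⟩
    rw [div_le_iff₀ hm0] at h1
    have : (i : ℕ) ≤ ⌊(x:ℝ) * m⌋₊ := Nat.le_floor h1
    omega

lemma iota_measurable (m : ℕ) (hm : 0 < m) : Measurable (iota m hm) := by
  apply measurable_to_countable'
  intro i
  rcases lt_or_ge (i : ℕ) (m - 1) with hi | hi
  · rw [iota_pre_lt m hm i hi]
    exact measurable_subtype_coe measurableSet_Ico
  · rw [iota_pre_last m hm i hi]
    exact measurable_subtype_coe measurableSet_Icc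

lemma iota_fiber (m : ℕ) (hm : 0 < m) (i : Fin m) :
    (volume : Measure UI) (iota m hm ⁻¹' {i}) = ENNReal.ofReal (1 / m) := by
  have hemb : MeasurableEmbedding (Subtype.val : UI → ℝ) :=
    MeasurableEmbedding.subtype_coe measurableSet_Icc
  have hm0 : (0:ℝ) < (m:ℝ) := by exact_mod_cast hm
  have him : (i : ℕ) < m := i.2
  have hvol : (volume : Measure UI) = Measure.comap Subtype.val volume := rfl
  rcases lt_or_ge (i : ℕ) (m - 1) with hi | hi
  · rw [iota_pre_lt m hm i hi, hvol, hemb.comap_apply, Subtype.image_preimage_coe]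
    have hsub : Set.Ico ((i:ℝ)/m) (((i:ℝ)+1)/m) ⊆ Set.Icc (0:ℝ) 1 := by
      intro r hr
      obtain ⟨h1, h2⟩ := hr
      constructor
      · exact le_trans (by positivity) h1
      · have : ((i:ℝ)+1)/m ≤ 1 := by
          rw [div_le_one hm0]
          have : (i : ℕ) + 1 ≤ m := by omega
          exact_mod_cast this
        linarith
    rw [Set.inter_eq_self_of_subset_right hsub, Real.volume_Ico]
    congr 1
    field_simp
    ring
  · rw [iota_pre_last m hm i hi, hvol, hemb.comap_apply, Subtype.image_preimage_coe]
    have hieq : (i : ℕ) = m - 1 := by omega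
    have hsub : Set.Icc ((i:ℝ)/m) 1 ⊆ Set.Icc (0:ℝ) 1 := by
      intro r hr
      exact ⟨le_trans (by positivity) hr.1, hr.2⟩
    rw [Set.inter_eq_self_of_subset_right hsub, Real.volume_Icc]
    congr 1
    have : ((i:ℕ) : ℝ) = (m:ℝ) - 1 := by
      rw [hieq, Nat.cast_sub hm]
      norm_num
    rw [this]
    rw [show (1:ℝ) - ((m:ℝ)-1)/m = 1/m by field_simp; ring]

lemma volume_pre_singleton (m : ℕ) (hm : 0 < m) (f : V → Fin m) :
    (volume : Measure (V → UI)) ((fun p : V → UI => fun v => iota m hm (p v)) ⁻¹' {f})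
      = ENNReal.ofReal (1 / m) ^ (Fintype.card V) := by
  have hset : (fun p : V → UI => fun v => iota m hm (p v)) ⁻¹' {f}
      = Set.pi Set.univ (fun v => iota m hm ⁻¹' {f v}) := by
    ext p
    simp only [Set.mem_preimage, Set.mem_singleton_iff, Set.mem_pi, Set.mem_univ, true_implies,
      funext_iff]
  rw [hset, volume_pi_pi]
  rw [Finset.prod_congr rfl fun v _ => iota_fiber m hm (f v), Finset.prod_const,
    Finset.card_univ]

lemma sym2_map_out {α β : Type} (f : α → β) (e : Sym2 α) :
    Sym2.map f e = s(f (Quot.out e).1, f (Quot.out e).2) := by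
  have h : s((Quot.out e).1, (Quot.out e).2) = e := by
    exact Quot.out_eq e
  conv_lhs => rw [← h]
  exact Sym2.map_pair_eq f _ _

lemma homDensity_step (m : ℕ) (hm : 0 < m) (σ : Sym2 (Fin m) → Bool)
    (E : Finset (Sym2 V)) :
    ∫ p : V → UI, ∏ e ∈ E,
        (fun x y : UI => Rv σ s(iota m hm x, iota m hm y)) (p (Quot.out e).1) (p (Quot.out e).2)
      = ((1:ℝ)/m) ^ (Fintype.card V) * TT E σ := by
  set Φ : (V → UI) → (V → Fin m) := fun p v => iota m hm (p v) with hPhidef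
  set F : (V → Fin m) → ℝ :=
    fun f => ∏ e ∈ E, Rv σ s(f (Quot.out e).1, f (Quot.out e).2) with hFdef
  have hPhi : Measurable Φ :=
    measurable_pi_lambda _ fun v => (iota_measurable m hm).comp (measurable_pi_apply v)
  haveI : IsProbabilityMeasure (Measure.map Φ (volume : Measure (V → UI))) :=
    Measure.isProbabilityMeasure_map hPhi.aemeasurable
  have hint : ∫ p : V → UI, F (Φ p) = ∫ f, F f ∂(Measure.map Φ volume) :=
    (integral_map hPhi.aemeasurable ((measurable_of_countable F).aestronglyMeasurable)).symm
  have hstep : ∫ p : V → UI, ∏ e ∈ E,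
      (fun x y : UI => Rv σ s(iota m hm x, iota m hm y)) (p (Quot.out e).1) (p (Quot.out e).2)
      = ∫ p : V → UI, F (Φ p) := rfl
  rw [hstep, hint, integral_fintype (Integrable.of_finite)]
  have hsing : ∀ f : V → Fin m,
      (Measure.map Φ volume) {f} = ENNReal.ofReal (1 / m) ^ (Fintype.card V) := by
    intro f
    rw [Measure.map_apply hPhi (measurableSet_singleton f)]
    exact volume_pre_singleton m hm f
  have htoreal : ∀ f : V → Fin m,
      ((Measure.map Φ volume) {f}).toReal = ((1:ℝ)/m) ^ (Fintype.card V) := by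
    intro f
    rw [hsing f, ENNReal.toReal_pow, ENNReal.toReal_ofReal (by positivity)]
  rw [Finset.sum_congr rfl fun f _ => by rw [Measure.real, htoreal f, smul_eq_mul]]
  rw [← Finset.mul_sum]
  congr 1
  rw [TT]
  refine Finset.sum_congr rfl fun f _ => ?_
  refine Finset.prod_congr rfl fun e _ => ?_
  rw [sym2_map_out f e]

lemma isKernel_step (m : ℕ) (hm : 0 < m) (σ : Sym2 (Fin m) → Bool) :
    IsKernel (fun x y : UI => Rv σ s(iota m hm x, iota m hm y)) := by
  refine ⟨?_, ?_, 1, ?_⟩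
  · have : Function.uncurry (fun x y : UI => Rv σ s(iota m hm x, iota m hm y))
        = (fun z : Fin m × Fin m => Rv σ s(z.1, z.2))
          ∘ (fun q : UI × UI => (iota m hm q.1, iota m hm q.2)) := rfl
    rw [this]
    exact (measurable_of_countable _).comp
      (((iota_measurable m hm).comp measurable_fst).prodMk
        ((iota_measurable m hm).comp measurable_snd))
  · intro x y
    show Rv σ s(iota m hm x, iota m hm y) = Rv σ s(iota m hm y, iota m hm x)
    rw [Sym2.eq_swap]
  · intro x y
    show |Rv σ s(iota m hm x, iota m hm y)| ≤ 1
    unfold Rv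
    split
    · norm_num
    · unfold cval
      split <;> norm_num

lemma edgeFinset_instance_irrel {G : SimpleGraph V} (i1 i2 : Fintype G.edgeSet) :
    @SimpleGraph.edgeFinset V G i1 = @SimpleGraph.edgeFinset V G i2 := by
  ext e
  rw [@SimpleGraph.mem_edgeFinset _ _ _ i1, @SimpleGraph.mem_edgeFinset _ _ _ i2]

lemma TT_nonneg (G : SimpleGraph V) (hG : Positive G) (inst : Fintype G.edgeSet)
    (m : ℕ) (hm : 0 < m) (σ : Sym2 (Fin m) → Bool) :
    0 ≤ TT (@SimpleGraph.edgeFinset V G inst) σ := by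
  have h := hG _ (isKernel_step m hm σ)
  unfold homDensity at h
  rw [edgeFinset_instance_irrel _ inst] at h
  rw [homDensity_step m hm σ _] at h
  have hc : (0:ℝ) < ((1:ℝ)/m) ^ (Fintype.card V) := by
    have hm0 : (0:ℝ) < (m:ℝ) := by exact_mod_cast hm
    positivity
  have h2 := div_nonneg h hc.le
  rw [mul_div_cancel_left₀ _ (ne_of_gt hc)] at h2
  exact h2

/-! ## Transport along injections and the final theorem -/

lemma filter_ext {α : Type} (s : Finset α) (p q : α → Prop) {instp : DecidablePred p}
    {instq : DecidablePred q} (h : ∀ x ∈ s, p x ↔ q x) :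
    @Finset.filter α p instp s = @Finset.filter α q instq s := by
  ext x
  simp only [Finset.mem_filter]
  exact ⟨fun ⟨h1, h2⟩ => ⟨h1, (h x h1).mp h2⟩, fun ⟨h1, h2⟩ => ⟨h1, (h x h1).mpr h2⟩⟩

lemma filter_map_comp_inj {α β : Type} (E : Finset (Sym2 V)) (u : V → α) (w : α → β)
    (hw : Function.Injective w) (δ : Sym2 α) :
    E.filter (fun e' => Sym2.map (w ∘ u) e' = Sym2.map w δ)
      = E.filter (fun e' => Sym2.map u e' = δ) := by
  apply Finset.filter_congr
  intro e' _
  rw [← Sym2.map_map]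
  exact ⟨fun h => Sym2.map.injective hw h, fun h => congrArg _ h⟩

lemma even_comp {α β : Type} (E : Finset (Sym2 V)) (u : V → α) (w : α ↪ β)
    (hEven : ∀ δ : Sym2 α, Even ((E.filter (fun e' => Sym2.map u e' = δ)).card))
    (ε : Sym2 β) :
    Even ((E.filter (fun e' => Sym2.map (⇑w ∘ u) e' = ε)).card) := by
  by_cases hex : ∃ δ : Sym2 α, Sym2.map (⇑w) δ = ε
  · obtain ⟨δ, rfl⟩ := hex
    rw [filter_map_comp_inj E u (⇑w) w.injective δ]
    exact hEven δ
  · have hempty : E.filter (fun e' => Sym2.map (⇑w ∘ u) e' = ε) = ∅ := by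
      rw [Finset.filter_eq_empty_iff]
      intro e' _
      intro hcontr
      exact hex ⟨Sym2.map u e', by rw [Sym2.map_map]; exact hcontr⟩
    rw [hempty]
    simp

theorem positive_implies_even_hom_large_image' {V : Type} [Fintype V] (G : SimpleGraph V)
    (h : Positive G) :
    ∀ n : ℕ, Fintype.card V ≤ n →
      ∃ f : G →g (⊤ : SimpleGraph (Fin n)), IsEvenHom f ∧
        Fintype.card V ≤ 2 * (Finset.univ.image ⇑f).card := by
  intro n hn
  rcases Nat.eq_zero_or_pos (Fintype.card V) with hv0 | hv1
  · -- V is empty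
    haveI hVempty : IsEmpty V := Fintype.card_eq_zero_iff.mp hv0
    haveI : IsEmpty (Sym2 V) := ⟨fun e => Sym2.ind (fun x _ => isEmptyElim x) e⟩
    have hcard0 : ∀ (s : Finset (Sym2 V)), s.card = 0 :=
      fun s => Finset.card_eq_zero.mpr (Finset.eq_empty_of_isEmpty s)
    refine ⟨⟨fun x => isEmptyElim x, fun {a b} _ => isEmptyElim a⟩, ?_, ?_⟩
    · intro ε _
      rw [hcard0]
      exact Even.zero
    · omega
  · -- main case
    set E : Finset (Sym2 V) := G.edgeFinset with hEdef
    have hEE : ∀ (i : Fintype G.edgeSet), @SimpleGraph.edgeFinset V G i = E :=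
      fun i => edgeFinset_instance_irrel i _
    have hnd : ∀ e ∈ E, ¬ e.IsDiag := by
      intro e he
      exact SimpleGraph.not_isDiag_of_mem_edgeSet G (SimpleGraph.mem_edgeFinset.mp he)
    have hpos : ∀ (m : ℕ), 0 < m → ∀ (σ : Sym2 (Fin m) → Bool), 0 ≤ TT E σ :=
      fun m hm σ => TT_nonneg G h _ m hm σ
    obtain ⟨M, φ, hproper, hodd, himg⟩ := main_discrete E hnd hv1 hpos
    have hEvenφ : ∀ ε : Sym2 (Fin M),
        Even ((E.filter (fun e' => Sym2.map φ e' = ε)).card) := by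
      intro ε
      have hno : ¬ Odd (multE E φ ε) := by
        intro hoddε
        have hmem : ε ∈ oddS E φ := Finset.mem_filter.mpr ⟨Finset.mem_univ _, hoddε⟩
        rw [hodd] at hmem
        exact absurd hmem (Finset.notMem_empty ε)
      rw [Nat.not_odd_iff_even, multE] at hno
      exact hno
    set A : Finset (Fin M) := Finset.univ.image φ with hAdef
    have hAcard : A.card ≤ Fintype.card V := by
      calc A.card ≤ (Finset.univ : Finset V).card := Finset.card_image_le
        _ = Fintype.card V := Finset.card_univ
    have hcardle : Fintype.card ↥A ≤ Fintype.card (Fin n) := by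
      rw [Fintype.card_coe, Fintype.card_fin]
      omega
    obtain ⟨emb⟩ := Function.Embedding.nonempty_of_card_le hcardle
    set φ' : V → ↥A := fun x => ⟨φ x, Finset.mem_image_of_mem φ (Finset.mem_univ x)⟩
      with hφ'def
    have hproper' : ∀ {a b : V}, G.Adj a b → φ a ≠ φ b := by
      intro a b hab
      have he : s(a, b) ∈ E := SimpleGraph.mem_edgeFinset.mpr ((SimpleGraph.mem_edgeSet G).mpr hab)
      have hd := hproper _ he
      rw [Sym2.map_pair_eq, Sym2.mk_isDiag_iff] at hd
      exact hd
    refine ⟨⟨⇑emb ∘ φ', fun {a b} hab => ?_⟩, ?_, ?_⟩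
    · rw [SimpleGraph.top_adj]
      intro hEq
      exact hproper' hab (congrArg Subtype.val (emb.injective hEq))
    · -- evenness
      intro ε _
      have hEvenφ' : ∀ δ : Sym2 ↥A,
          Even ((E.filter (fun e' => Sym2.map φ' e' = δ)).card) := by
        intro δ
        have h0 : Even ((E.filter (fun e' =>
            Sym2.map (Subtype.val ∘ φ') e' = Sym2.map (Subtype.val : ↥A → Fin M) δ)).card) :=
          hEvenφ (Sym2.map Subtype.val δ)
        have heq : (E.filter (fun e' => Sym2.map φ' e' = δ))
            = (E.filter (fun e' =>
              Sym2.map (Subtype.val ∘ φ') e' = Sym2.map (Subtype.val : ↥A → Fin M) δ)) := by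
          apply filter_ext
          intro e' _
          have h1 : Sym2.map (Subtype.val ∘ φ') e'
              = Sym2.map (Subtype.val : ↥A → Fin M) (Sym2.map φ' e') := (Sym2.map_map e').symm
          constructor
          · intro hh; rw [h1, hh]
          · intro hh
            apply Sym2.map.injective Subtype.val_injective
            rw [← h1]; exact hh
        rw [heq]
        exact h0
      have hfin : Even ((E.filter (fun e' => Sym2.map (⇑emb ∘ φ') e' = ε)).card) := by
        by_cases hex : ∃ δ : Sym2 ↥A, Sym2.map (⇑emb) δ = ε
        · obtain ⟨δ, rfl⟩ := hex
          have heq2 : (E.filter (fun e' => Sym2.map (⇑emb ∘ φ') e' = Sym2.map (⇑emb) δ))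
              = (E.filter (fun e' => Sym2.map φ' e' = δ)) := by
            apply filter_ext
            intro e' _
            have h1 : Sym2.map (⇑emb ∘ φ') e' = Sym2.map ⇑emb (Sym2.map φ' e') :=
              (Sym2.map_map e').symm
            constructor
            · intro hh
              apply Sym2.map.injective emb.injective
              rw [← h1]; exact hh
            · intro hh; rw [h1, hh]
          rw [heq2]
          exact hEvenφ' δ
        · have hempty : E.filter (fun e' => Sym2.map (⇑emb ∘ φ') e' = ε) = ∅ := by
            rw [Finset.filter_eq_empty_iff]
            intro e' _ hcontr
            exact hex ⟨Sym2.map φ' e', by rw [Sym2.map_map]; exact hcontr⟩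
          rw [hempty]
          simp
      rw [hEE]
      convert hfin using 2
      exact filter_ext E _ _ (fun e' _ => Iff.rfl)
    · -- image size
      have h2 : ((Finset.univ.image φ').image Subtype.val) = A := by
        ext y
        show _ ↔ y ∈ Finset.image φ Finset.univ
        simp only [Finset.mem_image, Finset.mem_univ, true_and]
        constructor
        · rintro ⟨z, ⟨x, hx⟩, hz⟩
          exact ⟨x, by rw [← hz, ← hx]⟩
        · rintro ⟨x, hx⟩
          exact ⟨φ' x, ⟨x, rfl⟩, hx⟩
      have h1 : (Finset.univ.image (⇑emb ∘ φ')).card = A.card := by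
        have e1 : (Finset.univ.image (⇑emb ∘ φ')) = (Finset.univ.image φ').image ⇑emb :=
          (Finset.image_image).symm
        rw [e1, Finset.card_image_of_injective _ emb.injective]
        conv_rhs => rw [← h2]
        rw [Finset.card_image_of_injective _ Subtype.val_injective]
      show Fintype.card V ≤ 2 * (Finset.univ.image (⇑emb ∘ φ')).card
      omega

end EvenHomProof

theorem positive_implies_even_hom_large_image {V : Type} [Fintype V] (G : SimpleGraph V)
    (h : Positive G) :
    ∀ n : ℕ, Fintype.card V ≤ n →
      ∃ f : G →g (⊤ : SimpleGraph (Fin n)), IsEvenHom f ∧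
        Fintype.card V ≤ 2 * (Finset.univ.image ⇑f).card := by
  exact EvenHomProof.positive_implies_even_hom_large_image' G h
end
end

section
/- For any finite connected simple graphs G₁, …, G_m that are pairwise non-isomorphic and each non-positive, there exist kernels W₁, …, W_m such that t(G_i, W_i) < 0 for every i, and t(G_i, W_j) ≠ t(G_j, W_j) whenever i ≠ j. -/
open MeasureTheory

noncomputable section

namespace Sep

/-- measurability of a single factor -/
lemma measurable_factor {V : Type} [Fintype V] (W : UI → UI → ℝ)
    (hW : Measurable (Function.uncurry W)) (a b : V) :
    Measurable fun p : V → UI => W (p a) (p b) :=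
  by
  have : (fun p : V → UI => W (p a) (p b)) =
      (Function.uncurry W) ∘ (fun p => (p a, p b)) := rfl
  rw [this]
  exact hW.comp ((measurable_pi_apply a).prodMk (measurable_pi_apply b))

lemma measurable_prodfn {V : Type} [Fintype V] (S : Finset (Sym2 V)) (W : Sym2 V → UI → UI → ℝ)
    (hW : ∀ e, Measurable (Function.uncurry (W e))) :
    Measurable fun p : V → UI => ∏ e ∈ S, W e (p (Quot.out e).1) (p (Quot.out e).2) :=
  Finset.measurable_prod _ fun e _ => measurable_factor _ (hW e) _ _

lemma integrable_prodfn {V : Type} [Fintype V] (S : Finset (Sym2 V)) (W : Sym2 V → UI → UI → ℝ)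
    (hW : ∀ e, Measurable (Function.uncurry (W e))) (C : Sym2 V → ℝ)
    (hC : ∀ e x y, |W e x y| ≤ C e) :
    Integrable fun p : V → UI => ∏ e ∈ S, W e (p (Quot.out e).1) (p (Quot.out e).2) := by
  refine (integrable_const (∏ e ∈ S, C e)).mono'
    (measurable_prodfn S W hW).aestronglyMeasurable ?_
  filter_upwards with p
  rw [Real.norm_eq_abs, Finset.abs_prod]
  exact Finset.prod_le_prod (fun e _ => abs_nonneg _) (fun e _ => hC e _ _)

end Sep

namespace Sep

variable (n : ℕ)

/-- block map: which of the `n+1` intervals a point falls into -/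
def blk (t : UI) : Fin (n+1) := ⟨min (Nat.floor ((t:ℝ) * (n+1))) n, by
  have := min_le_right (Nat.floor ((t:ℝ) * (n+1))) n
  omega⟩

lemma measurable_blk : Measurable (blk n) := by
  have h1 : Measurable fun t : UI => (Nat.floor ((t:ℝ) * (n+1)) : ℕ) :=
    Nat.measurable_floor.comp ((measurable_subtype_coe).mul measurable_const)
  have h2 : Measurable fun k : ℕ => (⟨min k n, by
      have := min_le_right k n; omega⟩ : Fin (n+1)) := measurable_of_countable _
  exact h2.comp h1

/-- pushforward of the uniform measure under `blk` -/
def nu : Measure (Fin (n+1)) := Measure.map (blk n) volume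

instance : IsProbabilityMeasure (nu n) :=
  Measure.isProbabilityMeasure_map (measurable_blk n).aemeasurable

lemma nu_singleton_pos (c : Fin (n+1)) : 0 < nu n {c} := by
  rw [nu, Measure.map_apply (measurable_blk n) (measurableSet_singleton c)]
  have hn1 : (0:ℝ) < (n+1) := by positivity
  have hsub : (Subtype.val ⁻¹' Set.Ico ((c:ℝ)/(n+1)) ((c+1:ℝ)/(n+1)) : Set UI)
      ⊆ blk n ⁻¹' {c} := by
    intro t ht
    simp only [Set.mem_preimage, Set.mem_Ico] at ht
    simp only [Set.mem_preimage, Set.mem_singleton_iff, blk]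
    have h1 : (c:ℝ) ≤ (t:ℝ) * (n+1) := by
      have := (div_le_iff₀ hn1).mp ht.1
      linarith
    have h2 : (t:ℝ) * (n+1) < (c:ℝ) + 1 := by
      have := (lt_div_iff₀ hn1).mp ht.2
      linarith
    have ht0 : (0:ℝ) ≤ (t:ℝ) * (n+1) := by
      have := (h1 : (c:ℝ) ≤ _)
      have : (0:ℝ) ≤ (c:ℝ) := by positivity
      linarith
    have hfl : Nat.floor ((t:ℝ) * (n+1)) = (c : ℕ) := by
      rw [Nat.floor_eq_iff ht0]
      exact ⟨h1, by push_cast; exact h2⟩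
    ext
    simp [hfl, Nat.lt_succ_iff.mp c.isLt]
  refine lt_of_lt_of_le ?_ (measure_mono hsub)
  have hmeas : MeasurableSet (Set.Ico ((c:ℝ)/(n+1)) ((c+1:ℝ)/(n+1))) := measurableSet_Ico
  rw [volume_preimage_coe nullMeasurableSet_Icc hmeas]
  have hcn : ((c:ℝ)+1)/(n+1) ≤ 1 := by
    rw [div_le_one hn1]
    have : (c:ℕ) < n+1 := c.isLt
    have : ((c:ℕ):ℝ) + 1 ≤ ((n:ℝ)+1) := by exact_mod_cast Nat.succ_le_of_lt this
    linarith
  have hsub2 : Set.Ico ((c:ℝ)/(n+1)) ((c+1:ℝ)/(n+1)) ∩ Set.Icc 0 1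
      = Set.Ico ((c:ℝ)/(n+1)) ((c+1:ℝ)/(n+1)) := by
    rw [Set.inter_eq_left]
    intro y hy
    simp only [Set.mem_Ico] at hy
    refine ⟨?_, ?_⟩
    · have : (0:ℝ) ≤ (c:ℝ)/(n+1) := by positivity
      linarith [hy.1]
    · linarith [hy.2]
  rw [hsub2, Real.volume_Ico]
  have hlt : (c:ℝ)/(n+1) < ((c:ℝ)+1)/(n+1) := by
    apply div_lt_div_of_pos_right ?_ hn1
    · linarith
  simp only [ENNReal.ofReal_pos]
  linarith [hlt]



/-- the step kernel determined by values `x` on blocks -/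
def stepK (x : Sym2 (Fin (n+1)) → ℝ) : UI → UI → ℝ := fun a b => x s(blk n a, blk n b)

lemma isKernel_stepK (x : Sym2 (Fin (n+1)) → ℝ) : IsKernel (stepK n x) := by
  refine ⟨?_, ?_, ?_⟩
  · have : Function.uncurry (stepK n x)
        = (fun cd : Fin (n+1) × Fin (n+1) => x s(cd.1, cd.2))
          ∘ (fun ab : UI × UI => (blk n ab.1, blk n ab.2)) := rfl
    rw [this]
    exact (measurable_of_countable _).comp
      (((measurable_blk n).comp measurable_fst).prodMk ((measurable_blk n).comp measurable_snd))
  · intro a b; simp only [stepK, Sym2.eq_swap]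
  · obtain ⟨C, hC⟩ : ∃ C, ∀ e : Sym2 (Fin (n+1)), |x e| ≤ C :=
      ⟨∑ e, |x e|, fun e => Finset.single_le_sum (f := fun e => |x e|)
        (fun _ _ => abs_nonneg _) (Finset.mem_univ e)⟩
    exact ⟨C, fun a b => hC _⟩

open scoped Classical in
/-- the weight of a map `q` -/
def wgt {V : Type} [Fintype V] (q : V → Fin (n+1)) : ℝ := ∏ v, ((nu n) {q v}).toReal

lemma wgt_pos {V : Type} [Fintype V] (q : V → Fin (n+1)) : 0 < wgt n q := by
  apply Finset.prod_pos
  intro v _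
  exact ENNReal.toReal_pos (nu_singleton_pos n (q v)).ne' (measure_ne_top _ _)

open scoped Classical in
/-- the polynomial whose evaluation at `x` is `t(G, stepK x)` -/
def graphPoly {V : Type} [Fintype V] (G : SimpleGraph V) :
    MvPolynomial (Sym2 (Fin (n+1))) ℝ :=
  ∑ q : V → Fin (n+1), MvPolynomial.C (wgt n q) *
    ∏ e ∈ G.edgeFinset, MvPolynomial.X (Sym2.map q e)

open scoped Classical in
lemma homDensity_stepK {V : Type} [Fintype V] (G : SimpleGraph V)
    (x : Sym2 (Fin (n+1)) → ℝ) :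
    homDensity G (stepK n x) = MvPolynomial.eval x (graphPoly n G) := by
  classical
  have hout : ∀ (α β : Type) (q : α → β) (e : Sym2 α),
      s(q (Quot.out e).1, q (Quot.out e).2) = Sym2.map q e := by
    intro α β q e
    conv_rhs => rw [← Quot.out_eq e]
    rfl
  -- the integrand factors through blk
  set g : (V → Fin (n+1)) → ℝ := fun q => ∏ e ∈ G.edgeFinset, x (Sym2.map q e) with hg
  have hpt : ∀ p : V → UI,
      (∏ e ∈ G.edgeFinset, stepK n x (p (Quot.out e).1) (p (Quot.out e).2))
        = g (fun v => blk n (p v)) := by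
    intro p
    rw [hg]
    refine Finset.prod_congr rfl fun e _ => ?_
    rw [← hout V (Fin (n+1)) (fun v => blk n (p v)) e]
    rfl
  have mp : MeasurePreserving (fun (p : V → UI) (v : V) => blk n (p v))
      volume (Measure.pi fun _ => nu n) :=
    MeasureTheory.measurePreserving_pi _ _ (fun _ => ⟨measurable_blk n, rfl⟩)
  have hgmeas : Measurable g := measurable_of_countable _
  rw [homDensity]
  calc ∫ p : V → UI, ∏ e ∈ G.edgeFinset, stepK n x (p (Quot.out e).1) (p (Quot.out e).2)
      = ∫ p : V → UI, g (fun v => blk n (p v)) := by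
        exact integral_congr_ae (Filter.Eventually.of_forall hpt)
    _ = ∫ q, g q ∂(Measure.pi fun _ => nu n) := by
        rw [← mp.map_eq]
        exact (integral_map mp.measurable.aemeasurable hgmeas.aestronglyMeasurable).symm
    _ = ∑ q : V → Fin (n+1), ((Measure.pi fun _ => nu n) {q}).toReal • g q := by
        refine integral_fintype ?_
        refine (integrable_const (∑ q, |g q|)).mono' hgmeas.aestronglyMeasurable ?_
        filter_upwards with q
        rw [Real.norm_eq_abs]
        exact Finset.single_le_sum (f := fun q => |g q|) (fun _ _ => abs_nonneg _)
          (Finset.mem_univ q)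
    _ = ∑ q : V → Fin (n+1), wgt n q * g q := by
        refine Finset.sum_congr rfl fun q _ => ?_
        rw [smul_eq_mul]
        congr 1
        rw [wgt, ← Set.univ_pi_singleton, Measure.pi_pi, ENNReal.toReal_prod]
    _ = MvPolynomial.eval x (graphPoly n G) := by
        rw [graphPoly, map_sum]
        refine Finset.sum_congr rfl fun q _ => ?_
        rw [map_mul, MvPolynomial.eval_C, map_prod]
        simp [hg]

open scoped Classical in
lemma prod_X_eq_monomial {ι σ : Type*} (s : Finset ι) (f : ι → σ) :
    (∏ i ∈ s, MvPolynomial.X (f i) : MvPolynomial σ ℝ)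
      = MvPolynomial.monomial (∑ i ∈ s, Finsupp.single (f i) 1) 1 := by
  classical
  induction s using Finset.cons_induction with
  | empty => simp
  | cons a s ha ih =>
    rw [Finset.prod_cons, Finset.sum_cons, ih, MvPolynomial.X,
      MvPolynomial.monomial_mul, one_mul]

open scoped Classical in
/-- the exponent pattern of a map `q` -/
def expt {V : Type} [Fintype V] (G : SimpleGraph V) (q : V → Fin (n+1)) :
    (Sym2 (Fin (n+1))) →₀ ℕ :=
  ∑ e ∈ G.edgeFinset, Finsupp.single (Sym2.map q e) 1

open scoped Classical in
lemma coeff_graphPoly {V : Type} [Fintype V] (G : SimpleGraph V)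
    (d : (Sym2 (Fin (n+1))) →₀ ℕ) :
    (graphPoly n G).coeff d
      = ∑ q ∈ Finset.univ.filter (fun q : V → Fin (n+1) => expt n G q = d), wgt n q := by
  classical
  rw [graphPoly]
  rw [MvPolynomial.coeff_sum]
  rw [Finset.sum_filter]
  refine Finset.sum_congr rfl fun q _ => ?_
  rw [prod_X_eq_monomial, MvPolynomial.coeff_C_mul, MvPolynomial.coeff_monomial, ← expt]
  by_cases h : expt n G q = d <;> simp [h]



section Key

open Finset

variable {V V' : Type} [Fintype V] [Fintype V']

lemma exists_adj {G : SimpleGraph V} (hG : G.Connected) (h2 : 1 < Fintype.card V) (u : V) :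
    ∃ w, G.Adj u w := by
  obtain ⟨w, hw⟩ := Fintype.exists_ne_of_one_lt_card h2 u
  obtain ⟨walk⟩ := hG.preconnected u w
  cases walk with
  | nil => exact absurd rfl hw.symm
  | cons h p => exact ⟨_, h⟩

open scoped Classical in
lemma key {β : Type} (G : SimpleGraph V) (G' : SimpleGraph V')
    (hG : G.Connected) (hG' : G'.Connected)
    (hcard : Fintype.card V' ≤ Fintype.card V)
    (he : G'.edgeFinset.card = G.edgeFinset.card)
    (φ0 : V → β) (hφ0 : Function.Injective φ0) (φ : V' → β)
    (h : ∑ e ∈ G'.edgeFinset, Finsupp.single (Sym2.map φ e) 1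
       = ∑ e ∈ G.edgeFinset, Finsupp.single (Sym2.map φ0 e) (1:ℕ)) :
    Nonempty (G' ≃g G) := by
  classical
  have hcount : ∀ a : Sym2 β, (G'.edgeFinset.filter (fun e => Sym2.map φ e = a)).card
      = (G.edgeFinset.filter (fun e => Sym2.map φ0 e = a)).card := by
    intro a
    have h2 := congrArg (fun f : Sym2 β →₀ ℕ => f a) h
    simp only [Finsupp.finset_sum_apply, Finsupp.single_apply] at h2
    rw [Finset.card_filter, Finset.card_filter]
    exact h2
  have hfil0 : ∀ a : Sym2 β, (G.edgeFinset.filter (fun e => Sym2.map φ0 e = a)).card ≤ 1 := by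
    intro a
    refine Finset.card_le_one.mpr fun e1 h1 e2 h2 => ?_
    rw [Finset.mem_filter] at h1 h2
    exact Sym2.map.injective hφ0 (h1.2.trans h2.2.symm)
  have hinj' : ∀ e1 ∈ G'.edgeFinset, ∀ e2 ∈ G'.edgeFinset,
      Sym2.map φ e1 = Sym2.map φ e2 → e1 = e2 := by
    intro e1 h1 e2 h2 hee
    have hle : (G'.edgeFinset.filter (fun e => Sym2.map φ e = Sym2.map φ e1)).card ≤ 1 :=
      (hcount _).le.trans (hfil0 _)
    exact Finset.card_le_one.mp hle e1 (Finset.mem_filter.mpr ⟨h1, rfl⟩) e2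
      (Finset.mem_filter.mpr ⟨h2, hee.symm⟩)
  have himg : G'.edgeFinset.image (Sym2.map φ) = G.edgeFinset.image (Sym2.map φ0) := by
    ext a
    simp only [Finset.mem_image]
    constructor
    · rintro ⟨e, heE, rfl⟩
      have : 0 < (G.edgeFinset.filter (fun e' => Sym2.map φ0 e' = Sym2.map φ e)).card := by
        rw [← hcount]
        exact Finset.card_pos.mpr ⟨e, Finset.mem_filter.mpr ⟨heE, rfl⟩⟩
      obtain ⟨f, hf⟩ := Finset.card_pos.mp this
      rw [Finset.mem_filter] at hf
      exact ⟨f, hf.1, hf.2⟩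
    · rintro ⟨f, hfE, rfl⟩
      have : 0 < (G'.edgeFinset.filter (fun e' => Sym2.map φ e' = Sym2.map φ0 f)).card := by
        rw [hcount]
        exact Finset.card_pos.mpr ⟨f, Finset.mem_filter.mpr ⟨hfE, rfl⟩⟩
      obtain ⟨e, hf⟩ := Finset.card_pos.mp this
      rw [Finset.mem_filter] at hf
      exact ⟨e, hf.1, hf.2⟩
  by_cases hE : G.edgeFinset = ∅
  · -- no edges: both graphs are single vertices
    have hE' : G'.edgeFinset = ∅ := Finset.card_eq_zero.mp (by rw [he, hE]; simp)
    have hsub : ∀ a b : V, a = b := by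
      intro a b
      obtain ⟨walk⟩ := hG.preconnected a b
      cases walk with
      | nil => rfl
      | cons hadj p =>
        exfalso
        have : s(a, _) ∈ G.edgeFinset := SimpleGraph.mem_edgeFinset.mpr hadj
        rw [hE] at this
        exact absurd this (Finset.notMem_empty _)
    have hsub' : ∀ a b : V', a = b := by
      intro a b
      obtain ⟨walk⟩ := hG'.preconnected a b
      cases walk with
      | nil => rfl
      | cons hadj p =>
        exfalso
        have : s(a, _) ∈ G'.edgeFinset := SimpleGraph.mem_edgeFinset.mpr hadj
        rw [hE'] at this
        exact absurd this (Finset.notMem_empty _)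
    have hc1 : Fintype.card V = 1 := by
      have : Nonempty V := hG.nonempty
      obtain ⟨a⟩ := this
      exact Fintype.card_eq_one_iff.mpr ⟨a, fun b => hsub b a⟩
    have hc1' : Fintype.card V' = 1 := by
      have : Nonempty V' := hG'.nonempty
      obtain ⟨a⟩ := this
      exact Fintype.card_eq_one_iff.mpr ⟨a, fun b => hsub' b a⟩
    refine ⟨⟨Fintype.equivOfCardEq (hc1'.trans hc1.symm), ?_⟩⟩
    intro a b
    constructor
    · intro hadj
      exact absurd (hsub _ _) (G.ne_of_adj hadj)
    · intro hadj
      exact absurd (hsub' a b) (G'.ne_of_adj hadj)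
  · -- main case: there is an edge
    have hEne : G.edgeFinset.Nonempty := Finset.nonempty_of_ne_empty hE
    have hE'ne : G'.edgeFinset.Nonempty := by
      rw [← Finset.card_pos, he, Finset.card_pos]; exact hEne
    have hV2 : 1 < Fintype.card V := by
      obtain ⟨e, heE⟩ := hEne
      rw [SimpleGraph.mem_edgeFinset] at heE
      induction e with
      | _ a b => exact Fintype.one_lt_card_iff.mpr ⟨a, b, G.ne_of_adj heE⟩
    have hV'2 : 1 < Fintype.card V' := by
      obtain ⟨e, heE⟩ := hE'ne
      rw [SimpleGraph.mem_edgeFinset] at heE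
      induction e with
      | _ a b => exact Fintype.one_lt_card_iff.mpr ⟨a, b, G'.ne_of_adj heE⟩
    set T : Finset β := Finset.univ.image φ0 with hT
    have hTcard : T.card = Fintype.card V := by
      rw [hT, Finset.card_image_of_injective _ hφ0, Finset.card_univ]
    -- every φ-value lies in T
    have hsubT : ∀ u' : V', φ u' ∈ T := by
      intro u'
      obtain ⟨w, hw⟩ := exists_adj hG' hV'2 u'
      have hedge : s(u', w) ∈ G'.edgeFinset := SimpleGraph.mem_edgeFinset.mpr hw
      have : Sym2.map φ s(u', w) ∈ G.edgeFinset.image (Sym2.map φ0) := by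
        rw [← himg]
        exact Finset.mem_image_of_mem _ hedge
      obtain ⟨f, hfE, hfe⟩ := Finset.mem_image.mp this
      have : φ u' ∈ Sym2.map φ0 f := by
        rw [hfe]
        exact Sym2.mem_map.mpr ⟨u', Sym2.mem_mk_left _ _, rfl⟩
      obtain ⟨v, hv, hveq⟩ := Sym2.mem_map.mp this
      rw [← hveq]
      exact Finset.mem_image_of_mem _ (Finset.mem_univ v)
    -- T is contained in the image of φ
    have hTsub : T ⊆ Finset.univ.image φ := by
      intro t ht
      obtain ⟨w, _, rfl⟩ := Finset.mem_image.mp ht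
      obtain ⟨w2, hw2⟩ := exists_adj hG hV2 w
      have hedge : s(w, w2) ∈ G.edgeFinset := SimpleGraph.mem_edgeFinset.mpr hw2
      have : Sym2.map φ0 s(w, w2) ∈ G'.edgeFinset.image (Sym2.map φ) := by
        rw [himg]
        exact Finset.mem_image_of_mem _ hedge
      obtain ⟨e', he'E, he'e⟩ := Finset.mem_image.mp this
      have : φ0 w ∈ Sym2.map φ e' := by
        rw [he'e]
        exact Sym2.mem_map.mpr ⟨w, Sym2.mem_mk_left _ _, rfl⟩
      obtain ⟨u', _, hueq⟩ := Sym2.mem_map.mp this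
      rw [← hueq]
      exact Finset.mem_image_of_mem _ (Finset.mem_univ u')
    have himgle : (Finset.univ.image φ).card ≤ Fintype.card V' :=
      (Finset.card_image_le).trans (by rw [Finset.card_univ])
    have hcards : (Finset.univ.image φ).card = Fintype.card V' := by
      have h1 : Fintype.card V ≤ (Finset.univ.image φ).card := by
        rw [← hTcard]; exact Finset.card_le_card hTsub
      omega
    have hVV' : Fintype.card V' = Fintype.card V := by
      have h1 : Fintype.card V ≤ (Finset.univ.image φ).card := by
        rw [← hTcard]; exact Finset.card_le_card hTsub
      omega
    have hφinj : Function.Injective φ := by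
      have := Finset.card_image_iff.mp (by rw [hcards, Finset.card_univ] : 
        (Finset.univ.image φ).card = (Finset.univ : Finset V').card)
      intro a b hab
      exact this (Finset.mem_coe.mpr (Finset.mem_univ a)) (Finset.mem_coe.mpr (Finset.mem_univ b)) hab
    have hTeq : T = Finset.univ.image φ :=
      Finset.eq_of_subset_of_card_le hTsub (by omega)
    have hrange : Set.range φ = Set.range φ0 := by
      have h1 : Set.range φ = ↑(Finset.univ.image φ) := by
        rw [Finset.coe_image, Finset.coe_univ, Set.image_univ]
      have h2 : Set.range φ0 = ↑T := by
        rw [hT, Finset.coe_image, Finset.coe_univ, Set.image_univ]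
      rw [h1, h2, hTeq]
    set g : V' ≃ V := (Equiv.ofInjective φ hφinj).trans
      ((Equiv.setCongr hrange).trans (Equiv.ofInjective φ0 hφ0).symm) with hgdef
    have hgφ : ∀ u : V', φ0 (g u) = φ u := by
      intro u
      rw [hgdef]
      simp only [Equiv.trans_apply, Equiv.ofInjective_apply, Equiv.setCongr_apply]
      exact Equiv.apply_ofInjective_symm hφ0 _
    have hcomp : ∀ e : Sym2 V', Sym2.map φ0 (Sym2.map g e) = Sym2.map φ e := by
      intro e
      rw [Sym2.map_map]
      congr 1
      ext u
      exact hgφ u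
    have hmapg : ∀ e' ∈ G'.edgeFinset, Sym2.map g e' ∈ G.edgeFinset := by
      intro e' he'
      have : Sym2.map φ e' ∈ G.edgeFinset.image (Sym2.map φ0) := by
        rw [← himg]; exact Finset.mem_image_of_mem _ he'
      obtain ⟨f, hfE, hfe⟩ := Finset.mem_image.mp this
      have : Sym2.map φ0 (Sym2.map g e') = Sym2.map φ0 f := by
        rw [hcomp, hfe]
      rw [Sym2.map.injective hφ0 this]
      exact hfE
    have hginj : Function.Injective (Sym2.map g) := Sym2.map.injective g.injective
    have himgE : G'.edgeFinset.image (Sym2.map g) = G.edgeFinset := by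
      refine Finset.eq_of_subset_of_card_le ?_ ?_
      · intro a ha
        obtain ⟨e', he', rfl⟩ := Finset.mem_image.mp ha
        exact hmapg e' he'
      · rw [Finset.card_image_of_injective _ hginj, he]
    refine ⟨⟨g, ?_⟩⟩
    intro a b
    constructor
    · intro hadj
      have hmem : s(g a, g b) ∈ G.edgeFinset := by
        rw [SimpleGraph.mem_edgeFinset]; exact hadj
      rw [← himgE] at hmem
      obtain ⟨e', he', hee⟩ := Finset.mem_image.mp hmem
      have he'ab : e' = s(a, b) := by
        apply hginj
        rw [hee]
        rfl
      rw [he'ab] at he'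
      exact SimpleGraph.mem_edgeFinset.mp he'
    · intro hadj
      have hmem : s(a, b) ∈ G'.edgeFinset := SimpleGraph.mem_edgeFinset.mpr hadj
      have : Sym2.map g s(a, b) ∈ G.edgeFinset := hmapg _ hmem
      exact SimpleGraph.mem_edgeFinset.mp this

end Key


open scoped Classical in
lemma coeff_pos {V : Type} [Fintype V] (n : ℕ) (G : SimpleGraph V)
    (φ0 : V → Fin (n+1)) (hφ0 : Function.Injective φ0) :
    0 < (graphPoly n G).coeff (expt n G φ0) := by
  rw [coeff_graphPoly]
  refine Finset.sum_pos (fun q _ => wgt_pos n q) ⟨φ0, Finset.mem_filter.mpr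
    ⟨Finset.mem_univ _, rfl⟩⟩

open scoped Classical in
lemma coeff_zero {V V' : Type} [Fintype V] [Fintype V'] (n : ℕ)
    (G : SimpleGraph V) (G' : SimpleGraph V')
    (hG : G.Connected) (hG' : G'.Connected)
    (hcard : Fintype.card V' ≤ Fintype.card V)
    (he : G'.edgeFinset.card = G.edgeFinset.card)
    (hiso : IsEmpty (G' ≃g G))
    (φ0 : V → Fin (n+1)) (hφ0 : Function.Injective φ0) :
    (graphPoly n G').coeff (expt n G φ0) = 0 := by
  rw [coeff_graphPoly]
  refine Finset.sum_eq_zero fun q hq => ?_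
  rw [Finset.mem_filter] at hq
  obtain ⟨iso⟩ := key G G' hG hG' hcard he φ0 hφ0 q hq.2
  exact ((by exact hiso.false iso : False)).elim

open scoped Classical in
lemma graphPoly_ne {V V' : Type} [Fintype V] [Fintype V'] (n : ℕ)
    (G : SimpleGraph V) (G' : SimpleGraph V')
    (hG : G.Connected) (hG' : G'.Connected)
    (hcard : Fintype.card V' ≤ Fintype.card V)
    (hn : Fintype.card V ≤ n + 1)
    (he : G'.edgeFinset.card = G.edgeFinset.card)
    (hiso : IsEmpty (G' ≃g G)) :
    graphPoly n G ≠ graphPoly n G' := by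
  obtain ⟨φ0⟩ : Nonempty (V ↪ Fin (n+1)) :=
    Function.Embedding.nonempty_of_card_le (by simpa using hn)
  intro hcontra
  have h1 := coeff_pos n G φ0 φ0.injective
  have h2 := coeff_zero n G G' hG hG' hcard he hiso φ0 φ0.injective
  rw [hcontra, h2] at h1
  exact lt_irrefl 0 h1

open scoped Classical in
lemma graphPoly_ne_zero {V : Type} [Fintype V] (n : ℕ) (G : SimpleGraph V)
    (hn : Fintype.card V ≤ n + 1) :
    graphPoly n G ≠ 0 := by
  obtain ⟨φ0⟩ : Nonempty (V ↪ Fin (n+1)) :=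
    Function.Embedding.nonempty_of_card_le (by simpa using hn)
  intro hcontra
  have h1 := coeff_pos n G φ0 φ0.injective
  rw [hcontra] at h1
  simp at h1


section Expand

variable {V : Type} [Fintype V]

lemma kernel_nonneg_bound {W : UI → UI → ℝ} {C : ℝ} (h : ∀ x y, |W x y| ≤ C) : 0 ≤ C :=
  le_trans (abs_nonneg _) (h ⟨0, by norm_num⟩ ⟨0, by norm_num⟩)

lemma integrable_mul_prodfn (F1 F2 : Finset (Sym2 V)) (X U : UI → UI → ℝ)
    (hX : IsKernel X) (hU : IsKernel U) :
    Integrable fun p : V → UI =>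
      (∏ e ∈ F1, X (p (Quot.out e).1) (p (Quot.out e).2)) *
        ∏ e ∈ F2, U (p (Quot.out e).1) (p (Quot.out e).2) := by
  obtain ⟨hXm, -, CX, hCX⟩ := hX
  obtain ⟨hUm, -, CU, hCU⟩ := hU
  have hm : Measurable fun p : V → UI =>
      (∏ e ∈ F1, X (p (Quot.out e).1) (p (Quot.out e).2)) *
        ∏ e ∈ F2, U (p (Quot.out e).1) (p (Quot.out e).2) :=
    (measurable_prodfn F1 (fun _ => X) (fun _ => hXm)).mul
      (measurable_prodfn F2 (fun _ => U) (fun _ => hUm))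
  refine (integrable_const (CX ^ F1.card * CU ^ F2.card)).mono' hm.aestronglyMeasurable ?_
  filter_upwards with p
  rw [Real.norm_eq_abs, abs_mul, Finset.abs_prod, Finset.abs_prod]
  have h1 : (∏ e ∈ F1, |X (p (Quot.out e).1) (p (Quot.out e).2)|) ≤ CX ^ F1.card := by
    rw [← Finset.prod_const]
    exact Finset.prod_le_prod (fun e _ => abs_nonneg _) (fun e _ => hCX _ _)
  have h2 : (∏ e ∈ F2, |U (p (Quot.out e).1) (p (Quot.out e).2)|) ≤ CU ^ F2.card := by
    rw [← Finset.prod_const]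
    exact Finset.prod_le_prod (fun e _ => abs_nonneg _) (fun e _ => hCU _ _)
  exact mul_le_mul h1 h2 (Finset.prod_nonneg fun e _ => abs_nonneg _)
    (pow_nonneg (kernel_nonneg_bound hCX) _)

open scoped Classical in
/-- the polynomial in `s` equal to `t(G, U + s·X)` -/
def expandPoly (G : SimpleGraph V) (U X : UI → UI → ℝ) : Polynomial ℝ :=
  ∑ F ∈ G.edgeFinset.powerset,
    Polynomial.C (∫ p : V → UI, (∏ e ∈ F, X (p (Quot.out e).1) (p (Quot.out e).2)) *
        ∏ e ∈ G.edgeFinset \ F, U (p (Quot.out e).1) (p (Quot.out e).2)) *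
      Polynomial.X ^ F.card

open scoped Classical in
lemma homDensity_add_smul (G : SimpleGraph V) (U X : UI → UI → ℝ)
    (hU : IsKernel U) (hX : IsKernel X) (s : ℝ) :
    homDensity G (fun a b => U a b + s * X a b) = (expandPoly G U X).eval s := by
  classical
  rw [homDensity]
  have hpt : ∀ p : V → UI,
      (∏ e ∈ G.edgeFinset, (U (p (Quot.out e).1) (p (Quot.out e).2)
          + s * X (p (Quot.out e).1) (p (Quot.out e).2)))
        = ∑ F ∈ G.edgeFinset.powerset, s ^ F.card *
            ((∏ e ∈ F, X (p (Quot.out e).1) (p (Quot.out e).2)) *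
              ∏ e ∈ G.edgeFinset \ F, U (p (Quot.out e).1) (p (Quot.out e).2)) := by
    intro p
    have : ∀ e ∈ G.edgeFinset, (U (p (Quot.out e).1) (p (Quot.out e).2)
        + s * X (p (Quot.out e).1) (p (Quot.out e).2))
        = (s * X (p (Quot.out e).1) (p (Quot.out e).2)
            + U (p (Quot.out e).1) (p (Quot.out e).2)) := fun e _ => add_comm _ _
    rw [Finset.prod_congr rfl this, Finset.prod_add]
    refine Finset.sum_congr rfl fun F hF => ?_
    rw [Finset.prod_mul_distrib, Finset.prod_const, mul_assoc]
  rw [integral_congr_ae (Filter.Eventually.of_forall hpt)]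
  rw [integral_finset_sum _ (fun F hF => ((integrable_mul_prodfn F (G.edgeFinset \ F) X U
    hX hU).const_mul _))]
  rw [expandPoly, Polynomial.eval_finset_sum]
  refine Finset.sum_congr rfl fun F hF => ?_
  rw [Polynomial.eval_mul, Polynomial.eval_C, Polynomial.eval_pow, Polynomial.eval_X,
    integral_const_mul]
  ring

open scoped Classical in
lemma expandPoly_coeff_top (G : SimpleGraph V) (U X : UI → UI → ℝ) :
    (expandPoly G U X).coeff G.edgeFinset.card = homDensity G X := by
  classical
  rw [expandPoly, Polynomial.finset_sum_coeff]
  have : ∀ F ∈ G.edgeFinset.powerset, F ≠ G.edgeFinset →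
      (Polynomial.C (∫ p : V → UI, (∏ e ∈ F, X (p (Quot.out e).1) (p (Quot.out e).2)) *
        ∏ e ∈ G.edgeFinset \ F, U (p (Quot.out e).1) (p (Quot.out e).2)) *
      Polynomial.X ^ F.card).coeff G.edgeFinset.card = 0 := by
    intro F hF hne
    have hsub : F ⊆ G.edgeFinset := Finset.mem_powerset.mp hF
    have hlt : F.card < G.edgeFinset.card := Finset.card_lt_card (ssubset_of_ne_of_subset hne hsub)
    rw [Polynomial.coeff_C_mul, Polynomial.coeff_X_pow, if_neg (by omega)]
    ring
  rw [Finset.sum_eq_single G.edgeFinset this (fun h => absurd (Finset.mem_powerset.mpr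
    (subset_refl _)) h)]
  rw [Polynomial.coeff_C_mul, Polynomial.coeff_X_pow, if_pos rfl, mul_one, Finset.sdiff_self]
  rw [homDensity]
  simp

open scoped Classical in
lemma expandPoly_coeff_gt (G : SimpleGraph V) (U X : UI → UI → ℝ) (c : ℕ)
    (hc : G.edgeFinset.card < c) :
    (expandPoly G U X).coeff c = 0 := by
  classical
  rw [expandPoly, Polynomial.finset_sum_coeff]
  refine Finset.sum_eq_zero fun F hF => ?_
  have hsub : F ⊆ G.edgeFinset := Finset.mem_powerset.mp hF
  have hle : F.card ≤ G.edgeFinset.card := Finset.card_le_card hsub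
  rw [Polynomial.coeff_C_mul, Polynomial.coeff_X_pow, if_neg (by omega)]
  ring

lemma isKernel_add_smul {U X : UI → UI → ℝ} (hU : IsKernel U) (hX : IsKernel X) (s : ℝ) :
    IsKernel (fun a b => U a b + s * X a b) := by
  obtain ⟨hUm, hUs, CU, hCU⟩ := hU
  obtain ⟨hXm, hXs, CX, hCX⟩ := hX
  refine ⟨?_, ?_, ?_⟩
  · exact hUm.add (hXm.const_mul s)
  · intro x y; simp only []; rw [hUs x y, hXs x y]
  · refine ⟨CU + |s| * CX, fun x y => ?_⟩
    calc |U x y + s * X x y| ≤ |U x y| + |s * X x y| := abs_add_le _ _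
      _ ≤ CU + |s| * CX := by
          rw [abs_mul]
          have := hCX x y
          have := hCU x y
          have hs := abs_nonneg s
          nlinarith

end Expand

end Sep


/-- For pairwise non-isomorphic connected non-positive graphs `G₁, …, G_m` there are kernels
`W₁, …, W_m` with `t(Gᵢ, Wᵢ) < 0` and `t(Gᵢ, Wⱼ) ≠ t(Gⱼ, Wⱼ)` for `i ≠ j`. -/
theorem exists_separating_kernels {m : ℕ} (V : Fin m → Type) [∀ i, Fintype (V i)]
    (G : ∀ i, SimpleGraph (V i))
    (hconn : ∀ i, (G i).Connected)
    (hnoniso : ∀ i j, i ≠ j → IsEmpty ((G i) ≃g (G j)))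
    (hneg : ∀ i, ∃ W : UI → UI → ℝ, IsKernel W ∧ homDensity (G i) W < 0) :
    ∃ W : Fin m → (UI → UI → ℝ),
      (∀ i, IsKernel (W i)) ∧
      (∀ i, homDensity (G i) (W i) < 0) ∧
      (∀ i j, i ≠ j → homDensity (G i) (W j) ≠ homDensity (G j) (W j)) := by
  classical
  choose U hUk hUneg using hneg
  set n : ℕ := ∑ i, Fintype.card (V i) with hn
  have hcard : ∀ i, Fintype.card (V i) ≤ n + 1 := fun i =>
    le_trans (Finset.single_le_sum (f := fun i => Fintype.card (V i))
      (fun _ _ => Nat.zero_le _) (Finset.mem_univ i)) (Nat.le_succ n)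
  set P : Fin m → MvPolynomial (Sym2 (Fin (n+1))) ℝ := fun i => Sep.graphPoly n (G i) with hP
  have hPne : ∀ i, P i ≠ 0 := fun i => Sep.graphPoly_ne_zero n (G i) (hcard i)
  have hPdiff : ∀ i j, i ≠ j → (G i).edgeFinset.card = (G j).edgeFinset.card → P i ≠ P j := by
    intro i j hij he
    rcases le_total (Fintype.card (V j)) (Fintype.card (V i)) with h | h
    · exact Sep.graphPoly_ne n (G i) (G j) (hconn i) (hconn j) h (hcard i) he.symm
        (hnoniso j i hij.symm)
    · exact (Sep.graphPoly_ne n (G j) (G i) (hconn j) (hconn i) h (hcard j) he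
        (hnoniso i j hij)).symm
  -- a single point avoiding all the coincidences
  set pairs : Finset (Fin m × Fin m) := Finset.univ.offDiag.filter
    (fun p : Fin m × Fin m => (G p.1).edgeFinset.card = (G p.2).edgeFinset.card) with hpairs
  set Q : MvPolynomial (Sym2 (Fin (n+1))) ℝ :=
    (∏ i, P i) * ∏ p ∈ pairs, (P p.1 - P p.2) with hQ
  have hQne : Q ≠ 0 := by
    refine mul_ne_zero (Finset.prod_ne_zero_iff.mpr fun i _ => hPne i)
      (Finset.prod_ne_zero_iff.mpr fun p hp => ?_)
    rw [hpairs, Finset.mem_filter] at hp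
    have hne : p.1 ≠ p.2 := (Finset.mem_offDiag.mp hp.1).2.2
    exact sub_ne_zero.mpr (hPdiff p.1 p.2 hne hp.2)
  obtain ⟨x, hxQ⟩ : ∃ x, MvPolynomial.eval x Q ≠ 0 := by
    by_contra h
    push_neg at h
    exact hQne (MvPolynomial.funext fun x => by rw [h x, map_zero])
  set X : UI → UI → ℝ := Sep.stepK n x with hX
  have hXk : IsKernel X := Sep.isKernel_stepK n x
  have hXeval : ∀ i, homDensity (G i) X = MvPolynomial.eval x (P i) := fun i =>
    Sep.homDensity_stepK n (G i) x
  rw [hQ, map_mul, map_prod, map_prod] at hxQ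
  have hx1 : ∀ i, homDensity (G i) X ≠ 0 := by
    intro i
    rw [hXeval i]
    have := (mul_ne_zero_iff.mp hxQ).1
    exact Finset.prod_ne_zero_iff.mp this i (Finset.mem_univ i)
  have hx2 : ∀ i j, i ≠ j → (G i).edgeFinset.card = (G j).edgeFinset.card →
      homDensity (G i) X ≠ homDensity (G j) X := by
    intro i j hij he
    rw [hXeval i, hXeval j]
    have := (mul_ne_zero_iff.mp hxQ).2
    have hmem : (i, j) ∈ pairs := by
      rw [hpairs, Finset.mem_filter, Finset.mem_offDiag]
      exact ⟨⟨Finset.mem_univ _, Finset.mem_univ _, hij⟩, he⟩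
    have h2 := Finset.prod_ne_zero_iff.mp this (i, j) hmem
    rw [map_sub] at h2
    exact sub_ne_zero.mp h2
  -- choose the scaling for each j
  have hchoice : ∀ j, ∃ s : ℝ,
      homDensity (G j) (fun a b => U j a b + s * X a b) < 0 ∧
      ∀ i, i ≠ j → homDensity (G i) (fun a b => U j a b + s * X a b)
        ≠ homDensity (G j) (fun a b => U j a b + s * X a b) := by
    intro j
    set Qp : Fin m → Polynomial ℝ := fun i => Sep.expandPoly (G i) (U j) X with hQp
    have heval : ∀ i s, homDensity (G i) (fun a b => U j a b + s * X a b) = (Qp i).eval s :=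
      fun i s => Sep.homDensity_add_smul (G i) (U j) X (hUk j) hXk s
    have hD : ∀ i, i ≠ j → Qp i - Qp j ≠ 0 := by
      intro i hij hzero
      rcases lt_trichotomy ((G i).edgeFinset.card) ((G j).edgeFinset.card) with h | h | h
      · have hcoeff := congrArg (fun p : Polynomial ℝ => p.coeff ((G j).edgeFinset.card)) hzero
        simp only [Polynomial.coeff_sub, Polynomial.coeff_zero, hQp,
          Sep.expandPoly_coeff_gt (G i) (U j) X _ h,
          Sep.expandPoly_coeff_top (G j) (U j) X] at hcoeff
        exact hx1 j (by linarith)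
      · have hcoeff := congrArg (fun p : Polynomial ℝ => p.coeff ((G j).edgeFinset.card)) hzero
        simp only [Polynomial.coeff_sub, Polynomial.coeff_zero, hQp] at hcoeff
        rw [← h, Sep.expandPoly_coeff_top (G i) (U j) X, h,
          Sep.expandPoly_coeff_top (G j) (U j) X] at hcoeff
        exact hx2 i j hij h (sub_eq_zero.mp (by linarith))
      · have hcoeff := congrArg (fun p : Polynomial ℝ => p.coeff ((G i).edgeFinset.card)) hzero
        simp only [Polynomial.coeff_sub, Polynomial.coeff_zero, hQp,
          Sep.expandPoly_coeff_gt (G j) (U j) X _ h,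
          Sep.expandPoly_coeff_top (G i) (U j) X] at hcoeff
        exact hx1 i (by linarith)
    -- negativity of `Qp j` near `0`
    have h0 : (Qp j).eval 0 < 0 := by
      have h1 := heval j 0
      have h2 : (fun a b => U j a b + (0:ℝ) * X a b) = U j := by
        funext a b; ring
      rw [h2] at h1
      rw [← h1]
      exact hUneg j
    have hopen : IsOpen {t : ℝ | (Qp j).eval t < 0} :=
      isOpen_lt (Polynomial.continuous (Qp j)) continuous_const
    obtain ⟨δ, hδpos, hδ⟩ := Metric.isOpen_iff.mp hopen 0 h0
    set bad : Set ℝ := ⋃ i ∈ {i : Fin m | i ≠ j}, {t : ℝ | (Qp i - Qp j).IsRoot t} with hbad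
    have hbadfin : bad.Finite := by
      refine Set.Finite.biUnion (Set.toFinite _) fun i hi => ?_
      exact Polynomial.finite_setOf_isRoot (hD i hi)
    obtain ⟨t, ht⟩ := ((Set.Ioo_infinite (by linarith : (0:ℝ) < δ)).diff hbadfin).nonempty
    obtain ⟨htIoo, htbad⟩ := ht
    refine ⟨t, ?_, ?_⟩
    · have hball : t ∈ Metric.ball (0:ℝ) δ := by
        rw [Metric.mem_ball, Real.dist_eq, sub_zero, abs_of_pos htIoo.1]
        exact htIoo.2
      have := hδ hball
      rw [heval j t]
      exact this
    · intro i hij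
      rw [heval i t, heval j t]
      intro hcontra
      apply htbad
      rw [hbad]
      refine Set.mem_biUnion (by exact hij : i ∈ {i : Fin m | i ≠ j}) ?_
      simp only [Set.mem_setOf_eq, Polynomial.IsRoot, Polynomial.eval_sub]
      rw [hcontra, sub_self]
  choose s hs1 hs2 using hchoice
  refine ⟨fun j => fun a b => U j a b + s j * X a b, ?_, ?_, ?_⟩
  · exact fun j => Sep.isKernel_add_smul (hUk j) hXk (s j)
  · exact fun j => hs1 j
  · exact fun i j hij => hs2 j i hij

end
end

section
/- If G is a positive finite simple graph and H is any finite looped-simple graph (a graph that may have loops at some vertices), then the categorical product G × H is positive. Here G × H has vertex set V(G) × V(H), and (i₁,i₂)(j₁,j₂) is an edge if and only if i₁j₁ ∈ E(G) and i₂j₂ ∈ E(H). -/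
open MeasureTheory

noncomputable section

/-- The categorical product of a simple graph `G` with a looped-simple graph given by a
symmetric relation `R`: `(i₁,i₂)(j₁,j₂)` is an edge iff `i₁j₁ ∈ E(G)` and `i₂j₂ ∈ E(H)`. -/
def catProd {V₁ V₂ : Type} (G : SimpleGraph V₁) (R : V₂ → V₂ → Prop) (hR : Symmetric R) :
    SimpleGraph (V₁ × V₂) where
  Adj a b := G.Adj a.1 b.1 ∧ R a.2 b.2
  symm := ⟨fun a b hab => ⟨hab.1.symm, hR hab.2⟩⟩
  loopless := ⟨fun a ha => G.irrefl ha.1⟩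

/-! ### Auxiliary results for the proof -/

open ProbabilityTheory in
/-- Quantile (inverse-CDF) sampling: every probability measure on `ℝ` is the pushforward of
the uniform distribution on `(0,1)` under a measurable map. -/
lemma exists_map_uniform (μ : Measure ℝ) [IsProbabilityMeasure μ] :
    ∃ g : ℝ → ℝ, Measurable g ∧ Measure.map g (volume.restrict (Set.Ioo 0 1)) = μ := by
  set f : ℝ → ℝ := fun x => cdf μ x with hf
  have hmono : Monotone f := monotone_cdf μ
  set g : ℝ → ℝ := fun t => sInf {x | t ≤ f x} with hgdef
  have hne : ∀ t : ℝ, t < 1 → {x | t ≤ f x}.Nonempty := by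
    intro t ht
    obtain ⟨x, hx⟩ := ((tendsto_cdf_atTop μ).eventually_const_le ht).exists
    exact ⟨x, hx⟩
  have hbdd : ∀ t : ℝ, 0 < t → BddBelow {x | t ≤ f x} := by
    intro t ht
    obtain ⟨y, hy⟩ := ((tendsto_cdf_atBot μ).eventually_lt_const ht).exists
    refine ⟨y, fun z hz => ?_⟩
    by_contra hzy
    exact absurd (hz.trans (hmono (not_le.mp hzy).le)) (not_le.mpr hy)
  have key : ∀ t ∈ Set.Ioo (0:ℝ) 1, ∀ x : ℝ, (g t ≤ x ↔ t ≤ f x) := by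
    rintro t ⟨ht0, ht1⟩ x
    constructor
    · intro hgt
      have h1 : ∀ x' ∈ Set.Ioi x, t ≤ f x' := by
        intro x' hx'
        obtain ⟨z, hz, hzx⟩ := (csInf_lt_iff (hbdd t ht0) (hne t ht1)).mp
          (lt_of_le_of_lt hgt hx')
        exact le_trans hz (hmono hzx.le)
      have h2 : Filter.Tendsto f (nhdsWithin x (Set.Ioi x)) (nhds (f x)) :=
        ((cdf μ).right_continuous x).tendsto.mono_left
          (nhdsWithin_mono x Set.Ioi_subset_Ici_self)
      exact ge_of_tendsto h2 (eventually_nhdsWithin_of_forall h1)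
    · intro h
      exact csInf_le (hbdd t ht0) h
  have hmonoOn : MonotoneOn g (Set.Ioo (0:ℝ) 1) := by
    rintro t ⟨ht0, _⟩ t' ⟨_, ht1'⟩ htt'
    exact csInf_le_csInf (hbdd t ht0) (hne t' ht1') (fun x hx => le_trans htt' hx)
  have hae : AEMeasurable g (volume.restrict (Set.Ioo (0:ℝ) 1)) :=
    aemeasurable_restrict_of_monotoneOn measurableSet_Ioo hmonoOn
  have hmapcongr : Measure.map (hae.mk g) (volume.restrict (Set.Ioo (0:ℝ) 1))
      = Measure.map g (volume.restrict (Set.Ioo (0:ℝ) 1)) := Measure.map_congr hae.ae_eq_mk.symm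
  refine ⟨hae.mk g, hae.measurable_mk, ?_⟩
  rw [hmapcongr]
  have hνuniv : (volume.restrict (Set.Ioo (0:ℝ) 1)) Set.univ = 1 := by
    rw [Measure.restrict_apply' measurableSet_Ioo, Set.univ_inter, Real.volume_Ioo]
    norm_num
  haveI : IsProbabilityMeasure (Measure.map g (volume.restrict (Set.Ioo (0:ℝ) 1))) := by
    constructor
    rw [Measure.map_apply_of_aemeasurable hae MeasurableSet.univ, Set.preimage_univ, hνuniv]
  refine Measure.ext_of_Iic _ _ (fun x => ?_)
  rw [Measure.map_apply_of_aemeasurable hae measurableSet_Iic,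
    Measure.restrict_apply' measurableSet_Ioo]
  have hset : g ⁻¹' (Set.Iic x) ∩ Set.Ioo 0 1 = Set.Iic (f x) ∩ Set.Ioo 0 1 := by
    ext t
    simp only [Set.mem_inter_iff, Set.mem_preimage, Set.mem_Iic, and_congr_left_iff]
    intro ht
    exact key t ht x
  rw [hset, ← ProbabilityTheory.ofReal_cdf μ x]
  rcases lt_or_ge (f x) 1 with hfx | hfx
  · have : Set.Iic (f x) ∩ Set.Ioo 0 1 = Set.Ioc 0 (f x) := by
      ext t
      simp only [Set.mem_inter_iff, Set.mem_Iic, Set.mem_Ioo, Set.mem_Ioc]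
      constructor
      · rintro ⟨h1, h2, _⟩; exact ⟨h2, h1⟩
      · rintro ⟨h1, h2⟩; exact ⟨h2, h1, lt_of_le_of_lt h2 hfx⟩
    rw [this, Real.volume_Ioc]
    norm_num
    rfl
  · have hfx1 : f x = 1 := le_antisymm (cdf_le_one μ x) hfx
    have : Set.Iic (f x) ∩ Set.Ioo 0 1 = Set.Ioo 0 1 := by
      rw [Set.inter_eq_right]
      intro t ht
      rw [hfx1]
      exact Set.mem_Iic.mpr ht.2.le
    rw [this, Real.volume_Ioo, show ((cdf μ) x : ℝ) = f x from rfl, hfx1]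
    norm_num

lemma not_countable_UI : ¬ Countable UI := by
  intro h
  have h1 : (Cardinal.mk UI) ≤ Cardinal.aleph0 := Cardinal.mk_le_aleph0
  rw [Cardinal.mk_Icc_real zero_lt_one] at h1
  exact absurd h1 (not_le.mpr Cardinal.aleph0_lt_continuum)

lemma map_val_UI : Measure.map (Subtype.val : UI → ℝ) volume = volume.restrict (Set.Ioo 0 1) := by
  rw [Measure.Subtype.volume_def,
    (MeasurableEmbedding.subtype_coe measurableSet_Icc).map_comap, Subtype.range_coe]
  exact (Measure.restrict_congr_set Ioo_ae_eq_Icc).symm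

/-- There is a measure-preserving map from `[0,1]` to `[0,1]^{V₂}`. -/
lemma exists_phi (V₂ : Type) [Fintype V₂] :
    ∃ φ : UI → (V₂ → UI), Measurable φ ∧
      Measure.map φ volume = (volume : Measure (V₂ → UI)) := by
  rcases isEmpty_or_nonempty V₂ with hV | hV
  · refine ⟨fun _ => Classical.arbitrary _, measurable_const, ?_⟩
    ext s hs
    rcases s.eq_empty_or_nonempty with rfl | ⟨y, hy⟩
    · simp
    · have hsu : s = Set.univ := by
        ext z
        simp only [Set.mem_univ, iff_true]
        rwa [Subsingleton.elim z y]
      rw [hsu, Measure.map_apply measurable_const MeasurableSet.univ]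
      simp
  · have hnc : ¬ Countable (V₂ → UI) := by
      intro hC
      have hinj : Function.Injective (fun (x : UI) (_ : V₂) => x) := by
        intro a b hab
        exact congrFun hab (Classical.arbitrary V₂)
      exact not_countable_UI (Function.Injective.countable hinj)
    have hncR : ¬ Countable ℝ := by
      intro hC
      exact Cardinal.not_countable_real (Set.countable_univ)
    let e : (V₂ → UI) ≃ᵐ ℝ := PolishSpace.measurableEquivOfNotCountable hnc hncR
    set P : Measure (V₂ → UI) := volume with hP
    set μ : Measure ℝ := Measure.map e P with hμ
    haveI : IsProbabilityMeasure μ := Measure.isProbabilityMeasure_map e.measurable.aemeasurable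
    obtain ⟨g, hgm, hgmap⟩ := exists_map_uniform μ
    refine ⟨fun x => e.symm (g (x : ℝ)),
      (e.symm.measurable.comp hgm).comp measurable_subtype_coe, ?_⟩
    have : (fun x : UI => e.symm (g (x : ℝ)))
        = (e.symm ∘ g) ∘ (Subtype.val : UI → ℝ) := rfl
    rw [this, ← Measure.map_map (e.symm.measurable.comp hgm) measurable_subtype_coe,
      map_val_UI, ← Measure.map_map e.symm.measurable hgm, hgmap, hμ,
      Measure.map_map e.symm.measurable e.measurable]
    simp [MeasurableEquiv.symm_comp_self]

lemma out_adj {V : Type} (G : SimpleGraph V) {e : Sym2 V} (he : e ∈ G.edgeSet) :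
    G.Adj (Quot.out e).1 (Quot.out e).2 := by
  have h : Sym2.mk (Quot.out e).1 (Quot.out e).2 = e := Quot.out_eq e
  rw [← h] at he
  exact (G.mem_edgeSet).mp he

lemma out_pair {α : Type} (a b : α) :
    Quot.out (s(a,b)) = (a,b) ∨ Quot.out (s(a,b)) = (b,a) := by
  have h : Sym2.mk (Quot.out s(a,b)).1 (Quot.out s(a,b)).2 = s(a,b) := Quot.out_eq _
  have h' : s((Quot.out s(a,b)).1, (Quot.out s(a,b)).2) = s(a,b) := h
  rcases Sym2.eq_iff.mp h' with ⟨h1, h2⟩ | ⟨h1, h2⟩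
  · left; exact Prod.ext h1 h2
  · right; exact Prod.ext h1 h2

lemma sym_out_pair {α : Type} (Φ : α → α → ℝ) (hΦ : ∀ x y, Φ x y = Φ y x) (a b : α) :
    Φ (Quot.out s(a,b)).1 (Quot.out s(a,b)).2 = Φ a b := by
  rcases out_pair a b with h | h <;> rw [h]
  exact hΦ b a

/-- The edges of the categorical product correspond to pairs of an (oriented) edge of `G`
and an (ordered) `R`-pair. -/
lemma prod_edges {V₁ V₂ : Type} [Fintype V₂] (G : SimpleGraph V₁)
    (R : V₂ → V₂ → Prop) (hR : Symmetric R)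
    [DecidablePred fun uv : V₂ × V₂ => R uv.1 uv.2]
    [Fintype G.edgeSet] [Fintype (catProd G R hR).edgeSet]
    (Φ : (V₁ × V₂) → (V₁ × V₂) → ℝ) (hΦ : ∀ x y, Φ x y = Φ y x) :
    ∏ ep ∈ (catProd G R hR).edgeFinset, Φ (Quot.out ep).1 (Quot.out ep).2
      = ∏ e ∈ G.edgeFinset, ∏ uv ∈ Finset.univ.filter (fun uv : V₂ × V₂ => R uv.1 uv.2),
          Φ ((Quot.out e).1, uv.1) ((Quot.out e).2, uv.2) := by
  rw [← Finset.prod_product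
    (f := fun x : Sym2 V₁ × (V₂ × V₂) => Φ ((Quot.out x.1).1, x.2.1) ((Quot.out x.1).2, x.2.2))]
  refine (Finset.prod_bij
    (fun x _ => s(((Quot.out x.1).1, x.2.1), ((Quot.out x.1).2, x.2.2))) ?_ ?_ ?_ ?_).symm
  · rintro ⟨e, uv⟩ hx
    rw [Finset.mem_product, Finset.mem_filter] at hx
    rw [SimpleGraph.mem_edgeFinset, SimpleGraph.mem_edgeSet]
    exact ⟨out_adj G (SimpleGraph.mem_edgeFinset.mp hx.1), hx.2.2⟩
  · rintro ⟨e, uv⟩ h1 ⟨e', uv'⟩ h2 heq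
    rw [Finset.mem_product, Finset.mem_filter] at h1 h2
    have hadj : G.Adj (Quot.out e).1 (Quot.out e).2 :=
      out_adj G (SimpleGraph.mem_edgeFinset.mp h1.1)
    have hee' : ∀ (h1 : (Quot.out e).1 = (Quot.out e').1) (h2 : (Quot.out e).2 = (Quot.out e').2),
        e = e' := by
      intro ha hb
      have h3 : Sym2.mk (Quot.out e).1 (Quot.out e).2 = Sym2.mk (Quot.out e').1 (Quot.out e').2 := by
        rw [show Quot.out e = Quot.out e' from Prod.ext ha hb]
      exact ((Quot.out_eq e).symm.trans h3).trans (Quot.out_eq e')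
    rcases Sym2.eq_iff.mp heq with ⟨ha, hb⟩ | ⟨ha, hb⟩
    · have h1a := congrArg Prod.fst ha
      have h1b := congrArg Prod.snd ha
      have h2a := congrArg Prod.fst hb
      have h2b := congrArg Prod.snd hb
      exact Prod.ext (hee' h1a h2a) (Prod.ext h1b h2b)
    · have h1a : (Quot.out e).1 = (Quot.out e').2 := congrArg Prod.fst ha
      have h2a : (Quot.out e).2 = (Quot.out e').1 := congrArg Prod.fst hb
      exfalso
      have hee : e = e' := by
        have h3 : Sym2.mk (Quot.out e).1 (Quot.out e).2 = Sym2.mk (Quot.out e').1 (Quot.out e').2 := by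
          rw [h1a, h2a]
          exact Sym2.eq_swap
        exact ((Quot.out_eq e).symm.trans h3).trans (Quot.out_eq e')
      rw [← hee] at h1a
      exact G.loopless.irrefl (Quot.out e).2 (by rwa [h1a] at hadj)
  · intro ep hep
    have hadj : (catProd G R hR).Adj (Quot.out ep).1 (Quot.out ep).2 :=
      out_adj _ (SimpleGraph.mem_edgeFinset.mp hep)
    obtain ⟨hG, hRuv⟩ := hadj
    have hemem : s((Quot.out ep).1.1, (Quot.out ep).2.1) ∈ G.edgeFinset :=
      SimpleGraph.mem_edgeFinset.mpr ((G.mem_edgeSet).mpr hG)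
    rcases out_pair (Quot.out ep).1.1 (Quot.out ep).2.1 with hoe | hoe
    · refine ⟨(s((Quot.out ep).1.1, (Quot.out ep).2.1), ((Quot.out ep).1.2, (Quot.out ep).2.2)),
        ?_, ?_⟩
      · rw [Finset.mem_product, Finset.mem_filter]
        exact ⟨hemem, Finset.mem_univ _, hRuv⟩
      · simp only [hoe, Prod.mk.eta]
        exact Quot.out_eq ep
    · refine ⟨(s((Quot.out ep).1.1, (Quot.out ep).2.1), ((Quot.out ep).2.2, (Quot.out ep).1.2)),
        ?_, ?_⟩
      · rw [Finset.mem_product, Finset.mem_filter]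
        exact ⟨hemem, Finset.mem_univ _, hR hRuv⟩
      · simp only [hoe, Prod.mk.eta]
        rw [Sym2.eq_swap]
        exact Quot.out_eq ep
  · rintro ⟨e, uv⟩ hx
    exact (sym_out_pair Φ hΦ _ _).symm

/-- If `G` is positive and `H` is any looped-simple graph, then `G × H` is positive. -/
theorem positive_catProd {V₁ V₂ : Type} [Fintype V₁] [Fintype V₂] (G : SimpleGraph V₁)
    (R : V₂ → V₂ → Prop) (hR : Symmetric R) (h : Positive G) :
    Positive (catProd G R hR) := by
  classical
  intro W hW
  obtain ⟨hWm, hWs, C, hWb⟩ := hW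
  have hC0 : 0 ≤ C := le_trans (abs_nonneg _) (hWb ⟨0, by norm_num⟩ ⟨0, by norm_num⟩)
  obtain ⟨φ, hφm, hφmap⟩ := exists_phi V₂
  set RF : Finset (V₂ × V₂) := Finset.univ.filter (fun uv : V₂ × V₂ => R uv.1 uv.2) with hRF
  set W' : UI → UI → ℝ := fun x y => ∏ uv ∈ RF, W (φ x uv.1) (φ y uv.2) with hW'def
  have hK : IsKernel W' := by
    refine ⟨?_, ?_, C ^ RF.card, ?_⟩
    · refine Finset.measurable_prod _ fun uv _ => ?_
      exact hWm.comp ((((measurable_pi_apply uv.1).comp hφm).comp measurable_fst).prodMk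
        (((measurable_pi_apply uv.2).comp hφm).comp measurable_snd))
    · intro x y
      rw [hW'def]
      refine Finset.prod_nbij' Prod.swap Prod.swap ?_ ?_ ?_ ?_ ?_
      · intro uv huv
        rw [hRF, Finset.mem_filter] at huv ⊢
        exact ⟨Finset.mem_univ _, hR huv.2⟩
      · intro uv huv
        rw [hRF, Finset.mem_filter] at huv ⊢
        exact ⟨Finset.mem_univ _, hR huv.2⟩
      · intro uv _; exact Prod.swap_swap uv
      · intro uv _; exact Prod.swap_swap uv
      · intro uv _
        exact hWs (φ x uv.1) (φ y uv.2)
    · intro x y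
      calc |∏ uv ∈ RF, W (φ x uv.1) (φ y uv.2)|
          = ∏ uv ∈ RF, |W (φ x uv.1) (φ y uv.2)| := Finset.abs_prod _ _
        _ ≤ ∏ _uv ∈ RF, C :=
            Finset.prod_le_prod (fun _ _ => abs_nonneg _) (fun uv _ => hWb _ _)
        _ = C ^ RF.card := Finset.prod_const C
  have hGW' := h W' hK
  -- the change of variables map
  set ψ : (V₁ → UI) → ((V₁ × V₂) → UI) := fun p x => φ (p x.1) x.2 with hψdef
  have hψm : Measurable ψ :=
    measurable_pi_lambda _ (fun x =>
      (measurable_pi_apply x.2).comp (hφm.comp (measurable_pi_apply x.1)))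
  have hψmap : Measure.map ψ volume = (volume : Measure ((V₁ × V₂) → UI)) := by
    rw [show (volume : Measure ((V₁ × V₂) → UI)) = Measure.pi (fun _ => volume) from volume_pi]
    symm
    refine Measure.pi_eq fun s hs => ?_
    rw [Measure.map_apply hψm (MeasurableSet.univ_pi hs)]
    have hpre : ψ ⁻¹' (Set.univ.pi s)
        = Set.univ.pi (fun a : V₁ => φ ⁻¹' (Set.univ.pi (fun u => s (a, u)))) := by
      ext p
      simp only [Set.mem_preimage, Set.mem_univ_pi, hψdef, Prod.forall]
    rw [hpre, show (volume : Measure (V₁ → UI)) = Measure.pi (fun _ => volume) from volume_pi,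
      Measure.pi_pi, Fintype.prod_prod_type]
    refine Finset.prod_congr rfl fun a _ => ?_
    rw [← Measure.map_apply hφm (MeasurableSet.univ_pi (fun u => hs (a, u))), hφmap,
      show (volume : Measure (V₂ → UI)) = Measure.pi (fun _ => volume) from volume_pi,
      Measure.pi_pi]
  -- the equality of densities
  have hEq : homDensity (catProd G R hR) W = homDensity G W' := by
    simp only [homDensity]
    have hIm : Measurable (fun P : (V₁ × V₂) → UI =>
        ∏ e ∈ G.edgeFinset, ∏ uv ∈ RF,
          W (P ((Quot.out e).1, uv.1)) (P ((Quot.out e).2, uv.2))) := by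
      refine Finset.measurable_prod _ fun e _ => Finset.measurable_prod _ fun uv _ => ?_
      have : (fun P : (V₁ × V₂) → UI => W (P ((Quot.out e).1, uv.1)) (P ((Quot.out e).2, uv.2)))
          = Function.uncurry W ∘
            (fun P : (V₁ × V₂) → UI => (P ((Quot.out e).1, uv.1), P ((Quot.out e).2, uv.2))) :=
        rfl
      rw [this]
      exact hWm.comp ((measurable_pi_apply ((Quot.out e).1, uv.1)).prodMk
        (measurable_pi_apply ((Quot.out e).2, uv.2)))
    calc ∫ p : (V₁ × V₂) → UI, ∏ e ∈ (catProd G R hR).edgeFinset,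
            W (p (Quot.out e).1) (p (Quot.out e).2)
        = ∫ P : (V₁ × V₂) → UI, ∏ e ∈ G.edgeFinset, ∏ uv ∈ RF,
            W (P ((Quot.out e).1, uv.1)) (P ((Quot.out e).2, uv.2)) := by
          refine integral_congr_ae (ae_of_all _ fun P => ?_)
          exact prod_edges G R hR (fun a b => W (P a) (P b)) (fun a b => hWs (P a) (P b))
      _ = ∫ P : (V₁ × V₂) → UI, (∏ e ∈ G.edgeFinset, ∏ uv ∈ RF,
            W (P ((Quot.out e).1, uv.1)) (P ((Quot.out e).2, uv.2)))
            ∂(Measure.map ψ volume) := by rw [hψmap]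
      _ = ∫ p : V₁ → UI, ∏ e ∈ G.edgeFinset, ∏ uv ∈ RF,
            W (ψ p ((Quot.out e).1, uv.1)) (ψ p ((Quot.out e).2, uv.2)) :=
          integral_map hψm.aemeasurable hIm.aestronglyMeasurable
      _ = ∫ p : V₁ → UI, ∏ e ∈ G.edgeFinset, W' (p (Quot.out e).1) (p (Quot.out e).2) := rfl
  rw [hEq]
  exact hGW'
end
end

section
/- If a finite simple graph G is positive, then so is its r-fold blow-up G(r) for every positive integer r, where G(r) is obtained from G by replacing each vertex v with r copies v₁, …, v_r, and joining u_i to v_j if and only if uv ∈ E(G). -/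
open MeasureTheory

noncomputable section

/-- The `r`-fold blow-up of `G`: each vertex `v` is replaced by `r` copies, and `(u,i)` is
adjacent to `(v,j)` iff `uv ∈ E(G)`. -/
def blowup {V : Type} (G : SimpleGraph V) (r : ℕ) : SimpleGraph (V × Fin r) where
  Adj a b := G.Adj a.1 b.1
  symm := ⟨fun _ _ hab => G.adj_symm hab⟩
  loopless := ⟨fun a ha => G.irrefl ha⟩


section Aux
open scoped Classical
open MeasureTheory ProbabilityTheory Set Filter Topology

lemma out_eq_or {α : Type*} (z : Sym2 α) (c d : α) (h : z = s(c, d)) :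
    Quot.out z = (c, d) ∨ Quot.out z = (d, c) := by
  have h2 : s((Quot.out z).1, (Quot.out z).2) = s(c, d) := by rw [← h]; exact Quot.out_eq z
  rcases (Sym2.mk_eq_mk_iff (q := (c, d))).1 h2 with h3 | h3
  · exact Or.inl h3
  · exact Or.inr h3

lemma adj_out {V : Type*} (G : SimpleGraph V) {e : Sym2 V} (he : e ∈ G.edgeSet) :
    G.Adj (Quot.out e).1 (Quot.out e).2 := by
  have h2 : s((Quot.out e).1, (Quot.out e).2) = e := Quot.out_eq e
  rw [← h2] at he
  rw [show (Quot.out e) = ((Quot.out e).1, (Quot.out e).2) from rfl] at he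
  exact (SimpleGraph.mem_edgeSet G).1 he

lemma blow_prod_eq {V : Type} (G : SimpleGraph V) (r : ℕ)
    [Fintype (blowup G r).edgeSet] [Fintype G.edgeSet]
    (k : (V × Fin r) → (V × Fin r) → ℝ) (hk : ∀ a b, k a b = k b a) :
    ∏ e ∈ (blowup G r).edgeFinset, k (Quot.out e).1 (Quot.out e).2 =
    ∏ e ∈ G.edgeFinset, ∏ ij : Fin r × Fin r,
      k ((Quot.out e).1, ij.1) ((Quot.out e).2, ij.2) := by
  have kout : ∀ (c d : V × Fin r), (blowup G r).Adj c d →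
      k (Quot.out s(c, d)).1 (Quot.out s(c, d)).2 = k c d := by
    intro c d _
    rcases out_eq_or s(c, d) c d rfl with h | h <;> rw [h]
    exact hk d c
  rw [← Finset.prod_product' G.edgeFinset Finset.univ]
  refine (Finset.prod_bij
      (fun x _ => s((((Quot.out x.1).1 : V), x.2.1), ((Quot.out x.1).2, x.2.2))) ?_ ?_ ?_ ?_).symm
  · rintro ⟨e, ij⟩ hx
    have he := Finset.mem_product.1 hx |>.1
    rw [SimpleGraph.mem_edgeFinset] at he
    have : G.Adj (Quot.out e).1 (Quot.out e).2 := adj_out G he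
    rw [SimpleGraph.mem_edgeFinset]
    exact this
  · rintro ⟨e, ij⟩ hx ⟨e', ij'⟩ hx' heq
    have he := (SimpleGraph.mem_edgeFinset).1 (Finset.mem_product.1 hx).1
    have hadj : G.Adj (Quot.out e).1 (Quot.out e).2 := adj_out G he
    rcases Sym2.eq_iff.1 heq with ⟨h1, h2⟩ | ⟨h1, h2⟩ <;> dsimp only at h1 h2
    · injection h1 with hu hi
      injection h2 with hv hj
      have hee : e = e' := by
        rw [← Quot.out_eq e, ← Quot.out_eq e']
        congr 1
        exact Prod.ext hu hv
      exact Prod.ext hee (Prod.ext hi hj)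
    · -- swapped case: contradiction with irreflexivity
      injection h1 with hu hi
      injection h2 with hv hj
      have hee : e = e' := by
        rw [← Quot.out_eq e, ← Quot.out_eq e']
        have h5 : (Quot.out e : V × V) = ((Quot.out e).1, (Quot.out e).2) := rfl
        rw [h5, show (Quot.out e' : V × V) = ((Quot.out e').1, (Quot.out e').2) from rfl]
        rw [hu, hv]
        exact Sym2.eq_swap
      rw [hee] at hu hadj
      exact absurd hu (G.ne_of_adj hadj)
  · intro b hb
    rw [SimpleGraph.mem_edgeFinset] at hb
    obtain ⟨a, b', rfl⟩ : ∃ c d, b = s(c, d) := ⟨(Quot.out b).1, (Quot.out b).2, by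
      exact (Quot.out_eq b).symm⟩
    have hadj : (blowup G r).Adj a b' := (SimpleGraph.mem_edgeSet _).1 hb
    have hGadj : G.Adj a.1 b'.1 := hadj
    have heG : s(a.1, b'.1) ∈ G.edgeFinset := by
      rw [SimpleGraph.mem_edgeFinset]; exact hGadj
    rcases out_eq_or s(a.1, b'.1) a.1 b'.1 rfl with h | h
    · refine ⟨(s(a.1, b'.1), (a.2, b'.2)), Finset.mem_product.2 ⟨heG, Finset.mem_univ _⟩, ?_⟩
      show s(((Quot.out s(a.1, b'.1)).1, a.2), ((Quot.out s(a.1, b'.1)).2, b'.2)) = s(a, b')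
      rw [h]
    · refine ⟨(s(a.1, b'.1), (b'.2, a.2)), Finset.mem_product.2 ⟨heG, Finset.mem_univ _⟩, ?_⟩
      show s(((Quot.out s(a.1, b'.1)).1, b'.2), ((Quot.out s(a.1, b'.1)).2, a.2)) = s(a, b')
      rw [h]
      exact Sym2.eq_swap
  · rintro ⟨e, ij⟩ hx
    have he := (SimpleGraph.mem_edgeFinset).1 (Finset.mem_product.1 hx).1
    have hadj' : (blowup G r).Adj ((Quot.out e).1, ij.1) ((Quot.out e).2, ij.2) :=
      adj_out G he
    exact (kout _ _ hadj').symm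

lemma measurePreserving_blowMap {V : Type} [Fintype V] {r : ℕ}
    (φ : UI → (Fin r → UI)) (hφ : MeasurePreserving φ volume volume) :
    MeasurePreserving (fun (q : V → UI) (vi : V × Fin r) => φ (q vi.1) vi.2)
      volume volume := by
  have hmeas : Measurable (fun (q : V → UI) (vi : V × Fin r) => φ (q vi.1) vi.2) :=
    measurable_pi_iff.2 fun vi =>
      (measurable_pi_apply vi.2).comp (hφ.measurable.comp (measurable_pi_apply vi.1))
  refine ⟨hmeas, ?_⟩
  rw [show (volume : Measure ((V × Fin r) → UI)) = Measure.pi fun _ => volume from rfl]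
  refine (Measure.pi_eq fun s hs => ?_).symm
  rw [Measure.map_apply hmeas (MeasurableSet.univ_pi hs)]
  have hpre : (fun (q : V → UI) (vi : V × Fin r) => φ (q vi.1) vi.2) ⁻¹' (Set.pi Set.univ s) =
      Set.pi Set.univ (fun v => φ ⁻¹' (Set.pi Set.univ (fun i => s (v, i)))) := by
    ext q
    simp only [Set.mem_preimage, Set.mem_pi, Set.mem_univ, forall_true_left, Prod.forall]

  rw [hpre]
  rw [show (volume : Measure (V → UI)) = Measure.pi fun _ => volume from rfl, Measure.pi_pi]
  have hfac : ∀ v : V, (volume : Measure UI) (φ ⁻¹' (Set.pi Set.univ (fun i => s (v, i)))) =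
      ∏ i : Fin r, (volume : Measure UI) (s (v, i)) := by
    intro v
    rw [hφ.measure_preimage (MeasurableSet.univ_pi fun i => hs (v, i)).nullMeasurableSet]
    rw [show (volume : Measure (Fin r → UI)) = Measure.pi fun _ => volume from rfl,
      Measure.pi_pi]
  simp_rw [hfac]
  exact (Fintype.prod_prod_type (fun vi : V × Fin r => (volume : Measure UI) (s vi))).symm

noncomputable def qfun (ν : Measure ℝ) : ℝ → ℝ :=
  fun x => sInf {t | x ≤ cdf ν t}

lemma qfun_le_iff (ν : Measure ℝ) [IsProbabilityMeasure ν] {x : ℝ} (t : ℝ)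
    (h0 : 0 < x) (h1 : x < 1) :
    qfun ν x ≤ t ↔ x ≤ cdf ν t := by
  have hne : {s | x ≤ cdf ν s}.Nonempty :=
    ((tendsto_cdf_atTop ν).eventually (eventually_ge_nhds h1)).exists
  have hbdd : BddBelow {s | x ≤ cdf ν s} := by
    obtain ⟨b, hb⟩ := eventually_atBot.1
      ((tendsto_cdf_atBot ν).eventually (eventually_lt_nhds h0))
    exact ⟨b, fun s hs => le_of_not_gt fun hlt => absurd hs (not_le.2 (hb s hlt.le))⟩
  constructor
  · intro hle
    have hmem : x ≤ cdf ν (qfun ν x) := by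
      have htd : Tendsto (cdf ν) (𝓝[>] (qfun ν x)) (𝓝 (cdf ν (qfun ν x))) :=
        ((cdf ν).right_continuous _).mono_left (nhdsWithin_mono _ Ioi_subset_Ici_self)
      refine ge_of_tendsto htd ?_
      filter_upwards [self_mem_nhdsWithin] with u hu
      obtain ⟨s', hs', hlt⟩ := (csInf_lt_iff hbdd hne).1 hu
      exact le_trans hs' ((cdf ν).mono hlt.le)
    exact hmem.trans ((cdf ν).mono hle)
  · exact fun ht => csInf_le hbdd ht

lemma exists_phi_s7 (r : ℕ) (hr : 0 < r) :
    ∃ φ : UI → (Fin r → UI), MeasurePreserving φ volume volume := by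
  haveI : Nonempty (Fin r) := ⟨⟨0, hr⟩⟩
  haveI hA : NullSingletonClass (volume : Measure UI) := by
    constructor
    intro x
    rw [show (volume : Measure UI) = Measure.comap Subtype.val volume from rfl]
    rw [Measure.comap_apply Subtype.val Subtype.coe_injective
      (fun s hs => (MeasurableEmbedding.subtype_coe measurableSet_Icc).measurableSet_image.2 hs)
      volume (measurableSet_singleton x)]
    rw [Set.image_singleton]
    exact measure_singleton _
  haveI hA2 : NullSingletonClass (volume : Measure (Fin r → UI)) := inferInstance
  have hUI : ¬ Countable UI := by
    intro hc
    have hc2 : (Set.Icc (0:ℝ) 1).Countable := Set.countable_coe_iff.1 hc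
    have h3 := hc2.measure_zero (volume : Measure ℝ)
    rw [Real.volume_Icc] at h3
    norm_num at h3
  have hX : ¬ Countable (Fin r → UI) := by
    intro hc
    have hinj : Function.Injective (fun (x : UI) (_ : Fin r) => x) := by
      intro a b hab; exact congrFun hab ⟨0, hr⟩
    exact hUI (hinj.countable)
  have hR : ¬ Countable ℝ := fun _ => Cardinal.not_countable_real Set.countable_univ
  let e : (Fin r → UI) ≃ᵐ ℝ :=
    PolishSpace.measurableEquivOfNotCountable hX hR
  set ν : Measure ℝ := Measure.map e volume with hν
  haveI : IsProbabilityMeasure ν := Measure.isProbabilityMeasure_map e.measurable.aemeasurable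
  haveI : NullSingletonClass ν := by
    constructor
    intro x
    rw [hν, Measure.map_apply e.measurable (measurableSet_singleton x)]
    have hpre : (e ⁻¹' {x}) = {e.symm x} := by
      ext y
      simp only [mem_preimage, mem_singleton_iff]
      constructor
      · intro hy; rw [← hy]; exact (e.symm_apply_apply y).symm
      · intro hy; rw [hy]; exact e.apply_symm_apply x
    rw [hpre]
    exact measure_singleton _
  -- the quantile map
  set g : UI → ℝ := fun u => qfun ν u.val with hg
  -- endpoints
  let a0 : UI := ⟨0, by constructor <;> norm_num⟩
  let a1 : UI := ⟨1, by constructor <;> norm_num⟩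
  have hBnull : (volume : Measure UI) ({a0, a1} : Set UI) = 0 := by
    refine measure_union_null (measure_singleton _) (measure_singleton _)
  have hgood : ∀ u : UI, u ∉ ({a0, a1} : Set UI) → 0 < u.val ∧ u.val < 1 := by
    intro u hu
    simp only [mem_insert_iff, mem_singleton_iff] at hu
    push_neg at hu
    obtain ⟨h0, h1⟩ := hu
    constructor
    · cases lt_or_eq_of_le u.2.1 with
      | inl h => exact h
      | inr h => exact absurd (Subtype.ext h.symm) h0
    · cases lt_or_eq_of_le u.2.2 with
      | inl h => exact h
      | inr h => exact absurd (Subtype.ext h) h1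
  have hmg : Measurable g := by
    apply measurable_of_Iic
    intro t
    have hsplit : g ⁻¹' Iic t =
        ((Subtype.val ⁻¹' Iic (cdf ν t) : Set UI) \ {a0, a1}) ∪ (g ⁻¹' Iic t ∩ {a0, a1}) := by
      ext u
      by_cases hu : u ∈ ({a0, a1} : Set UI)
      · simp [hu]
      · obtain ⟨h0, h1⟩ := hgood u hu
        simp only [mem_preimage, mem_Iic, mem_union, mem_diff, mem_inter_iff, hu, and_true,
          and_false, or_false, not_false_iff]
        exact qfun_le_iff ν t h0 h1
    rw [hsplit]
    have hfin : (({a0, a1} : Set UI)).Finite := (Set.finite_singleton a1).insert a0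
    exact ((measurable_subtype_coe measurableSet_Iic).diff hfin.measurableSet).union
      ((hfin.subset (inter_subset_right)).measurableSet)
  -- map equality
  have hmap : Measure.map g volume = ν := by
    haveI : IsProbabilityMeasure (Measure.map g volume) :=
      Measure.isProbabilityMeasure_map hmg.aemeasurable
    refine Measure.ext_of_Iic _ _ (fun t => ?_)
    rw [Measure.map_apply hmg measurableSet_Iic]
    have hae : (g ⁻¹' Iic t : Set UI) =ᵐ[volume] (Subtype.val ⁻¹' Iic (cdf ν t) : Set UI) := by
      rw [Filter.eventuallyEq_set]
      have hset2 : {u : UI | ¬ u ∉ ({a0, a1} : Set UI)} = ({a0, a1} : Set UI) := by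
        ext u; simp only [mem_setOf_eq, not_not]
      have hmost : ∀ᵐ u : UI ∂volume, u ∉ ({a0, a1} : Set UI) := by
        rw [ae_iff, hset2]; exact hBnull
      filter_upwards [hmost] with u hu
      obtain ⟨h0, h1⟩ := hgood u hu
      simp only [mem_preimage, mem_Iic]
      exact qfun_le_iff ν t h0 h1
    rw [measure_congr hae]
    have himg : ∀ s : Set UI, MeasurableSet s → MeasurableSet (Subtype.val '' s) :=
      fun s hs => (MeasurableEmbedding.subtype_coe measurableSet_Icc).measurableSet_image.2 hs
    rw [show (volume : Measure UI) = Measure.comap Subtype.val volume from rfl]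
    rw [Measure.comap_apply Subtype.val Subtype.coe_injective himg volume
      (measurable_subtype_coe measurableSet_Iic)]
    rw [Subtype.image_preimage_coe]
    have hset : (Icc (0:ℝ) 1 ∩ Iic (cdf ν t)) = Icc (0:ℝ) (cdf ν t) := by
      ext x
      simp only [mem_inter_iff, mem_Icc, mem_Iic]
      constructor
      · rintro ⟨⟨hx0, _⟩, hxt⟩; exact ⟨hx0, hxt⟩
      · rintro ⟨hx0, hxt⟩; exact ⟨⟨hx0, hxt.trans (cdf_le_one ν t)⟩, hxt⟩
    rw [hset, Real.volume_Icc, sub_zero, ofReal_cdf]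
  refine ⟨fun u => e.symm (g u), ⟨e.symm.measurable.comp hmg, ?_⟩⟩
  have : (fun u => e.symm (g u)) = (e.symm ∘ g) := rfl
  rw [this, ← Measure.map_map e.symm.measurable hmg, hmap, hν,
    Measure.map_map e.symm.measurable e.measurable]
  have hid : (⇑e.symm ∘ ⇑e) = id := by
    funext y; exact e.symm_apply_apply y
  rw [hid, Measure.map_id]

end Aux
open scoped Classical

/-- If `G` is positive, then so is its `r`-fold blow-up for every positive integer `r`. -/
theorem positive_blowup {V : Type} [Fintype V] (G : SimpleGraph V) (h : Positive G)
    (r : ℕ) (hr : 0 < r) : Positive (blowup G r) := by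
  intro W hW
  obtain ⟨hWm, hWs, C, hWb⟩ := hW
  obtain ⟨φ, hφ⟩ := exists_phi_s7 r hr
  set W' : UI → UI → ℝ := fun x y => ∏ ij : Fin r × Fin r, W (φ x ij.1) (φ y ij.2) with hW'def
  have hker : IsKernel W' := by
    refine ⟨?_, ?_, ?_⟩
    · show Measurable fun xy : UI × UI => ∏ ij : Fin r × Fin r, W (φ xy.1 ij.1) (φ xy.2 ij.2)
      apply Finset.measurable_prod
      intro ij _
      have hc : Measurable (Function.uncurry W ∘
          (fun xy : UI × UI => (φ xy.1 ij.1, φ xy.2 ij.2))) :=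
        hWm.comp (((measurable_pi_apply ij.1).comp
          (hφ.measurable.comp measurable_fst)).prodMk
          ((measurable_pi_apply ij.2).comp (hφ.measurable.comp measurable_snd)))
      exact hc
    · intro x y
      exact Fintype.prod_equiv (Equiv.prodComm (Fin r) (Fin r))
        (fun ij => W (φ x ij.1) (φ y ij.2)) (fun ij => W (φ y ij.1) (φ x ij.2))
        (fun ij => hWs _ _)
    · refine ⟨C ^ (Fintype.card (Fin r × Fin r)), fun x y => ?_⟩
      have h1 : |W' x y| = ∏ ij : Fin r × Fin r, |W (φ x ij.1) (φ y ij.2)| :=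
        Finset.abs_prod _ _
      rw [h1]
      calc (∏ ij : Fin r × Fin r, |W (φ x ij.1) (φ y ij.2)|)
          ≤ ∏ _ij : Fin r × Fin r, C :=
            Finset.prod_le_prod (fun _ _ => abs_nonneg _) (fun ij _ => hWb _ _)
        _ = C ^ (Fintype.card (Fin r × Fin r)) := by
            rw [Finset.prod_const, Finset.card_univ]
  have hmeasB : Measurable (fun p : (V × Fin r) → UI =>
      ∏ e ∈ G.edgeFinset, ∏ ij : Fin r × Fin r,
        W (p ((Quot.out e).1, ij.1)) (p ((Quot.out e).2, ij.2))) := by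
    apply Finset.measurable_prod
    intro e _
    apply Finset.measurable_prod
    intro ij _
    have hc : Measurable (Function.uncurry W ∘
        (fun p : (V × Fin r) → UI => (p ((Quot.out e).1, ij.1), p ((Quot.out e).2, ij.2)))) :=
      hWm.comp ((measurable_pi_apply ((Quot.out e).1, ij.1)).prodMk
        (measurable_pi_apply ((Quot.out e).2, ij.2)))
    exact hc
  have hΨ := measurePreserving_blowMap (V := V) φ hφ
  have key : homDensity (blowup G r) W = homDensity G W' := by
    unfold homDensity
    calc ∫ p : (V × Fin r) → UI,
            ∏ e ∈ (blowup G r).edgeFinset, W (p (Quot.out e).1) (p (Quot.out e).2)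
        = ∫ p : (V × Fin r) → UI, ∏ e ∈ G.edgeFinset, ∏ ij : Fin r × Fin r,
            W (p ((Quot.out e).1, ij.1)) (p ((Quot.out e).2, ij.2)) :=
          integral_congr_ae (MeasureTheory.ae_of_all _ fun p =>
            blow_prod_eq G r (fun a b => W (p a) (p b)) (fun a b => hWs _ _))
      _ = ∫ q : V → UI, ∏ e ∈ G.edgeFinset, ∏ ij : Fin r × Fin r,
            W (φ (q (Quot.out e).1) ij.1) (φ (q (Quot.out e).2) ij.2) := by
          rw [← hΨ.map_eq, integral_map hΨ.measurable.aemeasurable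
            hmeasB.aestronglyMeasurable]
      _ = ∫ q : V → UI, ∏ e ∈ G.edgeFinset, W' (q (Quot.out e).1) (q (Quot.out e).2) := rfl
  rw [key]
  exact h W' hker
end
end

section
/- Let G = (V, E) be a finite simple graph and F₁ = ∏_{v ∈ V} f₁(v) a partition-box defined by a finite measurable partition P of [0,1] into sets of positive measure and a function f₁ : V → P. Let Q ∈ P, let U be the union of an arbitrary set of classes of P, and let d be a positive non-integer real number. Split Q into two parts of positive measure Q⁺ and Q⁻. For v ∈ V let deg(v, U) be the number of neighbors u of v with f₁(u) ⊆ U. Define f₂(v) = f₁(v) if f₁(v) ≠ Q; f₂(v) = Q⁺ if f₁(v) = Q and deg(v, U) > d; f₂(v) = Q⁻ if f₁(v) = Q and deg(v, U) < d; and let F₂ = ∏_{v ∈ V} f₂(v). Then there exists a pair (W, ω) with W : [0,1]² → [0,1] measurable and ω : [0,1] → [0,∞) bounded measurable that emphasizes F₂ from F₁, i.e., with s = sup_{p ∈ F₁} (∏_{v ∈ V} ω(p(v)) · ∏_{(a,b) ∈ E} W(p(a), p(b))), the set of p ∈ F₁ attaining s is exactly F₂, and F₂ has positive Lebesgue measure.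 -/
open MeasureTheory

noncomputable section

/-- A weight function is a bounded measurable function `[0,1] → (0,∞)`. -/
def IsWeight (ω : UI → ℝ) : Prop :=
  Measurable ω ∧ (∀ x, 0 < ω x) ∧ ∃ C : ℝ, ∀ x, ω x ≤ C

open scoped Classical in
/-- The weight of a map `p : V → [0,1]`: `∏_{v ∈ V} ω(p(v)) · ∏_{(a,b) ∈ E} W(p(a),p(b))`. -/
noncomputable def mapWeight {V : Type} [Fintype V] (G : SimpleGraph V) (W : UI → UI → ℝ)
    (ω : UI → ℝ) (p : V → UI) : ℝ :=
  (∏ v, ω (p v)) * ∏ e ∈ G.edgeFinset, W (p (Quot.out e).1) (p (Quot.out e).2)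

/-- `t(G, W, ω, F) = ∫_F ∏_{v ∈ V} ω(p(v)) · ∏_{(a,b) ∈ E} W(p(a),p(b)) dp`. -/
noncomputable def tF {V : Type} [Fintype V] (G : SimpleGraph V) (W : UI → UI → ℝ)
    (ω : UI → ℝ) (F : Set (V → UI)) : ℝ :=
  ∫ p in F, mapWeight G W ω p

/-- `G` is `F`-positive if `t(G, W, ω, F) ≥ 0` for every kernel `W` and weight `ω`. -/
def FPositive {V : Type} [Fintype V] (G : SimpleGraph V) (F : Set (V → UI)) : Prop :=
  ∀ (W : UI → UI → ℝ) (ω : UI → ℝ), IsKernel W → IsWeight ω → 0 ≤ tF G W ω F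

private lemma prod_dart_eq' {V : Type} [Fintype V] (G : SimpleGraph V) (f : V → V → ℝ)
    [DecidableRel G.Adj] [DecidableEq V] :
    ∏ d : G.Dart, f d.fst d.snd = ∏ v, ∏ u ∈ G.neighborFinset v, f v u := by
  rw [← Finset.prod_fiberwise_of_maps_to (g := fun d : G.Dart => d.fst)
      (t := Finset.univ) (fun d _ => Finset.mem_univ _) (fun d => f d.fst d.snd)]
  refine Finset.prod_congr rfl fun v _ => ?_
  rw [show (Finset.univ.filter fun d : G.Dart => d.fst = v) = ({d : G.Dart | d.fst = v} : Finset _)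
    from rfl, SimpleGraph.dart_fst_fiber, Finset.prod_image (fun a _ b _ h =>
      G.dartOfNeighborSet_injective v h)]
  show ∏ x : G.neighborSet v, f v ↑x = _
  rw [SimpleGraph.neighborFinset_def, Set.toFinset, Finset.prod_map]; rfl

private lemma prod_edge_sq' {V : Type} [Fintype V] (G : SimpleGraph V) (F : V → V → ℝ)
    (hF : ∀ a b, F a b = F b a) [DecidableRel G.Adj] [DecidableEq V] :
    (∏ e ∈ G.edgeFinset, F (Quot.out e).1 (Quot.out e).2) ^ 2
      = ∏ d : G.Dart, F d.fst d.snd := by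
  set g : Sym2 V → ℝ := Sym2.lift ⟨F, hF⟩ with hg
  have h1 : ∀ e : Sym2 V, F (Quot.out e).1 (Quot.out e).2 = g e := by
    intro e
    conv_rhs => rw [← Quot.out_eq e]
    rcases Quot.out e with ⟨a, b⟩
    rfl
  have h2 : ∀ d : G.Dart, F d.fst d.snd = g d.edge := fun d => rfl
  simp only [h1, h2]
  rw [← Finset.prod_pow, ← Finset.prod_fiberwise_of_maps_to
      (g := fun d : G.Dart => d.edge) (t := G.edgeFinset)
      (fun d _ => SimpleGraph.mem_edgeFinset.2 d.edge_mem) (fun d => g d.edge)]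
  refine Finset.prod_congr rfl fun e he => ?_
  rw [Finset.prod_congr rfl (fun d hd => by
      rw [(Finset.mem_filter.1 hd).2]), Finset.prod_const,
    show (Finset.univ.filter fun d : G.Dart => d.edge = e)
      = ({d : G.Dart | d.edge = e} : Finset _) from rfl,
    G.dart_edge_fiber_card e (SimpleGraph.mem_edgeFinset.1 he)]

/-- Lemma on refining a partition-box according to degrees towards a union of classes:
there is a pair `(W, ω)` emphasizing `F₂` from `F₁`. -/
theorem exists_emphasizing_pair {V : Type} [Fintype V] (G : SimpleGraph V)
    {ι : Type} [Fintype ι] (P : ι → Set UI)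
    (hPmeas : ∀ i, MeasurableSet (P i)) (hPpos : ∀ i, 0 < volume (P i))
    (hPdisj : Pairwise (Function.onFun Disjoint P)) (hPcover : (⋃ i, P i) = Set.univ)
    (f₁ : V → ι) (q : ι) (T : Set ι)
    (d : ℝ) (hd : 0 < d) (hdnotint : ∀ n : ℤ, d ≠ (n : ℝ))
    (Qp Qm : Set UI) (hQpmeas : MeasurableSet Qp) (hQmmeas : MeasurableSet Qm)
    (hQppos : 0 < volume Qp) (hQmpos : 0 < volume Qm)
    (hQdisj : Disjoint Qp Qm) (hQunion : Qp ∪ Qm = P q)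
    (degU : V → ℕ) (hdegU : ∀ v, degU v = Nat.card {u : V // G.Adj v u ∧ f₁ u ∈ T})
    (f₂ : V → Set UI)
    (hf₂ : ∀ v,
      (f₁ v ≠ q → f₂ v = P (f₁ v)) ∧
      (f₁ v = q → ((d < (degU v : ℝ) → f₂ v = Qp) ∧ ((degU v : ℝ) < d → f₂ v = Qm))))
    (F₁ F₂ : Set (V → UI))
    (hF₁ : F₁ = {p | ∀ v, p v ∈ P (f₁ v)})
    (hF₂ : F₂ = {p | ∀ v, p v ∈ f₂ v}) :
    ∃ (W : UI → UI → ℝ) (ω : UI → ℝ),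
      Measurable (Function.uncurry W) ∧ (∀ x y, W x y ∈ Set.Icc (0:ℝ) 1) ∧
      Measurable ω ∧ (∀ x, 0 ≤ ω x) ∧ (∃ C : ℝ, ∀ x, ω x ≤ C) ∧
      0 < volume F₂ ∧
      {p ∈ F₁ | mapWeight G W ω p = sSup (mapWeight G W ω '' F₁)} = F₂ := by
  classical
  -- basic setup
  set U : Set UI := ⋃ i ∈ T, P i with hUdef
  have hUmeas : MeasurableSet U :=
    MeasurableSet.biUnion (Set.to_countable T) (fun i _ => hPmeas i)
  set c : ℝ := (1/2 : ℝ) ^ d with hcdef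
  have hc0 : 0 < c := Real.rpow_pos_of_pos (by norm_num) d
  have hc1 : c < 1 := Real.rpow_lt_one (by norm_num) (by norm_num) hd
  set w : UI × UI → ℝ := fun z => if z ∈ Qm ×ˢ U then (1/2 : ℝ) else 1 with hwdef
  have hw01 : ∀ z, 0 < w z ∧ w z ≤ 1 := by
    intro z; by_cases hz : z.1 ∈ Qm ∧ z.2 ∈ U <;> simp [hwdef, Set.mem_prod, hz] <;> norm_num
  set W : UI → UI → ℝ := fun x y => w (x, y) * w (y, x) with hWdef
  set ω : UI → ℝ := fun x => if x ∈ Qp then c else 1 with hωdef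
  -- membership facts
  have hPuniq : ∀ {i j} {x : UI}, x ∈ P i → x ∈ P j → i = j := by
    intro i j x hi hj
    by_contra hne
    exact (hPdisj hne).le_bot ⟨hi, hj⟩ 
  have hQpq : Qp ⊆ P q := hQunion ▸ Set.subset_union_left
  have hQmq : Qm ⊆ P q := hQunion ▸ Set.subset_union_right
  have hUiff : ∀ {u : V} {x : UI}, x ∈ P (f₁ u) → (x ∈ U ↔ f₁ u ∈ T) := by
    intro u x hx
    constructor
    · rintro hxU
      rw [hUdef] at hxU
      rcases Set.mem_iUnion₂.1 hxU with ⟨j, hj, hxj⟩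
      rwa [hPuniq hx hxj]
    · intro hT; exact Set.mem_biUnion hT hx
  -- degU as a Finset card
  have hdeg : ∀ v, degU v = ((G.neighborFinset v).filter (fun u => f₁ u ∈ T)).card := by
    intro v
    rw [hdegU v, Nat.card_eq_fintype_card, Fintype.card_subtype]
    congr 1
    ext u
    simp [SimpleGraph.mem_neighborFinset, and_comm]
  -- d is never equal to a natural number
  have hdne : ∀ n : ℕ, d ≠ (n : ℝ) := fun n => by
    simpa using hdnotint (n : ℤ)
  -- comparison of c and (1/2)^n
  have hcmp : ∀ n : ℕ, ((1/2:ℝ) ^ n < c ↔ d < n) ∧ (c < (1/2:ℝ) ^ n ↔ (n:ℝ) < d) := by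
    intro n
    have h := Real.rpow_natCast (1/2 : ℝ) n
    constructor
    · rw [← h, hcdef]
      exact Real.rpow_lt_rpow_left_iff_of_base_lt_one (by norm_num) (by norm_num)
    · rw [← h, hcdef]
      exact Real.rpow_lt_rpow_left_iff_of_base_lt_one (by norm_num) (by norm_num)
  -- the per-vertex factor
  set h : V → UI → ℝ := fun v x =>
    (if x ∈ Qp then c else 1) * (if x ∈ Qm then (1/2:ℝ)^(degU v) else 1) with hhdef
  have hhpos : ∀ v x, 0 < h v x := by
    intro v x
    have : (0:ℝ) < (1/2:ℝ)^(degU v) := by positivity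
    by_cases h1 : x ∈ Qp <;> by_cases h2 : x ∈ Qm <;> simp [hhdef, h1, h2, hc0, this, mul_pos]
  -- the per-vertex maximum
  set M : V → ℝ := fun v => if f₁ v = q then max c ((1/2:ℝ)^(degU v)) else 1 with hMdef
  have hMpos : ∀ v, 0 < M v := by
    intro v
    have : (0:ℝ) < (1/2:ℝ)^(degU v) := by positivity
    by_cases hv : f₁ v = q <;> simp [hMdef, hv, lt_max_iff, hc0]
  -- f₂ description
  have hf₂desc : ∀ v, (f₁ v ≠ q ∧ f₂ v = P (f₁ v)) ∨
      (f₁ v = q ∧ d < degU v ∧ f₂ v = Qp) ∨ (f₁ v = q ∧ (degU v : ℝ) < d ∧ f₂ v = Qm) := by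
    intro v
    by_cases hv : f₁ v = q
    · rcases lt_trichotomy d (degU v : ℝ) with h1 | h1 | h1
      · exact Or.inr (Or.inl ⟨hv, h1, ((hf₂ v).2 hv).1 h1⟩)
      · exact absurd h1 (hdne (degU v))
      · exact Or.inr (Or.inr ⟨hv, h1, ((hf₂ v).2 hv).2 h1⟩)
    · exact Or.inl ⟨hv, (hf₂ v).1 hv⟩
  -- characterization of per-vertex maxima
  have hchar : ∀ v, ∀ x ∈ P (f₁ v), h v x ≤ M v ∧ (h v x = M v ↔ x ∈ f₂ v) := by
    intro v x hx
    rcases hf₂desc v with ⟨hv, hfv⟩ | ⟨hv, hlt, hfv⟩ | ⟨hv, hlt, hfv⟩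
    · have hxp : x ∉ Qp := fun hxp => hv (hPuniq hx (hQpq hxp))
      have hxm : x ∉ Qm := fun hxm => hv (hPuniq hx (hQmq hxm))
      simp [hhdef, hMdef, hxp, hxm, hv, hfv, hx]
    · -- f₁ v = q, d < degU v, f₂ v = Qp
      have hM : M v = c := by
        rw [hMdef]; simp only [hv, if_true]
        exact max_eq_left (le_of_lt (((hcmp (degU v)).1).2 hlt))
      have hxq : x ∈ P q := hv ▸ hx
      rcases (hQunion ▸ hxq : x ∈ Qp ∪ Qm) with hxp | hxm
      · have hxm : x ∉ Qm := fun hxm => (hQdisj.le_bot ⟨hxp, hxm⟩)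
        simp [hhdef, hM, hfv, hxp, hxm]
      · have hxp : x ∉ Qp := fun hxp => (hQdisj.le_bot ⟨hxp, hxm⟩)
        have hne : (1/2:ℝ)^(degU v) < c := ((hcmp (degU v)).1).2 hlt
        constructor
        · simp only [hhdef, hM, hxp, hxm, if_true, if_false, one_mul]
          exact le_of_lt hne
        · simp only [hhdef, hM, hxp, hxm, if_true, if_false, one_mul, hfv]
          constructor
          · intro he; exact absurd he (ne_of_lt hne)
          · intro he; exact he.elim
    · -- f₁ v = q, degU v < d, f₂ v = Qm
      have hM : M v = (1/2:ℝ)^(degU v) := by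
        rw [hMdef]; simp only [hv, if_true]
        exact max_eq_right (le_of_lt (((hcmp (degU v)).2).2 hlt))
      have hxq : x ∈ P q := hv ▸ hx
      have hne : c < (1/2:ℝ)^(degU v) := ((hcmp (degU v)).2).2 hlt
      rcases (hQunion ▸ hxq : x ∈ Qp ∪ Qm) with hxp | hxm
      · have hxm : x ∉ Qm := fun hxm => (hQdisj.le_bot ⟨hxp, hxm⟩)
        constructor
        · simp only [hhdef, hM, hxp, hxm, if_true, if_false, mul_one]
          exact le_of_lt hne
        · simp only [hhdef, hM, hxp, hxm, if_true, if_false, mul_one, hfv]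
          constructor
          · intro he; exact absurd he (ne_of_lt hne)
          · intro he; exact he.elim
      · have hxp : x ∉ Qp := fun hxp => (hQdisj.le_bot ⟨hxp, hxm⟩)
        simp [hhdef, hM, hfv, hxp, hxm]
  -- key computation of mapWeight on F₁
  have hkey : ∀ p ∈ F₁, mapWeight G W ω p = ∏ v, h v (p v) := by
    intro p hp
    have hp' : ∀ v, p v ∈ P (f₁ v) := by rw [hF₁] at hp; exact hp
    have hWs : ∀ a b : V, W (p a) (p b) = W (p b) (p a) := fun a b => mul_comm _ _
    have hsq := prod_edge_sq' G (fun a b => W (p a) (p b)) hWs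
    -- the dart product splits
    have hdart : ∏ d : G.Dart, W (p d.fst) (p d.snd)
        = (∏ d : G.Dart, w (p d.fst, p d.snd)) ^ 2 := by
      rw [hWdef]
      rw [Finset.prod_mul_distrib, sq]
      congr 1
      rw [← Equiv.prod_comp
        (⟨SimpleGraph.Dart.symm, SimpleGraph.Dart.symm,
          fun d => SimpleGraph.Dart.symm_symm d, fun d => SimpleGraph.Dart.symm_symm d⟩ :
            G.Dart ≃ G.Dart) (fun d : G.Dart => w (p d.snd, p d.fst))]
      refine Finset.prod_congr rfl fun d _ => ?_
      show w ((d.symm).snd |> p, (d.symm).fst |> p) = w (p d.fst, p d.snd)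
      rw [show (d.symm).snd = d.fst from rfl, show (d.symm).fst = d.snd from rfl]
    have hA0 : (0:ℝ) ≤ ∏ e ∈ G.edgeFinset, W (p (Quot.out e).1) (p (Quot.out e).2) :=
      Finset.prod_nonneg fun e _ =>
        mul_nonneg (hw01 _).1.le (hw01 _).1.le
    have hB0 : (0:ℝ) ≤ ∏ d : G.Dart, w (p d.fst, p d.snd) :=
      Finset.prod_nonneg fun d _ => (hw01 _).1.le
    have hAB : (∏ e ∈ G.edgeFinset, W (p (Quot.out e).1) (p (Quot.out e).2))
        = ∏ d : G.Dart, w (p d.fst, p d.snd) := by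
      have := hsq.trans hdart
      calc (∏ e ∈ G.edgeFinset, W (p (Quot.out e).1) (p (Quot.out e).2))
          = Real.sqrt ((∏ e ∈ G.edgeFinset, W (p (Quot.out e).1) (p (Quot.out e).2))^2) :=
            (Real.sqrt_sq hA0).symm
        _ = Real.sqrt ((∏ d : G.Dart, w (p d.fst, p d.snd))^2) := by rw [this]
        _ = _ := Real.sqrt_sq hB0
    have hdart2 : ∏ d : G.Dart, w (p d.fst, p d.snd)
        = ∏ v, (if p v ∈ Qm then (1/2:ℝ)^(degU v) else 1) := by
      rw [prod_dart_eq' G (fun a b => w (p a, p b))]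
      refine Finset.prod_congr rfl fun v _ => ?_
      by_cases hv : p v ∈ Qm
      · simp only [hv, if_true]
        have hterm : ∀ u, w (p v, p u) = if p u ∈ U then (1/2:ℝ) else 1 := by
          intro u
          by_cases hu : p u ∈ U <;> simp [hwdef, Set.mem_prod, hv, hu]
        rw [Finset.prod_congr rfl (fun u _ => hterm u), Finset.prod_ite,
          Finset.prod_const, Finset.prod_const, one_pow, mul_one]
        congr 1
        rw [hdeg v]
        congr 1
        exact Finset.filter_congr fun u _ => by
          simp only [hUiff (hp' u)]
      · have hterm : ∀ u, w (p v, p u) = 1 := by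
          intro u
          simp [hwdef, Set.mem_prod, hv]
        simp [hv, Finset.prod_congr rfl (fun u _ => hterm u)]
    rw [mapWeight, hAB, hdart2, ← Finset.prod_mul_distrib]
  -- emphasis value
  set s : ℝ := ∏ v, M v with hsdef
  have hspos : 0 < s := Finset.prod_pos fun v _ => hMpos v
  -- subset relations
  have hf₂sub : ∀ v, f₂ v ⊆ P (f₁ v) := by
    intro v
    rcases hf₂desc v with ⟨hv, hfv⟩ | ⟨hv, _, hfv⟩ | ⟨hv, _, hfv⟩
    · rw [hfv]
    · rw [hfv, hv]; exact hQpq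
    · rw [hfv, hv]; exact hQmq
  have hF₂F₁ : F₂ ⊆ F₁ := by
    rw [hF₁, hF₂]
    intro p hp v
    exact hf₂sub v (hp v)
  -- F₂ has positive measure
  have hvolf₂ : ∀ v, 0 < volume (f₂ v) := by
    intro v
    rcases hf₂desc v with ⟨_, hfv⟩ | ⟨_, _, hfv⟩ | ⟨_, _, hfv⟩ <;> rw [hfv]
    exacts [hPpos _, hQppos, hQmpos]
  have hvolF₂ : 0 < volume F₂ := by
    have : F₂ = Set.pi Set.univ f₂ := by
      rw [hF₂]; ext p; simp [Set.mem_pi]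
    rw [this, volume_pi_pi]
    rw [CanonicallyOrderedAdd.prod_pos]
    exact fun v _ => hvolf₂ v
  -- F₂ nonempty, value on F₂ equals s
  have hF₂ne : F₂.Nonempty := nonempty_of_measure_ne_zero hvolF₂.ne'
  have hvalF₂ : ∀ p ∈ F₂, mapWeight G W ω p = s := by
    intro p hp
    have hp₂ : ∀ v, p v ∈ f₂ v := by rw [hF₂] at hp; exact hp
    rw [hkey p (hF₂F₁ hp), hsdef]
    exact Finset.prod_congr rfl fun v _ =>
      ((hchar v (p v) (hf₂sub v (hp₂ v))).2).2 (hp₂ v)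
  have hub : ∀ y ∈ mapWeight G W ω '' F₁, y ≤ s := by
    rintro y ⟨p, hp, rfl⟩
    rw [hkey p hp, hsdef]
    have hp' : ∀ v, p v ∈ P (f₁ v) := by rw [hF₁] at hp; exact hp
    exact Finset.prod_le_prod (fun v _ => (hhpos v (p v)).le)
      (fun v _ => (hchar v (p v) (hp' v)).1)
  obtain ⟨p₀, hp₀⟩ := hF₂ne
  have hsmem : s ∈ mapWeight G W ω '' F₁ :=
    ⟨p₀, hF₂F₁ hp₀, hvalF₂ p₀ hp₀⟩
  have hsSup : sSup (mapWeight G W ω '' F₁) = s :=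
    le_antisymm (csSup_le ⟨s, hsmem⟩ hub) (le_csSup ⟨s, hub⟩ hsmem)
  -- assemble
  refine ⟨W, ω, ?_, ?_, ?_, ?_, ⟨1, ?_⟩, hvolF₂, ?_⟩
  · -- measurability of uncurry W
    have hwm : Measurable w := Measurable.ite (hQmmeas.prod hUmeas)
      measurable_const measurable_const
    have : Function.uncurry W = fun z : UI × UI => w z * w z.swap := by
      ext z; rcases z with ⟨x, y⟩; rfl
    rw [this]
    exact hwm.mul (hwm.comp measurable_swap)
  · intro x y
    have h1 := hw01 (x, y); have h2 := hw01 (y, x)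
    constructor
    · exact mul_nonneg h1.1.le h2.1.le
    · calc w (x,y) * w (y,x) ≤ 1 * 1 := mul_le_mul h1.2 h2.2 h2.1.le zero_le_one
        _ = 1 := mul_one 1
  · exact Measurable.ite hQpmeas measurable_const measurable_const
  · intro x
    by_cases hx : x ∈ Qp <;> simp [hωdef, hx, hc0.le]
  · intro x
    by_cases hx : x ∈ Qp <;> simp [hωdef, hx, hc1.le]
  · -- the maximizer set equals F₂
    rw [hsSup]
    ext p
    simp only [Set.mem_setOf_eq, Set.mem_sep_iff]
    constructor
    · rintro ⟨hp, heq⟩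
      have hp' : ∀ v, p v ∈ P (f₁ v) := by rw [hF₁] at hp; exact hp
      rw [hF₂]
      intro v
      by_contra hv
      have hlt : h v (p v) < M v :=
        lt_of_le_of_ne (hchar v (p v) (hp' v)).1
          (fun he => hv (((hchar v (p v) (hp' v)).2).1 he))
      have : mapWeight G W ω p < s := by
        rw [hkey p hp, hsdef]
        exact Finset.prod_lt_prod (fun i _ => hhpos i (p i))
          (fun i _ => (hchar i (p i) (hp' i)).1) ⟨v, Finset.mem_univ v, hlt⟩
      exact absurd heq (ne_of_lt this)
    · intro hp
      exact ⟨hF₂F₁ hp, hvalF₂ p hp⟩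

end
end
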